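/- arXiv:1211.2456 — 6 statements merged into one kernel-verified Lean document; each statement's English description precedes it below -/
import Mathlib

section
/- Let M₁, …, M_d be matroids on the same finite ground set E with rank functions r₁, …, r_d, and let W : E → ℕ be a weight function. Then there exists a W-covering V₁, …, V_d of E such that V_i is independent in M_i for every i ∈ {1, …, d}, if and only if for every subset A ⊆ E one has r₁(A) + r₂(A) + ⋯ + r_d(A) ≥ Σ_{e∈A} W(e). -/
/-- The rank of a set `A` in a matroid `M`: the maximum cardinality of an
independent subset of `A`. -/
noncomputable def matroidRank {α : Type*} (M : Matroid α) (A : Set α) : ℕ :=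
  sSup {n | ∃ I, M.Indep I ∧ I ⊆ A ∧ I.ncard = n}

namespace MWU

open Set

variable {α : Type*} {M : Matroid α} {A B I : Set α}

lemma rset_nonempty (M : Matroid α) (A : Set α) :
    {n | ∃ I, M.Indep I ∧ I ⊆ A ∧ I.ncard = n}.Nonempty :=
  ⟨0, ∅, M.empty_indep, empty_subset A, by simp⟩

lemma rset_bdd (hM : M.E.Finite) (A : Set α) :
    BddAbove {n | ∃ I, M.Indep I ∧ I ⊆ A ∧ I.ncard = n} := by
  refine ⟨M.E.ncard, ?_⟩
  rintro n ⟨I, hI, -, rfl⟩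
  exact ncard_le_ncard hI.subset_ground hM

lemma le_rank (hM : M.E.Finite) (hI : M.Indep I) (hIA : I ⊆ A) :
    I.ncard ≤ matroidRank M A :=
  le_csSup (rset_bdd hM A) ⟨I, hI, hIA, rfl⟩

lemma rank_le (hM : M.E.Finite) (h : ∀ I, M.Indep I → I ⊆ A → I.ncard ≤ n) :
    matroidRank M A ≤ n :=
  csSup_le (rset_nonempty M A) (by rintro m ⟨I, hI, hIA, rfl⟩; exact h I hI hIA)

lemma basis'_ncard (hM : M.E.Finite) (hB : M.IsBasis' B A) :
    matroidRank M A = B.ncard := by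
  refine le_antisymm (rank_le hM fun I hI hIA => ?_) (le_rank hM hB.indep hB.subset)
  by_contra hlt
  push_neg at hlt
  have hBfin : B.Finite := hM.subset hB.indep.subset_ground
  have hIfin : I.Finite := hM.subset hI.subset_ground
  have hcard : B.encard < I.encard := by
    rw [← hBfin.cast_ncard_eq, ← hIfin.cast_ncard_eq]
    exact_mod_cast hlt
  obtain ⟨e, he, hins⟩ := hB.indep.augment hI hcard
  exact he.2 (hB.mem_of_insert_indep (hIA he.1) hins)

lemma rank_mono (hM : M.E.Finite) (hAB : A ⊆ B) :
    matroidRank M A ≤ matroidRank M B := by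
  obtain ⟨I, hI⟩ := M.exists_isBasis' A
  rw [basis'_ncard hM hI]
  exact le_rank hM hI.indep (hI.subset.trans hAB)

lemma rank_le_ncard (hM : M.E.Finite) (hA : A.Finite) : matroidRank M A ≤ A.ncard :=
  rank_le hM fun I _ hIA => ncard_le_ncard hIA hA

@[simp] lemma rank_empty (M : Matroid α) : matroidRank M (∅ : Set α) = 0 := by
  unfold matroidRank
  convert csSup_singleton (0 : ℕ) using 2
  · rfl
  ext n
  simp only [mem_setOf_eq, mem_singleton_iff]
  constructor
  · rintro ⟨I, -, hIA, rfl⟩; simp [subset_empty_iff.mp hIA]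
  · rintro rfl; exact ⟨∅, M.empty_indep, Subset.rfl, by simp⟩

lemma rank_singleton_eq_zero (h : ¬ M.Indep {e}) : matroidRank M {e} = 0 := by
  unfold matroidRank
  convert csSup_singleton (0 : ℕ) using 2
  · rfl
  ext n
  simp only [mem_setOf_eq, mem_singleton_iff]
  constructor
  · rintro ⟨I, hI, hIA, rfl⟩
    rcases subset_singleton_iff_eq.mp hIA with rfl | rfl
    · simp
    · exact absurd hI h
  · rintro rfl; exact ⟨∅, M.empty_indep, empty_subset _, by simp⟩

lemma one_le_rank_singleton (hM : M.E.Finite) (h : M.Indep {e}) :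
    1 ≤ matroidRank M {e} := by
  simpa using le_rank hM h Subset.rfl

lemma rank_submod (hM : M.E.Finite) (A B : Set α) :
    matroidRank M (A ∪ B) + matroidRank M (A ∩ B) ≤
      matroidRank M A + matroidRank M B := by
  obtain ⟨I, hI⟩ := M.exists_isBasis' (A ∩ B)
  obtain ⟨J, hJ, hIJ⟩ := hI.indep.subset_isBasis'_of_subset (hI.subset.trans (inter_subset_left.trans subset_union_left))
  have hJfin : J.Finite := hM.subset hJ.indep.subset_ground
  rw [basis'_ncard hM hI, basis'_ncard hM hJ]
  have hu : (J ∩ A) ∪ (J ∩ B) = J := by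
    rw [← inter_union_distrib_left, inter_eq_self_of_subset_left hJ.subset]
  have hi : (J ∩ A) ∩ (J ∩ B) = J ∩ (A ∩ B) := by
    ext x; simp only [mem_inter_iff]; tauto
  have h1 := ncard_union_add_ncard_inter (J ∩ A) (J ∩ B) (hJfin.inter_of_left A)
    (hJfin.inter_of_left B)
  rw [hu, hi] at h1
  have h2 : I.ncard ≤ (J ∩ (A ∩ B)).ncard :=
    ncard_le_ncard (subset_inter hIJ hI.subset) (hJfin.inter_of_left _)
  have h3 : (J ∩ A).ncard ≤ matroidRank M A :=
    le_rank hM (hJ.indep.subset inter_subset_left) inter_subset_right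
  have h4 : (J ∩ B).ncard ≤ matroidRank M B :=
    le_rank hM (hJ.indep.subset inter_subset_left) inter_subset_right
  omega

lemma rank_insert_le (hM : M.E.Finite) (A : Set α) (e : α) :
    matroidRank M (insert e A) ≤ matroidRank M A + matroidRank M {e} := by
  have := rank_submod hM A {e}
  have h0 : matroidRank M (A ∩ {e}) ≤ matroidRank M A := rank_mono hM inter_subset_left
  rw [union_singleton] at this
  omega

lemma rank_insert_eq_of_subset (hM : M.E.Finite) (hAB : A ⊆ B)
    (h : matroidRank M (insert e A) = matroidRank M A) :
    matroidRank M (insert e B) = matroidRank M B := by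
  refine le_antisymm ?_ (rank_mono hM (subset_insert _ _))
  have hsub := rank_submod hM (insert e A) B
  have h1 : insert e A ∪ B = insert e B := by
    rw [insert_union, union_eq_self_of_subset_left hAB]
  have h2 : matroidRank M A ≤ matroidRank M (insert e A ∩ B) :=
    rank_mono hM (subset_inter (subset_insert e A) hAB)
  rw [h1, h] at hsub
  omega
variable {α : Type*} {M : Matroid α} {A B I : Set α} {e : α}

/-- contraction of a matroid by a single nonloop element -/
noncomputable def conElem (M : Matroid α) (hM : M.E.Finite) {e : α} (he : M.Indep {e}) :
    Matroid α :=
  (IndepMatroid.ofFinite (hM.diff (t := {e}))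
    (fun I => I ⊆ M.E \ {e} ∧ M.Indep (insert e I))
    ⟨empty_subset _, by simpa using he⟩
    (fun I J hJ hIJ => ⟨hIJ.trans hJ.1, hJ.2.subset (insert_subset_insert hIJ)⟩)
    (by
      intro I J hI hJ hlt
      have heI : e ∉ I := fun h => (hI.1 h).2 rfl
      have heJ : e ∉ J := fun h => (hJ.1 h).2 rfl
      have hIfin : I.Finite := hM.subset ((subset_insert e I).trans hI.2.subset_ground)
      have hJfin : J.Finite := hM.subset ((subset_insert e J).trans hJ.2.subset_ground)
      have hcard : (insert e I).encard < (insert e J).encard := by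
        rw [encard_insert_of_notMem heI, encard_insert_of_notMem heJ,
          ← hIfin.cast_ncard_eq, ← hJfin.cast_ncard_eq]
        have h1 : ((I.ncard + 1 : ℕ) : ℕ∞) < ((J.ncard + 1 : ℕ) : ℕ∞) := by
          exact_mod_cast Nat.add_lt_add_right hlt 1
        simpa using h1
      obtain ⟨x, hx, hxind⟩ := hI.2.augment hJ.2 hcard
      have hxe : x ≠ e := fun h => hx.2 (h ▸ mem_insert _ _)
      have hxJ : x ∈ J := hx.1.resolve_left hxe
      exact ⟨x, hxJ, fun hxI => hx.2 (mem_insert_of_mem _ hxI),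
        insert_subset (hJ.1 hxJ) hI.1, by rwa [insert_comm] at hxind⟩)
    (fun I hI => hI.1)).matroid

lemma conElem_indep_iff (hM : M.E.Finite) (he : M.Indep {e}) :
    (conElem M hM he).Indep I ↔ I ⊆ M.E \ {e} ∧ M.Indep (insert e I) := by
  simp [conElem]

lemma conElem_ground (hM : M.E.Finite) (he : M.Indep {e}) :
    (conElem M hM he).E = M.E \ {e} := by
  simp [conElem]

lemma conElem_rank_add_one (hM : M.E.Finite) (he : M.Indep {e}) (A : Set α) :
    matroidRank (conElem M hM he) A + 1 = matroidRank M (insert e A) := by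
  have hcE : (conElem M hM he).E.Finite := by rw [conElem_ground]; exact hM.diff
  refine le_antisymm ?_ ?_
  · obtain ⟨I, hI⟩ := (conElem M hM he).exists_isBasis' A
    rw [basis'_ncard hcE hI]
    obtain ⟨hIsub, hIind⟩ := (conElem_indep_iff hM he).mp hI.indep
    have heI : e ∉ I := fun h => (hIsub h).2 rfl
    have hIfin : I.Finite := (hM.diff (t := {e})).subset hIsub
    have hcard : (insert e I).ncard = I.ncard + 1 := ncard_insert_of_notMem heI hIfin
    rw [← hcard]
    exact le_rank hM hIind (insert_subset_insert hI.subset)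
  · obtain ⟨J, hJ, heJ⟩ := he.subset_isBasis'_of_subset (singleton_subset_iff.mpr (mem_insert e A))
    rw [basis'_ncard hM hJ]
    have heJ' : e ∈ J := singleton_subset_iff.mp heJ
    have hJfin : J.Finite := hM.subset hJ.indep.subset_ground
    have hind : (conElem M hM he).Indep (J \ {e}) := by
      rw [conElem_indep_iff]
      refine ⟨diff_subset_diff_left hJ.indep.subset_ground, ?_⟩
      rw [insert_diff_singleton, insert_eq_self.mpr heJ']
      exact hJ.indep
    have hsub : J \ {e} ⊆ A := by
      rw [diff_subset_iff, ← insert_eq]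
      exact hJ.subset
    have hle := le_rank hcE hind hsub
    have hcard : (J \ {e}).ncard + 1 = J.ncard := ncard_diff_singleton_add_one heJ' hJfin
    omega

section finsum
variable [DecidableEq α] (W : α → ℕ)

lemma fsum_eq {A : Set α} (hA : A.Finite) :
    ∑ᶠ e ∈ A, W e = ∑ e ∈ hA.toFinset, W e := by
  conv_lhs => rw [← hA.coe_toFinset]
  rw [finsum_mem_coe_finset]

lemma fsum_union_inter (hA : A.Finite) (hB : B.Finite) :
    ∑ᶠ e ∈ A ∪ B, W e + ∑ᶠ e ∈ A ∩ B, W e = ∑ᶠ e ∈ A, W e + ∑ᶠ e ∈ B, W e := by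
  rw [fsum_eq W hA, fsum_eq W hB, fsum_eq W (hA.union hB), fsum_eq W (hA.inter_of_left B),
    Set.Finite.toFinset_union hA hB _, Set.Finite.toFinset_inter hA hB _]
  exact Finset.sum_union_inter

lemma fsum_insert (hA : A.Finite) (he : e ∉ A) :
    ∑ᶠ x ∈ insert e A, W x = W e + ∑ᶠ x ∈ A, W x := by
  rw [fsum_eq W hA, fsum_eq W (hA.insert e),
    show (hA.insert e).toFinset = insert e hA.toFinset from by ext; simp]
  exact Finset.sum_insert (by simpa using he)

lemma fsum_mono (hB : B.Finite) (hAB : A ⊆ B) : ∑ᶠ e ∈ A, W e ≤ ∑ᶠ e ∈ B, W e := by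
  rw [fsum_eq W (hB.subset hAB), fsum_eq W hB]
  exact Finset.sum_le_sum_of_subset (by simpa using hAB)

lemma fsum_zero {E : Set α} (hE : E.Finite) (h : ∑ᶠ e ∈ E, W e = 0) (he : e ∈ E) : W e = 0 := by
  rw [fsum_eq W hE] at h
  exact Finset.sum_eq_zero_iff.mp h e (by simpa)

lemma fsum_update_of_not_mem (he : e ∉ A) :
    ∑ᶠ x ∈ A, Function.update W e (W e - 1) x = ∑ᶠ x ∈ A, W x :=
  finsum_mem_congr rfl fun x hx => Function.update_of_ne (ne_of_mem_of_not_mem hx he) _ W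

lemma fsum_update_of_mem (hA : A.Finite) (he : e ∈ A) (hW : 1 ≤ W e) :
    ∑ᶠ x ∈ A, Function.update W e (W e - 1) x + 1 = ∑ᶠ x ∈ A, W x := by
  have hrw : A = insert e (A \ {e}) := by simp [insert_diff_singleton, insert_eq_self.mpr he]
  have hd : e ∉ A \ {e} := fun h => h.2 rfl
  have hfd : (A \ {e}).Finite := hA.diff
  rw [hrw, fsum_insert _ hfd hd, fsum_insert _ hfd hd,
    fsum_update_of_not_mem _ hd, Function.update_self]
  omega

end finsum

lemma sum_rank_update {d : ℕ} (M : Fin d → Matroid α) (c : Matroid α) (i : Fin d) (A : Set α) :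
    ∑ j, matroidRank (Function.update M i c j) A
      = matroidRank c A + ∑ j ∈ Finset.univ.erase i, matroidRank (M j) A := by
  classical
  have h : ∀ j, matroidRank (Function.update M i c j) A
      = Function.update (fun j => matroidRank (M j) A) i (matroidRank c A) j := by
    intro j
    by_cases hj : j = i
    · subst hj; simp
    · simp [Function.update_of_ne hj]
  rw [Finset.sum_congr rfl fun j _ => h j]
  simpa [Finset.erase_eq] using Finset.sum_update_of_mem (Finset.mem_univ i)
    (fun j => matroidRank (M j) A) (matroidRank c A)

lemma sum_rank_split {d : ℕ} (M : Fin d → Matroid α) (i : Fin d) (A : Set α) :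
    ∑ j, matroidRank (M j) A
      = matroidRank (M i) A + ∑ j ∈ Finset.univ.erase i, matroidRank (M j) A := by
  classical
  exact (Finset.add_sum_erase _ _ (Finset.mem_univ i)).symm

lemma aux {E : Set α} (hE : E.Finite) (d : ℕ) (N : ℕ) :
    ∀ W : α → ℕ, (∑ᶠ e ∈ E, W e) = N →
    ∀ M : Fin d → Matroid α, (∀ i, (M i).E ⊆ E) →
    (∀ A, A ⊆ E → ∑ᶠ e ∈ A, W e ≤ ∑ i, matroidRank (M i) A) →
    ∃ V : Fin d → Set α, (∀ i, (M i).Indep (V i)) ∧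
      ∀ e ∈ E, {i : Fin d | e ∈ V i}.ncard = W e := by
  classical
  induction N with
  | zero =>
    intro W hW M hME hRC
    refine ⟨fun _ => ∅, fun i => (M i).empty_indep, fun e he => ?_⟩
    have h0 : W e = 0 := fsum_zero W hE hW he
    simp [h0]
  | succ n ih =>
    intro W hW M hME hRC
    have hMfin : ∀ i, (M i).E.Finite := fun i => hE.subset (hME i)
    have hex : ∃ e ∈ E, 1 ≤ W e := by
      by_contra h
      push_neg at h
      have h0 : ∑ᶠ e ∈ E, W e = 0 := by
        rw [fsum_eq W hE]
        exact Finset.sum_eq_zero fun e he => by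
          have := h e (by simpa using he); omega
      omega
    obtain ⟨e₀, he₀E, he₀W⟩ := hex
    set W' : α → ℕ := Function.update W e₀ (W e₀ - 1) with hW'def
    have hW'sum : ∑ᶠ e ∈ E, W' e = n := by
      have h1 := fsum_update_of_mem W hE he₀E he₀W
      rw [← hW'def] at h1
      omega
    have hkey : ∃ (i : Fin d) (hi : (M i).Indep {e₀}),
        ∀ A, A ⊆ E → ∑ᶠ e ∈ A, W' e ≤
          ∑ j, matroidRank (Function.update M i (conElem (M i) (hMfin i) hi) j) A := by
      by_contra hcon
      push_neg at hcon
      set g : Fin d → Set α := fun i =>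
        if hi : (M i).Indep {e₀} then (hcon i hi).choose else ∅ with hgdef
      have hfacts : ∀ i, e₀ ∉ g i ∧ g i ⊆ E ∧
          (∑ j, matroidRank (M j) (g i) ≤ ∑ᶠ e ∈ g i, W e) ∧
          ((M i).Indep {e₀} →
            matroidRank (M i) (insert e₀ (g i)) = matroidRank (M i) (g i)) := by
        intro i
        by_cases hi : (M i).Indep {e₀}
        · obtain ⟨hAE, hviol⟩ := (hcon i hi).choose_spec
          set A := (hcon i hi).choose with hAdef
          have hgA : g i = A := by rw [hgdef]; simp [hi, hAdef]
          have hAfin : A.Finite := hE.subset hAE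
          set rcon := matroidRank (conElem (M i) (hMfin i) hi) A with hrcon
          have hce : rcon + 1 = matroidRank (M i) (insert e₀ A) :=
            conElem_rank_add_one (hMfin i) hi A
          have hsum1 := sum_rank_update M (conElem (M i) (hMfin i) hi) i A
          have hsum2 := sum_rank_split M i A
          have hRCA := hRC A hAE
          by_cases he₀A : e₀ ∈ A
          · exfalso
            have hins : insert e₀ A = A := Set.insert_eq_self.mpr he₀A
            rw [hins] at hce
            have hWA := fsum_update_of_mem W hAfin he₀A he₀W
            rw [← hW'def] at hWA
            omega
          · have hWA : ∑ᶠ e ∈ A, W' e = ∑ᶠ e ∈ A, W e := by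
              rw [hW'def]; exact fsum_update_of_not_mem W he₀A
            have hmono : matroidRank (M i) A ≤ matroidRank (M i) (insert e₀ A) :=
              rank_mono (hMfin i) (Set.subset_insert _ _)
            rw [hgA]
            exact ⟨he₀A, hAE, by omega, fun _ => by omega⟩
        · have hg : g i = ∅ := by rw [hgdef]; simp [hi]
          rw [hg]
          refine ⟨Set.notMem_empty _, Set.empty_subset _, ?_, fun h => absurd h hi⟩
          simp [rank_empty, finsum_mem_empty]
      -- the union of all violators
      have htight : ∀ s : Finset (Fin d),
          ∑ j, matroidRank (M j) (⋃ i ∈ s, g i) ≤ ∑ᶠ e ∈ ⋃ i ∈ s, g i, W e := by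
        intro s
        induction s using Finset.induction_on with
        | empty => simp [rank_empty, finsum_mem_empty]
        | @insert a s ha ihs =>
          rw [Finset.set_biUnion_insert]
          set X := g a with hX
          set Y := ⋃ i ∈ s, g i with hY
          have hXE : X ⊆ E := (hfacts a).2.1
          have hYE : Y ⊆ E := Set.iUnion₂_subset fun i _ => (hfacts i).2.1
          have hXfin : X.Finite := hE.subset hXE
          have hYfin : Y.Finite := hE.subset hYE
          have hsubm : ∀ j, matroidRank (M j) (X ∪ Y) + matroidRank (M j) (X ∩ Y)
              ≤ matroidRank (M j) X + matroidRank (M j) Y :=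
            fun j => rank_submod (hMfin j) X Y
          have hsum := Finset.sum_le_sum (fun j (_ : j ∈ Finset.univ) => hsubm j)
          rw [Finset.sum_add_distrib, Finset.sum_add_distrib] at hsum
          have hRCint := hRC (X ∩ Y) ((Set.inter_subset_left).trans hXE)
          have hW := fsum_union_inter W hXfin hYfin
          have hXt : ∑ j, matroidRank (M j) X ≤ ∑ᶠ e ∈ X, W e := (hfacts a).2.2.1
          omega
      set As : Set α := ⋃ i, g i with hAs
      have hA' : As = ⋃ i ∈ Finset.univ, g i := by rw [hAs]; simp
      have hAsE : As ⊆ E := Set.iUnion_subset fun i => (hfacts i).2.1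
      have hAsfin : As.Finite := hE.subset hAsE
      have he₀As : e₀ ∉ As := by
        rw [hAs, Set.mem_iUnion]
        rintro ⟨j, hj⟩
        exact (hfacts j).1 hj
      have htightAs : ∑ j, matroidRank (M j) As ≤ ∑ᶠ e ∈ As, W e := by
        rw [hA']
        exact htight Finset.univ
      have hspan : ∀ j, matroidRank (M j) (insert e₀ As) = matroidRank (M j) As := by
        intro j
        by_cases hj : (M j).Indep {e₀}
        · exact rank_insert_eq_of_subset (hMfin j) (Set.subset_iUnion g j)
            ((hfacts j).2.2.2 hj)
        · have h0 : matroidRank (M j) {e₀} = 0 := rank_singleton_eq_zero hj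
          have hle := rank_insert_le (hMfin j) As e₀
          have := rank_mono (hMfin j) (Set.subset_insert e₀ As)
          omega
      have hRCB := hRC (insert e₀ As) (Set.insert_subset he₀E hAsE)
      rw [Finset.sum_congr rfl fun j _ => hspan j] at hRCB
      rw [fsum_insert W hAsfin he₀As] at hRCB
      omega
    obtain ⟨i, hi, hRC'⟩ := hkey
    set M' := Function.update M i (conElem (M i) (hMfin i) hi) with hM'def
    have hM'E : ∀ j, (M' j).E ⊆ E := by
      intro j
      by_cases hj : j = i
      · subst hj
        rw [hM'def, Function.update_self, conElem_ground]
        exact (Set.diff_subset).trans (hME j)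
      · rw [hM'def, Function.update_of_ne hj]
        exact hME j
    obtain ⟨V', hV'ind, hV'count⟩ := ih W' hW'sum M' hM'E hRC'
    have hVi := hV'ind i
    rw [hM'def, Function.update_self, conElem_indep_iff] at hVi
    have hV'i : e₀ ∉ V' i := fun hmem => (hVi.1 hmem).2 rfl
    refine ⟨Function.update V' i (insert e₀ (V' i)), ?_, ?_⟩
    · intro j
      by_cases hj : j = i
      · subst hj
        rw [Function.update_self]
        exact hVi.2
      · rw [Function.update_of_ne hj]
        have := hV'ind j
        rwa [hM'def, Function.update_of_ne hj] at this
    · intro e he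
      by_cases hee : e = e₀
      · subst hee
        have hset : {j : Fin d | e ∈ Function.update V' i (insert e (V' i)) j}
            = insert i {j : Fin d | e ∈ V' j} := by
          ext j
          by_cases hj : j = i
          · subst hj
            simp [Function.update_self, hV'i]
          · simp [Function.update_of_ne hj, hj]
        rw [hset, Set.ncard_insert_of_notMem (by simpa using hV'i) (Set.toFinite _),
          hV'count e he]
        have hW'e : W' e = W e - 1 := by rw [hW'def, Function.update_self]
        omega
      · have hset : {j : Fin d | e ∈ Function.update V' i (insert e₀ (V' i)) j}
            = {j : Fin d | e ∈ V' j} := by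
          ext j
          by_cases hj : j = i
          · subst hj
            simp [Function.update_self, hee]
          · simp [Function.update_of_ne hj]
        rw [hset, hV'count e he, hW'def, Function.update_of_ne hee]

end MWU

/-- **Weighted matroid union (Lemma 2).** Matroids `M₁, …, M_d` on a common finite
ground set `E` admit a `W`-covering `V₁, …, V_d` of `E` with `V_i` independent in `M_i`
iff `r₁(A) + ⋯ + r_d(A) ≥ Σ_{e ∈ A} W(e)` for every `A ⊆ E`. -/
theorem wCovering_iff_rank_sum {α : Type*} (E : Set α) (hE : E.Finite) (d : ℕ)
    (M : Fin d → Matroid α) (hME : ∀ i, (M i).E = E) (W : α → ℕ) :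
    (∃ V : Fin d → Set α, (∀ i, (M i).Indep (V i)) ∧
        ∀ e ∈ E, {i : Fin d | e ∈ V i}.ncard = W e) ↔
      ∀ A ⊆ E, ∑ᶠ e ∈ A, W e ≤ ∑ i : Fin d, matroidRank (M i) A := by
  classical
  constructor
  · rintro ⟨V, hVind, hVcount⟩ A hAE
    have hAfin : A.Finite := hE.subset hAE
    have hMfin : ∀ i, (M i).E.Finite := fun i => (hME i) ▸ hE
    rw [MWU.fsum_eq W hAfin]
    have hstep : ∀ e ∈ hAfin.toFinset, W e = ∑ i : Fin d, (if e ∈ V i then 1 else 0) := by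
      intro e he
      rw [← hVcount e (hAE (hAfin.mem_toFinset.mp he)),
        show {i : Fin d | e ∈ V i} = ↑(Finset.univ.filter fun i => e ∈ V i) from by ext; simp,
        Set.ncard_coe_finset, Finset.card_filter]
    calc ∑ e ∈ hAfin.toFinset, W e
        = ∑ e ∈ hAfin.toFinset, ∑ i : Fin d, (if e ∈ V i then 1 else 0) :=
          Finset.sum_congr rfl hstep
      _ = ∑ i : Fin d, ∑ e ∈ hAfin.toFinset, (if e ∈ V i then 1 else 0) := Finset.sum_comm
      _ ≤ ∑ i : Fin d, matroidRank (M i) A := by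
          refine Finset.sum_le_sum fun i _ => ?_
          rw [← Finset.card_filter]
          have hIeq : A ∩ V i = ↑(hAfin.toFinset.filter fun e => e ∈ V i) := by
            ext x; simp [hAfin.mem_toFinset]
          have hle := MWU.le_rank (hMfin i) ((hVind i).subset Set.inter_subset_right)
            (Set.inter_subset_left (s := A) (t := V i))
          rwa [hIeq, Set.ncard_coe_finset] at hle
  · intro h
    exact MWU.aux hE d (∑ᶠ e ∈ E, W e) W rfl M (fun i => (hME i).le.trans le_rfl) h
end

section
/- Let M be a matroid on a finite ground set E with rank function r, and let ℓ : E → ℕ and W : E → ℕ be two functions. Then the following three conditions are equivalent: (1) for every list assignment L on E of size ℓ, the matroid M is W-colorable from L; (2) M is W-colorable from the lists 𝐋(e) = {1, 2, …, ℓ(e)}; (3) for every subset A ⊆ E one has Σ_{i≥1} r({e ∈ A : ℓ(e) ≥ i}) ≥ Σ_{e∈A} W(e). -/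
/-- `M` is `W`-colorable from the lists `L`: every element `e` of the ground set can be
given a set `L'(e) ⊆ L(e)` of `W(e)` colors so that, for each color `i`, the set of
elements having color `i` is independent in `M`. -/
def Matroid.WColorable {α : Type*} (M : Matroid α) (W : α → ℕ) (L : α → Finset ℕ) : Prop :=
  ∃ L' : α → Finset ℕ, (∀ e ∈ M.E, L' e ⊆ L e ∧ (L' e).card = W e) ∧
    ∀ i : ℕ, M.Indep {e ∈ M.E | i ∈ L' e}

namespace MRank

variable {α : Type*} {M : Matroid α} {I A : Set α} (hE : M.E.Finite)
include hE

lemma indep_finite (hI : M.Indep I) : I.Finite := hE.subset hI.subset_ground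

lemma bddAbove (A : Set α) : BddAbove {n | ∃ I, M.Indep I ∧ I ⊆ A ∧ I.ncard = n} := by
  refine ⟨M.E.ncard, ?_⟩
  rintro n ⟨I, hI, -, rfl⟩
  exact Set.ncard_le_ncard hI.subset_ground hE

lemma ncard_le_rk {I A : Set α} (hI : M.Indep I) (hIA : I ⊆ A) :
    I.ncard ≤ matroidRank M A :=
  le_csSup (bddAbove hE A) ⟨I, hI, hIA, rfl⟩

lemma rk_le {A : Set α} {n : ℕ} (h : ∀ I, M.Indep I → I ⊆ A → I.ncard ≤ n) :
    matroidRank M A ≤ n := by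
  refine csSup_le ⟨0, ∅, M.empty_indep, Set.empty_subset _, by simp⟩ ?_
  rintro m ⟨I, hI, hIA, rfl⟩
  exact h I hI hIA

lemma exists_indep_rk (A : Set α) :
    ∃ I, M.Indep I ∧ I ⊆ A ∧ I.ncard = matroidRank M A := by
  have hne : {n | ∃ I, M.Indep I ∧ I ⊆ A ∧ I.ncard = n}.Nonempty :=
    ⟨0, ∅, M.empty_indep, Set.empty_subset _, by simp⟩
  exact Nat.sSup_mem hne (bddAbove hE A)

lemma rk_mono {A B : Set α} (hAB : A ⊆ B) : matroidRank M A ≤ matroidRank M B :=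
  rk_le hE fun I hI hIA => ncard_le_rk hE hI (hIA.trans hAB)

@[simp] lemma rk_empty : matroidRank M (∅ : Set α) = 0 := by
  have h := rk_le (M := M) hE (A := (∅ : Set α)) (n := 0)
    (fun I _ hIA => by simp [Set.subset_empty_iff.mp hIA])
  omega

lemma rk_indep {I : Set α} (hI : M.Indep I) : matroidRank M I = I.ncard :=
  le_antisymm (rk_le hE fun J hJ hJI => Set.ncard_le_ncard hJI (indep_finite hE hI))
    (ncard_le_rk hE hI subset_rfl)

lemma basis_rk {I X : Set α} (hIX : M.IsBasis I X) : matroidRank M X = I.ncard := by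
  refine le_antisymm (rk_le hE fun J hJ hJX => ?_) (ncard_le_rk hE hIX.indep hIX.subset)
  obtain ⟨J', hJ', hJJ'⟩ := hJ.subset_isBasis_of_subset hJX hIX.subset_ground
  have hcard : J'.encard = I.encard := hJ'.encard_eq_encard hIX
  have hJ'fin : J'.Finite := indep_finite hE hJ'.indep
  have : J'.ncard = I.ncard := by
    rw [Set.ncard_def, Set.ncard_def, hcard]
  exact le_trans (Set.ncard_le_ncard hJJ' hJ'fin) this.le

lemma rk_inter_ground (A : Set α) : matroidRank M A = matroidRank M (A ∩ M.E) := by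
  refine le_antisymm (rk_le hE fun I hI hIA => ncard_le_rk hE hI
    (Set.subset_inter hIA hI.subset_ground)) (rk_mono hE Set.inter_subset_left)

lemma rk_submod (X Y : Set α) :
    matroidRank M (X ∪ Y) + matroidRank M (X ∩ Y) ≤ matroidRank M X + matroidRank M Y := by
  wlog hXE : X ⊆ M.E ∧ Y ⊆ M.E generalizing X Y with H
  · have h := H (X ∩ M.E) (Y ∩ M.E) ⟨Set.inter_subset_right, Set.inter_subset_right⟩
    rw [← Set.union_inter_distrib_right, ← Set.inter_inter_distrib_right] at h
    calc matroidRank M (X ∪ Y) + matroidRank M (X ∩ Y)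
        = matroidRank M ((X ∪ Y) ∩ M.E) + matroidRank M ((X ∩ Y) ∩ M.E) := by
          rw [← rk_inter_ground hE, ← rk_inter_ground hE]
      _ ≤ matroidRank M (X ∩ M.E) + matroidRank M (Y ∩ M.E) := h
      _ = matroidRank M X + matroidRank M Y := by
          rw [← rk_inter_ground hE, ← rk_inter_ground hE]
  obtain ⟨hX, hY⟩ := hXE
  obtain ⟨I, hI⟩ := M.exists_isBasis (X ∩ Y) ((Set.inter_subset_left).trans hX)
  obtain ⟨J, hJ, hIJ⟩ := hI.indep.subset_isBasis_of_subset
    (hI.subset.trans (Set.inter_subset_left.trans Set.subset_union_left))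
    (Set.union_subset hX hY)
  have hJfin : J.Finite := indep_finite hE hJ.indep
  have h1 : matroidRank M (X ∪ Y) = J.ncard := basis_rk hE hJ
  have h2 : matroidRank M (X ∩ Y) = I.ncard := basis_rk hE hI
  have hJX : (J ∩ X).ncard ≤ matroidRank M X :=
    ncard_le_rk hE (hJ.indep.inter_right X) Set.inter_subset_right
  have hJY : (J ∩ Y).ncard ≤ matroidRank M Y :=
    ncard_le_rk hE (hJ.indep.inter_right Y) Set.inter_subset_right
  have hsum : (J ∩ X).ncard + (J ∩ Y).ncard = (J ∩ (X ∪ Y)).ncard + (J ∩ (X ∩ Y)).ncard := by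
    rw [Set.inter_union_distrib_left, Set.inter_inter_distrib_left]
    rw [Set.ncard_union_add_ncard_inter _ _ (hJfin.inter_of_left X) (hJfin.inter_of_left Y)]
  have hJXY : J ∩ (X ∪ Y) = J := Set.inter_eq_left.mpr hJ.subset
  have hIsub : I ⊆ J ∩ (X ∩ Y) := Set.subset_inter hIJ hI.subset
  have : J.ncard + I.ncard ≤ (J ∩ X).ncard + (J ∩ Y).ncard := by
    rw [hsum, hJXY]
    exact add_le_add le_rfl (Set.ncard_le_ncard hIsub (hJfin.inter_of_left _))
  omega

lemma rk_insert_mono {e : α} {B B' : Set α} (hBB' : B ⊆ B')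
    (h : matroidRank M (insert e B) ≤ matroidRank M B) :
    matroidRank M (insert e B') ≤ matroidRank M B' := by
  have hsub := rk_submod hE B' (insert e B)
  have h1 : B' ∪ insert e B = insert e B' := by
    rw [Set.union_insert, Set.union_eq_self_of_subset_right hBB']
  have h2 : B ⊆ B' ∩ insert e B :=
    Set.subset_inter hBB' (Set.subset_insert _ _)
  have h3 : matroidRank M B ≤ matroidRank M (B' ∩ insert e B) := rk_mono hE h2
  rw [h1] at hsub
  omega

lemma insert_indep_of_rk_lt {e : α} {F : Set α} (hF : M.Indep F)
    (h : matroidRank M F < matroidRank M (insert e F)) :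
    e ∉ F ∧ M.Indep (insert e F) := by
  have heF : e ∉ F := fun heF => by rw [Set.insert_eq_of_mem heF] at h; omega
  obtain ⟨I, hI, hIF, hIcard⟩ := exists_indep_rk hE (insert e F)
  have hFfin : F.Finite := indep_finite hE hF
  have hrkF : matroidRank M F = F.ncard := rk_indep hE hF
  have hcard : F.ncard + 1 ≤ I.ncard := by omega
  have hIeq : I = insert e F :=
    Set.eq_of_subset_of_ncard_le hIF
      (by rw [Set.ncard_insert_of_notMem heF hFfin]; omega) (hFfin.insert e)
  exact ⟨heF, hIeq ▸ hI⟩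

end MRank

section TELE
lemma tele (u s v : ℕ → ℕ) : ∀ T : ℕ, (∀ j, 1 ≤ j → j ≤ T → u j + v (j+1) ≤ s j + v j) →
    (∑ j ∈ Finset.Icc 1 T, u j) + v (T+1) ≤ (∑ j ∈ Finset.Icc 1 T, s j) + v 1 := by
  intro T
  induction T with
  | zero => intro _; simp
  | succ T IH =>
    intro h
    have h1 := IH (fun j hj hjT => h j hj (by omega))
    have h2 := h (T+1) (by omega) le_rfl
    rw [Finset.sum_Icc_succ_top (by omega : 1 ≤ T+1),
      Finset.sum_Icc_succ_top (by omega : 1 ≤ T+1)]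
    omega
end TELE

namespace MRank
variable {α : Type*} {M : Matroid α} (hE : M.E.Finite)
include hE

lemma nested (A : Set α) (S : Finset ℕ) (C : ℕ → Set α) (hC : ∀ i ∈ S, C i ⊆ A) :
    ∑ j ∈ Finset.Icc 1 S.card, matroidRank M {e ∈ A | j ≤ ({i ∈ (S : Set ℕ) | e ∈ C i}).ncard}
      ≤ ∑ i ∈ S, matroidRank M (C i) := by
  classical
  induction S using Finset.induction_on with
  | empty => simp
  | @insert a S ha IH =>
    have hCa : C a ⊆ A := hC a (Finset.mem_insert_self a S)
    have hC' : ∀ i ∈ S, C i ⊆ A := fun i hi => hC i (Finset.mem_insert_of_mem hi)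
    set m' : α → ℕ := fun e => ({i ∈ (S : Set ℕ) | e ∈ C i}).ncard with hm'def
    have hSfin : (↑S : Set ℕ).Finite := S.finite_toSet
    have hm : ∀ e, ({i ∈ ((insert a S : Finset ℕ) : Set ℕ) | e ∈ C i}).ncard
        = m' e + (if e ∈ C a then 1 else 0) := by
      intro e
      by_cases hea : e ∈ C a
      · have hset : {i ∈ ((insert a S : Finset ℕ) : Set ℕ) | e ∈ C i}
            = insert a {i ∈ (S : Set ℕ) | e ∈ C i} := by
          ext i; simp [Finset.coe_insert, Set.mem_insert_iff]
          constructor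
          · rintro ⟨h1 | h1, h2⟩
            · exact Or.inl h1
            · exact Or.inr ⟨h1, h2⟩
          · rintro (rfl | ⟨h1, h2⟩)
            · exact ⟨Or.inl rfl, hea⟩
            · exact ⟨Or.inr h1, h2⟩
        rw [hset, Set.ncard_insert_of_notMem (by simp [ha])
          (hSfin.subset (fun i hi => hi.1))]
        simp [hea, hm'def]
      · have hset : {i ∈ ((insert a S : Finset ℕ) : Set ℕ) | e ∈ C i}
            = {i ∈ (S : Set ℕ) | e ∈ C i} := by
          ext i
          simp only [Finset.coe_insert, Set.mem_insert_iff, Set.mem_setOf_eq,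
            Finset.mem_coe]
          constructor
          · rintro ⟨rfl | h1, h2⟩
            · exact absurd h2 hea
            · exact ⟨h1, h2⟩
          · rintro ⟨h1, h2⟩; exact ⟨Or.inr h1, h2⟩
        rw [hset]; simp [hea, hm'def]
    -- level sets
    set lvl' : ℕ → Set α := fun j => {e ∈ A | j ≤ m' e} with hlvl'def
    set D : ℕ → Set α := fun j => lvl' (j - 1) ∩ C a with hDdef
    have hlvl'0 : lvl' 0 = A := by ext e; simp [hlvl'def]
    have hlvl'mono : ∀ j, 1 ≤ j → lvl' j ⊆ lvl' (j-1) := by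
      intro j hj e he
      exact ⟨he.1, le_trans (by omega) he.2⟩
    have hm'le : ∀ e, m' e ≤ S.card := by
      intro e
      have : {i ∈ (S : Set ℕ) | e ∈ C i} ⊆ ↑S := fun i hi => hi.1
      simpa [hm'def] using Set.ncard_le_ncard this hSfin
    -- per-j inequality
    have key : ∀ j, 1 ≤ j → j ≤ S.card + 1 →
        matroidRank M {e ∈ A | j ≤ m' e + (if e ∈ C a then 1 else 0)}
          + matroidRank M (D (j+1)) ≤ matroidRank M (lvl' j) + matroidRank M (D j) := by
      intro j hj _
      have hunion : {e ∈ A | j ≤ m' e + (if e ∈ C a then 1 else 0)} = lvl' j ∪ D j := by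
        ext e
        simp only [Set.mem_setOf_eq, Set.mem_union, Set.mem_inter_iff, hDdef, hlvl'def]
        constructor
        · rintro ⟨h1, h2⟩
          by_cases hea : e ∈ C a
          · by_cases hje : j ≤ m' e
            · exact Or.inl ⟨h1, hje⟩
            · simp only [hea, if_true] at h2
              exact Or.inr ⟨⟨h1, by omega⟩, hea⟩
          · simp only [hea, if_false] at h2
            exact Or.inl ⟨h1, by omega⟩
        · rintro (⟨h1, h2⟩ | ⟨⟨h1, h2⟩, hea⟩)
          · exact ⟨h1, le_trans h2 (by split <;> omega)⟩
          · refine ⟨h1, ?_⟩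
            simp only [hea, if_true]
            omega
      have hinter : lvl' j ∩ D j = D (j+1) := by
        have h1 : j + 1 - 1 = j := by omega
        simp only [hDdef, h1]
        rw [← Set.inter_assoc, Set.inter_eq_left.mpr (hlvl'mono j hj)]
      have := rk_submod hE (lvl' j) (D j)
      rw [← hunion, hinter] at this  -- careful direction
      exact this
    -- sum up via telescoping
    have htele := tele (fun j => matroidRank M {e ∈ A | j ≤ m' e + (if e ∈ C a then 1 else 0)})
      (fun j => matroidRank M (lvl' j)) (fun j => matroidRank M (D j)) (S.card + 1)
      (fun j hj hjT => key j hj hjT)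
    have hD1 : D 1 = C a := by
      rw [hDdef]; simp only; rw [show (1:ℕ) - 1 = 0 from rfl, hlvl'0,
        Set.inter_eq_right.mpr hCa]
    have hlvl'top : lvl' (S.card + 1) = ∅ := by
      ext e; simp only [hlvl'def, Set.mem_setOf_eq, Set.mem_empty_iff_false, iff_false]
      rintro ⟨-, h2⟩
      exact absurd h2 (by have := hm'le e; omega)
    have hstop : ∑ j ∈ Finset.Icc 1 (S.card + 1), matroidRank M (lvl' j)
        = ∑ j ∈ Finset.Icc 1 S.card, matroidRank M (lvl' j) := by
      rw [Finset.sum_Icc_succ_top (by omega : 1 ≤ S.card + 1), hlvl'top, rk_empty hE, Nat.add_zero]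
    have hcardins : (insert a S).card = S.card + 1 := Finset.card_insert_of_notMem ha
    rw [hcardins, Finset.sum_insert ha]
    have hgoalsum : ∑ j ∈ Finset.Icc 1 (S.card + 1),
        matroidRank M {e | e ∈ A ∧ j ≤ ({i | i ∈ ((insert a S : Finset ℕ) : Set ℕ) ∧ e ∈ C i}).ncard}
        = ∑ j ∈ Finset.Icc 1 (S.card + 1),
          matroidRank M {e ∈ A | j ≤ m' e + (if e ∈ C a then 1 else 0)} := by
      refine Finset.sum_congr rfl fun j _ => ?_
      congr 1
      ext e
      simp only [Set.mem_setOf_eq, hm e]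
    rw [hgoalsum]
    beta_reduce at htele
    rw [hD1, hstop] at htele
    have hlink : ∑ j ∈ Finset.Icc 1 S.card, matroidRank M (lvl' j)
        ≤ ∑ i ∈ S, matroidRank M (C i) := by
      simpa only [hlvl'def, hm'def] using IH hC'
    omega

end MRank

open MRank in
/-- Matroid union / covering theorem with prescribed sets and multiplicities. -/
theorem cover {α : Type*} {M : Matroid α} (hE : M.E.Finite)
    (E₀ : Finset α) (S : Finset ℕ) (A : ℕ → Set α) :
    ∀ (n : ℕ) (W : α → ℕ) (F : ℕ → Set α),
      (∑ e ∈ E₀, W e) = n →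
      (∀ i ∈ S, M.Indep (F i)) →
      (∀ X : Finset α, ↑X ⊆ (↑E₀ : Set α) →
        (∑ e ∈ X, W e) + (∑ i ∈ S, matroidRank M (F i))
          ≤ ∑ i ∈ S, matroidRank M ((↑X ∩ A i) ∪ F i)) →
      ∃ c : α → Finset ℕ,
        (∀ e ∈ E₀, (c e).card = W e ∧ c e ⊆ S ∧ ∀ i ∈ c e, e ∉ F i) ∧
        (∀ i ∈ S, M.Indep (F i ∪ {e | e ∈ E₀ ∧ i ∈ c e}) ∧ {e | e ∈ E₀ ∧ i ∈ c e} ⊆ A i) := by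
  intro n
  induction n using Nat.strong_induction_on with
  | _ n IH =>
  intro W F hsum hF hcond
  classical
  rcases Nat.eq_zero_or_pos n with hn0 | hnpos
  · -- base case
    subst hn0
    have hW0 : ∀ e ∈ E₀, W e = 0 := fun e he => by
      have := Finset.sum_eq_zero_iff.mp hsum
      exact this e he
    refine ⟨fun _ => ∅, fun e he => ⟨by simp [hW0 e he], by simp, by simp⟩, fun i hi => ?_⟩
    have hcl : {e | e ∈ E₀ ∧ i ∈ (∅ : Finset ℕ)} = (∅ : Set α) := by ext e; simp
    rw [hcl, Set.union_empty]
    exact ⟨hF i hi, Set.empty_subset _⟩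
  · -- inductive step
    obtain ⟨e0, he0E, he0W⟩ : ∃ e0 ∈ E₀, W e0 ≠ 0 := by
      by_contra hcon
      push_neg at hcon
      rw [Finset.sum_eq_zero hcon] at hsum
      omega
    set g : ℕ → Finset α → ℕ := fun i X => matroidRank M ((↑X ∩ A i) ∪ F i) with hg
    set Tight : Finset α → Prop := fun X => ↑X ⊆ (↑E₀ : Set α) ∧
      (∑ e ∈ X, W e) + (∑ i ∈ S, matroidRank M (F i)) = ∑ i ∈ S, g i X with hTight
    have hcondg : ∀ X : Finset α, ↑X ⊆ (↑E₀ : Set α) →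
        (∑ e ∈ X, W e) + (∑ i ∈ S, matroidRank M (F i)) ≤ ∑ i ∈ S, g i X :=
      fun X hX => hcond X hX
    have g_mono : ∀ i, ∀ X Y : Finset α, X ⊆ Y → g i X ≤ g i Y := by
      intro i X Y hXY
      exact rk_mono hE (Set.union_subset_union_left _
        (Set.inter_subset_inter_left _ (Finset.coe_subset.mpr hXY)))
    have tight_empty : Tight ∅ := by
      constructor
      · simp
      · simp [hg]
    have tight_union : ∀ X Y : Finset α, Tight X → Tight Y → Tight (X ∪ Y) := by
      intro X Y hX hY
      have hsub : ↑(X ∪ Y) ⊆ (↑E₀ : Set α) := by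
        rw [Finset.coe_union]; exact Set.union_subset hX.1 hY.1
      have hsubi : ↑(X ∩ Y) ⊆ (↑E₀ : Set α) := by
        rw [Finset.coe_inter]; exact (Set.inter_subset_left).trans hX.1
      have hsubmod : ∀ i ∈ S, g i (X ∪ Y) + g i (X ∩ Y) ≤ g i X + g i Y := by
        intro i _
        have hPQu : ((↑X : Set α) ∩ A i ∪ F i) ∪ ((↑Y : Set α) ∩ A i ∪ F i)
            = (↑(X ∪ Y) ∩ A i) ∪ F i := by
          rw [Finset.coe_union, Set.union_inter_distrib_right,
            Set.union_union_union_comm, Set.union_self]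
        have hPQi : (↑(X ∩ Y) ∩ A i) ∪ F i
            ⊆ ((↑X : Set α) ∩ A i ∪ F i) ∩ ((↑Y : Set α) ∩ A i ∪ F i) := by
          rw [Finset.coe_inter]
          intro x hx
          simp only [Set.mem_union, Set.mem_inter_iff] at hx ⊢
          tauto
        have h1 := rk_submod hE ((↑X : Set α) ∩ A i ∪ F i) ((↑Y : Set α) ∩ A i ∪ F i)
        have h2 : g i (X ∩ Y) ≤ matroidRank M
            (((↑X : Set α) ∩ A i ∪ F i) ∩ ((↑Y : Set α) ∩ A i ∪ F i)) :=
          rk_mono hE hPQi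
        rw [hPQu] at h1
        simp only [hg] at h2 ⊢
        omega
      have hsummod : (∑ i ∈ S, g i (X ∪ Y)) + (∑ i ∈ S, g i (X ∩ Y))
          ≤ (∑ i ∈ S, g i X) + (∑ i ∈ S, g i Y) := by
        rw [← Finset.sum_add_distrib, ← Finset.sum_add_distrib]
        exact Finset.sum_le_sum hsubmod
      have hwsum : (∑ e ∈ X ∪ Y, W e) + (∑ e ∈ X ∩ Y, W e)
          = (∑ e ∈ X, W e) + (∑ e ∈ Y, W e) := Finset.sum_union_inter
      have hcu := hcondg (X ∪ Y) hsub
      have hci := hcondg (X ∩ Y) hsubi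
      have htX := hX.2
      have htY := hY.2
      exact ⟨hsub, by omega⟩
    -- find a good color
    have hgood : ∃ i0 ∈ S, ∀ X : Finset α, Tight X → e0 ∉ X →
        g i0 X < g i0 (insert e0 X) := by
      by_contra hbad
      push_neg at hbad
      choose! Xc h1 h2 h3 using hbad
      set T : Finset α := S.sup Xc with hT
      have hTt : Tight T :=
        Finset.sup_induction tight_empty (fun X hX Y hY => tight_union X Y hX hY)
          (fun i hi => h1 i hi)
      have he0T : e0 ∉ T := by
        intro hmem
        rw [Finset.mem_sup] at hmem
        obtain ⟨i, hi, hmemX⟩ := hmem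
        exact h2 i hi hmemX
      have hkeyT : ∀ i ∈ S, g i (insert e0 T) ≤ g i T := by
        intro i hi
        have hXT : Xc i ⊆ T := Finset.le_sup hi
        by_cases he0A : e0 ∈ A i
        · have hins : ∀ Z : Finset α, (↑(insert e0 Z) ∩ A i) ∪ F i
              = insert e0 ((↑Z ∩ A i) ∪ F i) := by
            intro Z
            rw [Finset.coe_insert, Set.insert_inter_of_mem he0A, Set.insert_union]
          have hle : g i (insert e0 (Xc i)) ≤ g i (Xc i) := h3 i hi
          simp only [hg, hins] at hle ⊢
          exact rk_insert_mono hE (Set.union_subset_union_left _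
            (Set.inter_subset_inter_left _ (Finset.coe_subset.mpr hXT))) hle
        · have : (↑(insert e0 T) ∩ A i) = (↑T ∩ A i) := by
            rw [Finset.coe_insert, Set.insert_inter_of_notMem he0A]
          simp only [hg, this]
          exact le_rfl
      have hsubins : ↑(insert e0 T) ⊆ (↑E₀ : Set α) := by
        rw [Finset.coe_insert]
        exact Set.insert_subset (by exact_mod_cast he0E) hTt.1
      have hc := hcondg (insert e0 T) hsubins
      rw [Finset.sum_insert he0T] at hc
      have hsle : ∑ i ∈ S, g i (insert e0 T) ≤ ∑ i ∈ S, g i T :=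
        Finset.sum_le_sum hkeyT
      have := hTt.2
      omega
    obtain ⟨i0, hi0S, hkey⟩ := hgood
    -- basic facts about e0 and i0
    have hstep0 := hkey ∅ tight_empty (Finset.notMem_empty e0)
    have hg_empty : g i0 ∅ = matroidRank M (F i0) := by simp [hg]
    have he0A : e0 ∈ A i0 := by
      by_contra he0A
      have : (↑(insert e0 (∅ : Finset α)) ∩ A i0) = ((↑(∅ : Finset α) : Set α) ∩ A i0) := by
        rw [Finset.coe_insert, Set.insert_inter_of_notMem he0A]
      simp only [hg, this] at hstep0
      omega
    have hgF : matroidRank M (F i0) < matroidRank M (insert e0 (F i0)) := by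
      have : (↑(insert e0 (∅ : Finset α)) ∩ A i0) ∪ F i0 = insert e0 (F i0) := by
        rw [Finset.coe_insert, Finset.coe_empty, Set.insert_inter_of_mem he0A,
          Set.empty_inter, Set.insert_union, Set.empty_union]
      simp only [hg, this, Finset.coe_empty, Set.empty_inter, Set.empty_union] at hstep0
      exact hstep0
    obtain ⟨he0F, hinsIndep⟩ := insert_indep_of_rk_lt hE (hF i0 hi0S) hgF
    -- update the instance
    set W' : α → ℕ := Function.update W e0 (W e0 - 1) with hW'
    set F' : ℕ → Set α := Function.update F i0 (insert e0 (F i0)) with hF'def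
    have hFfin : (F i0).Finite := indep_finite hE (hF i0 hi0S)
    have hrkF'i0 : matroidRank M (insert e0 (F i0)) = matroidRank M (F i0) + 1 := by
      rw [rk_indep hE hinsIndep, rk_indep hE (hF i0 hi0S),
        Set.ncard_insert_of_notMem he0F hFfin]
    have hF'eq : ∀ i, i ≠ i0 → F' i = F i := fun i hi => Function.update_of_ne hi _ _
    have hF'i0 : F' i0 = insert e0 (F i0) := Function.update_self _ _ _
    have hW'e0 : W' e0 = W e0 - 1 := Function.update_self _ _ _
    have hW'ne : ∀ e, e ≠ e0 → W' e = W e := fun e he => Function.update_of_ne he _ _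
    have hsumF' : ∑ i ∈ S, matroidRank M (F' i) = (∑ i ∈ S, matroidRank M (F i)) + 1 := by
      have herase : ∑ i ∈ S.erase i0, matroidRank M (F' i)
          = ∑ i ∈ S.erase i0, matroidRank M (F i) :=
        Finset.sum_congr rfl fun i hi => by rw [hF'eq i (Finset.ne_of_mem_erase hi)]
      rw [← Finset.add_sum_erase _ (fun i => matroidRank M (F' i)) hi0S,
        ← Finset.add_sum_erase _ (fun i => matroidRank M (F i)) hi0S, herase]
      simp only [hF'i0, hrkF'i0]
      omega
    have hF'S : ∀ i ∈ S, M.Indep (F' i) := by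
      intro i hi
      by_cases heq : i = i0
      · subst heq; rw [hF'i0]; exact hinsIndep
      · rw [hF'eq i heq]; exact hF i hi
    have hgi0 : ∀ X : Finset α, (↑X ∩ A i0) ∪ F' i0 = (↑(insert e0 X) ∩ A i0) ∪ F i0 := by
      intro X
      rw [hF'i0, Set.union_insert, Finset.coe_insert, Set.insert_inter_of_mem he0A,
        Set.insert_union]
    have hsum'' : ∑ e ∈ E₀, W' e = n - 1 := by
      have herase : ∑ e ∈ E₀.erase e0, W' e = ∑ e ∈ E₀.erase e0, W e :=
        Finset.sum_congr rfl fun e he => hW'ne e (Finset.ne_of_mem_erase he)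
      rw [← Finset.add_sum_erase _ W' he0E, herase]
      rw [← Finset.add_sum_erase _ W he0E] at hsum
      rw [hW'e0]
      have := Nat.pos_of_ne_zero he0W
      omega
    have hcond' : ∀ X : Finset α, ↑X ⊆ (↑E₀ : Set α) →
        (∑ e ∈ X, W' e) + (∑ i ∈ S, matroidRank M (F' i))
          ≤ ∑ i ∈ S, matroidRank M ((↑X ∩ A i) ∪ F' i) := by
      intro X hXsub
      have hdecomp : ∑ i ∈ S, matroidRank M ((↑X ∩ A i) ∪ F' i)
          = g i0 (insert e0 X) + ∑ i ∈ S.erase i0, g i X := by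
        rw [← Finset.add_sum_erase _ (fun i => matroidRank M ((↑X ∩ A i) ∪ F' i)) hi0S]
        congr 1
        · rw [hgi0 X]
        · exact Finset.sum_congr rfl fun i hi => by
            rw [hF'eq i (Finset.ne_of_mem_erase hi)]
      have hdecompg : ∑ i ∈ S, g i X = g i0 X + ∑ i ∈ S.erase i0, g i X :=
        (Finset.add_sum_erase _ (fun i => g i X) hi0S).symm
      rw [hdecomp, hsumF']
      by_cases he0X : e0 ∈ X
      · have hWX : (∑ e ∈ X, W' e) + 1 = ∑ e ∈ X, W e := by
          have herase : ∑ e ∈ X.erase e0, W' e = ∑ e ∈ X.erase e0, W e :=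
            Finset.sum_congr rfl fun e he => hW'ne e (Finset.ne_of_mem_erase he)
          rw [← Finset.add_sum_erase _ W' he0X, ← Finset.add_sum_erase _ W he0X, herase,
            hW'e0]
          have := Nat.pos_of_ne_zero he0W
          omega
        have hinsX : insert e0 X = X := Finset.insert_eq_self.mpr he0X
        have hcX := hcondg X hXsub
        rw [hdecompg, hinsX] at *
        omega
      · have hWX : ∑ e ∈ X, W' e = ∑ e ∈ X, W e :=
          Finset.sum_congr rfl fun e he =>
            hW'ne e (fun h => he0X (h ▸ he))
        by_cases hTX : Tight X
        · have hlt := hkey X hTX he0X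
          have := hTX.2
          rw [hdecompg] at this
          omega
        · have hne : (∑ e ∈ X, W e) + (∑ i ∈ S, matroidRank M (F i)) ≠ ∑ i ∈ S, g i X := by
            intro heq
            exact hTX ⟨hXsub, heq⟩
          have hcX := hcondg X hXsub
          have hmono := g_mono i0 X (insert e0 X) (Finset.subset_insert e0 X)
          rw [hdecompg] at hcX hne
          omega
    obtain ⟨c', hc'1, hc'2⟩ := IH (n-1) (by omega) W' F' hsum'' hF'S hcond'
    set c : α → Finset ℕ := Function.update c' e0 (insert i0 (c' e0)) with hcdef
    have hce0 : c e0 = insert i0 (c' e0) := Function.update_self _ _ _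
    have hcne : ∀ e, e ≠ e0 → c e = c' e := fun e he => Function.update_of_ne he _ _
    have hi0c' : i0 ∉ c' e0 := by
      intro hmem
      have := (hc'1 e0 he0E).2.2 i0 hmem
      rw [hF'i0] at this
      exact this (Set.mem_insert e0 _)
    refine ⟨c, fun e he => ?_, fun i hi => ?_⟩
    · by_cases heq : e = e0
      · subst heq
        refine ⟨?_, ?_, ?_⟩
        · rw [hce0, Finset.card_insert_of_notMem hi0c', (hc'1 e he).1, hW'e0]
          have := Nat.pos_of_ne_zero he0W
          omega
        · rw [hce0]
          exact Finset.insert_subset_iff.mpr ⟨hi0S, (hc'1 e he).2.1⟩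
        · intro i hic
          rw [hce0, Finset.mem_insert] at hic
          rcases hic with rfl | hic
          · exact he0F
          · have hne : i ≠ i0 := fun h => hi0c' (h ▸ hic)
            have := (hc'1 e he).2.2 i hic
            rwa [hF'eq i hne] at this
      · rw [hcne e heq]
        refine ⟨?_, (hc'1 e he).2.1, ?_⟩
        · rw [(hc'1 e he).1, hW'ne e heq]
        · intro i hic
          have h1 := (hc'1 e he).2.2 i hic
          by_cases hii : i = i0
          · subst hii
            rw [hF'i0] at h1
            exact fun hmem => h1 (Set.mem_insert_of_mem _ hmem)
          · rwa [hF'eq i hii] at h1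
    · by_cases heqi : i = i0
      · subst heqi
        have hclass : {e | e ∈ E₀ ∧ i ∈ c e} = insert e0 {e | e ∈ E₀ ∧ i ∈ c' e} := by
          ext e
          simp only [Set.mem_setOf_eq, Set.mem_insert_iff]
          constructor
          · rintro ⟨h1, h2⟩
            by_cases heq : e = e0
            · exact Or.inl heq
            · rw [hcne e heq] at h2
              exact Or.inr ⟨h1, h2⟩
          · rintro (rfl | ⟨h1, h2⟩)
            · refine ⟨he0E, ?_⟩
              rw [hce0]
              exact Finset.mem_insert_self _ _
            · by_cases heq : e = e0
              · subst heq
                refine ⟨h1, ?_⟩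
                rw [hce0]
                exact Finset.mem_insert_of_mem h2
              · rw [hcne e heq]
                exact ⟨h1, h2⟩
        rw [hclass]
        constructor
        · have hun : F i ∪ insert e0 {e | e ∈ E₀ ∧ i ∈ c' e}
              = F' i ∪ {e | e ∈ E₀ ∧ i ∈ c' e} := by
            rw [hF'i0, Set.union_insert, Set.insert_union]
          rw [hun]
          exact (hc'2 i hi).1
        · exact Set.insert_subset he0A (hc'2 i hi).2
      · have hclass : {e | e ∈ E₀ ∧ i ∈ c e} = {e | e ∈ E₀ ∧ i ∈ c' e} := by
          ext e
          simp only [Set.mem_setOf_eq]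
          by_cases heq : e = e0
          · subst heq
            rw [hce0, Finset.mem_insert]
            constructor
            · rintro ⟨h1, rfl | h2⟩
              · exact absurd rfl heqi
              · exact ⟨h1, h2⟩
            · rintro ⟨h1, h2⟩; exact ⟨h1, Or.inr h2⟩
          · rw [hcne e heq]
        rw [hclass, ← hF'eq i heqi]
        exact hc'2 i hi

lemma finsum_Ici_one (g : ℕ → ℕ) (N : ℕ) (h : ∀ i, N < i → g i = 0) :
    ∑ᶠ i ∈ Set.Ici (1 : ℕ), g i = ∑ i ∈ Finset.Icc 1 N, g i := by
  apply finsum_mem_eq_sum_of_inter_support_eq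
  ext i
  simp only [Set.mem_inter_iff, Set.mem_Ici, Function.mem_support, Finset.coe_Icc,
    Set.mem_Icc]
  constructor
  · rintro ⟨h1, h2⟩
    refine ⟨⟨h1, ?_⟩, h2⟩
    by_contra hh
    exact h2 (h i (by omega))
  · rintro ⟨⟨h1, _⟩, h2⟩
    exact ⟨h1, h2⟩

namespace MRank
variable {α : Type*} {M : Matroid α} (hE : M.E.Finite)
include hE

lemma colorable_to_cond {ℓ W : α → ℕ}
    (h2 : M.WColorable W (fun e => Finset.Icc 1 (ℓ e))) :
    ∀ A ⊆ M.E, ∑ᶠ e ∈ A, W e ≤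
      ∑ᶠ i ∈ Set.Ici (1 : ℕ), matroidRank M {e ∈ A | i ≤ ℓ e} := by
  classical
  obtain ⟨L', hL', hind⟩ := h2
  intro A hA
  have hAfin : A.Finite := hE.subset hA
  set A' := hAfin.toFinset with hA'
  have hA'coe : (↑A' : Set α) = A := hAfin.coe_toFinset
  have hmemA' : ∀ e, e ∈ A' ↔ e ∈ A := by
    intro e; rw [← hA'coe]; simp
  set S := A'.biUnion L' with hS
  set N := A'.sup ℓ with hN
  have hLsub : ∀ e ∈ A', L' e ⊆ S := fun e he i hi => Finset.mem_biUnion.mpr ⟨e, he, hi⟩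
  have hLIcc : ∀ e ∈ A', L' e ⊆ Finset.Icc 1 (ℓ e) := fun e he =>
    (hL' e (hA ((hmemA' e).mp he))).1
  have hLHS : ∑ᶠ e ∈ A, W e = ∑ e ∈ A', W e := by
    rw [← hA'coe, finsum_mem_coe_finset]
  have hzero : ∀ i, N < i → matroidRank M {e ∈ A | i ≤ ℓ e} = 0 := by
    intro i hi
    have : {e ∈ A | i ≤ ℓ e} = ∅ := by
      ext e
      simp only [Set.mem_setOf_eq, Set.mem_empty_iff_false, iff_false, not_and, not_le]
      intro heA
      have : ℓ e ≤ N := Finset.le_sup ((hmemA' e).mpr heA)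
      omega
    rw [this, rk_empty hE]
  rw [hLHS, finsum_Ici_one _ N hzero]
  have hSsub : S ⊆ Finset.Icc 1 N := by
    intro i hi
    obtain ⟨e, he, hie⟩ := Finset.mem_biUnion.mp hi
    have h1 := hLIcc e he hie
    rw [Finset.mem_Icc] at h1 ⊢
    have : ℓ e ≤ N := Finset.le_sup he
    omega
  have hcardsum : ∑ e ∈ A', W e = ∑ i ∈ S, (A'.filter (fun e => i ∈ L' e)).card := by
    have h1 : ∀ e ∈ A', W e = ∑ i ∈ S, (if i ∈ L' e then 1 else 0) := by
      intro e he
      rw [Finset.sum_ite_mem, Finset.inter_eq_right.mpr (hLsub e he)]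
      simp [(hL' e (hA ((hmemA' e).mp he))).2]
    rw [Finset.sum_congr rfl h1, Finset.sum_comm]
    exact Finset.sum_congr rfl fun i _ => by rw [Finset.card_filter]
  rw [hcardsum]
  have hbound : ∀ i ∈ S, (A'.filter (fun e => i ∈ L' e)).card
      ≤ matroidRank M {e ∈ A | i ≤ ℓ e} := by
    intro i _
    have hindep : M.Indep ↑(A'.filter (fun e => i ∈ L' e)) := by
      refine (hind i).subset ?_
      intro e he
      simp only [Finset.coe_filter, Set.mem_setOf_eq] at he
      exact ⟨hA ((hmemA' e).mp he.1), he.2⟩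
    have hsub : ↑(A'.filter (fun e => i ∈ L' e)) ⊆ {e ∈ A | i ≤ ℓ e} := by
      intro e he
      simp only [Finset.coe_filter, Set.mem_setOf_eq] at he
      refine ⟨(hmemA' e).mp he.1, ?_⟩
      have := hLIcc e he.1 he.2
      rw [Finset.mem_Icc] at this
      exact this.2
    have := ncard_le_rk hE hindep hsub
    rwa [Set.ncard_coe_finset] at this
  calc ∑ i ∈ S, (A'.filter (fun e => i ∈ L' e)).card
      ≤ ∑ i ∈ S, matroidRank M {e ∈ A | i ≤ ℓ e} := Finset.sum_le_sum hbound
    _ ≤ ∑ i ∈ Finset.Icc 1 N, matroidRank M {e ∈ A | i ≤ ℓ e} :=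
        Finset.sum_le_sum_of_subset hSsub

lemma cond_to_colorable {ℓ W : α → ℕ}
    (h3 : ∀ A ⊆ M.E, ∑ᶠ e ∈ A, W e ≤
      ∑ᶠ i ∈ Set.Ici (1 : ℕ), matroidRank M {e ∈ A | i ≤ ℓ e}) :
    ∀ L : α → Finset ℕ, (∀ e ∈ M.E, (L e).card = ℓ e) → M.WColorable W L := by
  classical
  intro L hL
  set E₀ := hE.toFinset with hE₀def
  have hE₀coe : (↑E₀ : Set α) = M.E := hE.coe_toFinset
  have hmemE₀ : ∀ e, e ∈ E₀ ↔ e ∈ M.E := by intro e; rw [← hE₀coe]; simp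
  set S := E₀.biUnion L with hSdef
  set A : ℕ → Set α := fun i => {e ∈ M.E | i ∈ L e} with hAdef
  have hcond : ∀ X : Finset α, ↑X ⊆ (↑E₀ : Set α) →
      (∑ e ∈ X, W e) + (∑ i ∈ S, matroidRank M ((fun _ => (∅ : Set α)) i))
        ≤ ∑ i ∈ S, matroidRank M ((↑X ∩ A i) ∪ (fun _ => (∅ : Set α)) i) := by
    intro X hXsub
    have hXE : (↑X : Set α) ⊆ M.E := by rw [← hE₀coe]; exact hXsub
    have hXmem : ∀ e ∈ X, (e : α) ∈ M.E := fun e he => hXE (Finset.mem_coe.mpr he)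
    have hzero2 : ∑ i ∈ S, matroidRank M ((fun _ => (∅ : Set α)) i) = 0 := by
      simp [rk_empty hE]
    rw [hzero2, Nat.add_zero]
    have h3X := h3 ↑X hXE
    rw [finsum_mem_coe_finset] at h3X
    have hzero : ∀ i, S.card < i → matroidRank M {e ∈ (↑X : Set α) | i ≤ ℓ e} = 0 := by
      intro i hi
      have hempty : {e ∈ (↑X : Set α) | i ≤ ℓ e} = ∅ := by
        ext e
        simp only [Set.mem_setOf_eq, Set.mem_empty_iff_false, iff_false, not_and, not_le]
        intro heX
        have heE₀ : e ∈ E₀ := by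
          rw [hmemE₀]; exact hXE heX
        have hsubS : L e ⊆ S := fun j hj => Finset.mem_biUnion.mpr ⟨e, heE₀, hj⟩
        have : ℓ e = (L e).card := (hL e (hXE heX)).symm
        have := Finset.card_le_card hsubS
        omega
      rw [hempty, rk_empty hE]
    rw [finsum_Ici_one _ S.card hzero] at h3X
    have hnested := nested hE (↑X : Set α) S (fun i => ↑X ∩ A i)
      (fun i _ => Set.inter_subset_left)
    have hcongr : ∀ j ∈ Finset.Icc 1 S.card,
        matroidRank M {e ∈ (↑X : Set α) | j ≤ ({i ∈ (S : Set ℕ) | e ∈ ↑X ∩ A i}).ncard}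
          = matroidRank M {e ∈ (↑X : Set α) | j ≤ ℓ e} := by
      intro j _
      congr 1
      ext e
      simp only [Set.mem_setOf_eq]
      constructor
      · rintro ⟨h1, h2⟩
        refine ⟨h1, ?_⟩
        have : {i ∈ (S : Set ℕ) | e ∈ ↑X ∩ A i}.ncard ≤ ℓ e := by
          have hss : {i ∈ (S : Set ℕ) | e ∈ ↑X ∩ A i} ⊆ ↑(L e) := by
            rintro i ⟨-, -, -, hiL⟩
            exact hiL
          have := Set.ncard_le_ncard hss (L e).finite_toSet
          rwa [Set.ncard_coe_finset, hL e (hXE h1)] at this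
        omega
      · rintro ⟨h1, h2⟩
        refine ⟨h1, ?_⟩
        have heE₀ : e ∈ E₀ := by rw [hmemE₀]; exact hXE h1
        have hseteq : {i ∈ (S : Set ℕ) | e ∈ ↑X ∩ A i} = ↑(L e) := by
          ext i
          simp only [Set.mem_setOf_eq, Finset.mem_coe]
          constructor
          · rintro ⟨-, -, -, hiL⟩; exact hiL
          · intro hiL
            exact ⟨Finset.mem_biUnion.mpr ⟨e, heE₀, hiL⟩, h1, hXE h1, hiL⟩
        rw [hseteq, Set.ncard_coe_finset, hL e (hXE h1)]
        exact h2
    rw [Finset.sum_congr rfl hcongr] at hnested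
    calc ∑ e ∈ X, W e ≤ _ := h3X
      _ ≤ ∑ i ∈ S, matroidRank M (↑X ∩ A i) := hnested
      _ = ∑ i ∈ S, matroidRank M ((↑X ∩ A i) ∪ (fun _ => (∅ : Set α)) i) := by
          simp [Set.union_empty]
  obtain ⟨c, hc1, hc2⟩ := cover hE E₀ S A (∑ e ∈ E₀, W e) W (fun _ => ∅) rfl
    (fun i _ => M.empty_indep) hcond
  refine ⟨c, fun e he => ?_, fun i => ?_⟩
  · have heE₀ : e ∈ E₀ := (hmemE₀ e).mpr he
    obtain ⟨hcard, hsubS, -⟩ := hc1 e heE₀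
    refine ⟨fun i hi => ?_, hcard⟩
    have hiS : i ∈ S := hsubS hi
    have := (hc2 i hiS).2 (show e ∈ {e | e ∈ E₀ ∧ i ∈ c e} from ⟨heE₀, hi⟩)
    exact this.2
  · by_cases hiS : i ∈ S
    · have hind := (hc2 i hiS).1
      rw [Set.empty_union] at hind
      have hseteq : {e | e ∈ M.E ∧ i ∈ c e} = {e | e ∈ E₀ ∧ i ∈ c e} := by
        ext e; rw [Set.mem_setOf_eq, Set.mem_setOf_eq, hmemE₀]
      rwa [hseteq]
    · have hseteq : {e ∈ M.E | i ∈ c e} = (∅ : Set α) := by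
        ext e
        simp only [Set.mem_setOf_eq, Set.mem_empty_iff_false, iff_false, not_and]
        intro he hic
        exact hiS ((hc1 e ((hmemE₀ e).mpr he)).2.1 hic)
      rw [hseteq]
      exact M.empty_indep

end MRank

/-- **Theorem 3 (generalization of Seymour's theorem).** For a matroid `M` on a finite
ground set and functions `ℓ, W : E → ℕ`, the following are equivalent:
(1) `M` is `W`-colorable from every list assignment of size `ℓ`;
(2) `M` is `W`-colorable from the lists `𝐋(e) = {1, …, ℓ(e)}`;
(3) for every `A ⊆ E`, `Σ_{i ≥ 1} r({e ∈ A : ℓ(e) ≥ i}) ≥ Σ_{e ∈ A} W(e)`. -/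
theorem wColorable_lists_tfae {α : Type*} (M : Matroid α) (hE : M.E.Finite) (ℓ W : α → ℕ) :
    ((∀ L : α → Finset ℕ, (∀ e ∈ M.E, (L e).card = ℓ e) → M.WColorable W L) ↔
        M.WColorable W (fun e => Finset.Icc 1 (ℓ e))) ∧
      (M.WColorable W (fun e => Finset.Icc 1 (ℓ e)) ↔
        ∀ A ⊆ M.E, ∑ᶠ e ∈ A, W e ≤
          ∑ᶠ i ∈ Set.Ici (1 : ℕ), matroidRank M {e ∈ A | i ≤ ℓ e}) := by
  have p12 : (∀ L : α → Finset ℕ, (∀ e ∈ M.E, (L e).card = ℓ e) → M.WColorable W L) →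
      M.WColorable W (fun e => Finset.Icc 1 (ℓ e)) := fun h1 =>
    h1 _ (fun e _ => by simp)
  exact ⟨⟨p12, fun h2 => MRank.cond_to_colorable hE (MRank.colorable_to_cond hE h2)⟩,
    ⟨fun h2 => MRank.colorable_to_cond hE h2,
      fun h3 => p12 (MRank.cond_to_colorable hE h3)⟩⟩
end

section
/- (Seymour) Let M be a matroid on a finite ground set E whose ground set can be partitioned into k independent sets. Then for every list assignment L on E with |L(e)| = k for all e ∈ E, there exists a proper coloring of M from the lists L. In other words, the choice number of a loopless matroid equals its chromatic number. -/
open Set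

namespace SeymourAux

variable {α : Type*} {M : Matroid α} {X Y I J : Set α}

/-- The rank of a set: the cardinality of a basis of it. -/
noncomputable def rk (M : Matroid α) (X : Set α) : ℕ := (M.exists_isBasis' X).choose.ncard

lemma rk_basis' (M : Matroid α) (X : Set α) : M.IsBasis' (M.exists_isBasis' X).choose X :=
  (M.exists_isBasis' X).choose_spec

lemma basis'_ncard_eq (h : M.IsBasis' I X) : I.ncard = rk M X := by
  have h1 : (M.restrict X).IsBase I := Matroid.isBase_restrict_iff'.2 h
  have h2 : (M.restrict X).IsBase (M.exists_isBasis' X).choose :=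
    Matroid.isBase_restrict_iff'.2 (rk_basis' M X)
  exact h1.ncard_eq_ncard_of_isBase h2

lemma ncard_le_rk (hI : M.Indep I) (hIX : I ⊆ X) (hX : X.Finite) : I.ncard ≤ rk M X := by
  obtain ⟨J, hJ, hIJ⟩ := hI.subset_isBasis'_of_subset hIX
  rw [← basis'_ncard_eq hJ]
  exact ncard_le_ncard hIJ (hX.subset hJ.subset)

lemma rk_le_ncard (hX : X.Finite) : rk M X ≤ X.ncard := by
  rw [← basis'_ncard_eq (rk_basis' M X)]
  exact ncard_le_ncard (rk_basis' M X).subset hX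

lemma rk_mono (hXY : X ⊆ Y) (hY : Y.Finite) : rk M X ≤ rk M Y := by
  rw [← basis'_ncard_eq (rk_basis' M X)]
  exact ncard_le_rk (rk_basis' M X).indep ((rk_basis' M X).subset.trans hXY) hY

lemma indep_of_ncard_le_rk (hX : X.Finite) (h : X.ncard ≤ rk M X) : M.Indep X := by
  have hB := rk_basis' M X
  have : (M.exists_isBasis' X).choose = X :=
    eq_of_subset_of_ncard_le hB.subset (by rw [basis'_ncard_eq hB]; exact h) hX
  have := hB.indep
  rwa [‹(M.exists_isBasis' X).choose = X›] at this

lemma rk_submodular (hX : X.Finite) (hY : Y.Finite) :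
    rk M (X ∪ Y) + rk M (X ∩ Y) ≤ rk M X + rk M Y := by
  obtain ⟨B, hB⟩ := M.exists_isBasis' (X ∩ Y)
  have hBXY : B ⊆ X ∪ Y := hB.subset.trans (inter_subset_left.trans subset_union_left)
  obtain ⟨B', hB', hBB'⟩ := hB.indep.subset_isBasis'_of_subset hBXY
  have hB'fin : B'.Finite := (hX.union hY).subset hB'.subset
  have hkey : B'.ncard + B.ncard ≤ (B' ∩ X).ncard + (B' ∩ Y).ncard := by
    have h1 : (B' ∩ X) ∪ (B' ∩ Y) = B' := by
      rw [← inter_union_distrib_left, inter_eq_left.2 hB'.subset]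
    have h2 : (B' ∩ X) ∩ (B' ∩ Y) = B' ∩ (X ∩ Y) := by
      ext e; simp [and_assoc]; tauto
    have := ncard_union_add_ncard_inter (B' ∩ X) (B' ∩ Y)
      (hB'fin.subset inter_subset_left) (hB'fin.subset inter_subset_left)
    rw [h1, h2] at this
    have hBsub : B ⊆ B' ∩ (X ∩ Y) := subset_inter hBB' hB.subset
    have : B'.ncard + B.ncard ≤ B'.ncard + (B' ∩ (X ∩ Y)).ncard :=
      add_le_add_right (ncard_le_ncard hBsub (hB'fin.subset inter_subset_left)) _
    omega
  have hX1 : (B' ∩ X).ncard ≤ rk M X :=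
    ncard_le_rk (hB'.indep.subset inter_subset_left) inter_subset_right hX
  have hY1 : (B' ∩ Y).ncard ≤ rk M Y :=
    ncard_le_rk (hB'.indep.subset inter_subset_left) inter_subset_right hY
  rw [← basis'_ncard_eq hB', ← basis'_ncard_eq hB]
  omega

/-- Sum bound for the cardinality of a finite union. -/
lemma ncard_biUnion_le {ι : Type*} (s : Finset ι) (f : ι → Set α) (hf : ∀ i, (f i).Finite) :
    (⋃ i ∈ s, f i).ncard ≤ ∑ i ∈ s, (f i).ncard := by
  classical
  induction s using Finset.induction with
  | empty => simp
  | @insert a s hx ih =>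
    rw [Finset.set_biUnion_insert, Finset.sum_insert hx]
    exact le_trans (ncard_union_le _ _) (add_le_add_right ih _)

/-- The Rado-style core induction: if the rank condition holds for the lists, a proper
coloring from the lists exists. -/
lemma rado (M : Matroid α) (hE : M.E.Finite) (C : Finset ℕ) :
    ∀ n (ℓ : α → Finset ℕ),
      (∑ e ∈ hE.toFinset, (ℓ e).card ≤ n) →
      (∀ e ∈ M.E, ℓ e ⊆ C) → (∀ e ∈ M.E, (ℓ e).Nonempty) →
      (∀ Y ⊆ M.E, Y.ncard ≤ ∑ i ∈ C, rk M {e ∈ Y | i ∈ ℓ e}) →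
      ∃ c : α → ℕ, (∀ e ∈ M.E, c e ∈ ℓ e) ∧ ∀ i, M.Indep {e ∈ M.E | c e = i} := by
  classical
  intro n
  induction n using Nat.strong_induction_on with
  | _ n IH =>
  intro ℓ hsum hsub hne hR
  by_cases hone : ∀ e ∈ M.E, (ℓ e).card = 1
  · -- base case: all lists are singletons
    set c : α → ℕ := fun e => if h : (ℓ e).Nonempty then (ℓ e).min' h else 0 with hc
    have hcmem : ∀ e ∈ M.E, c e ∈ ℓ e := by
      intro e he
      have hce : c e = (ℓ e).min' (hne e he) := by
        simp only [hc]
        exact dif_pos (hne e he)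
      rw [hce]
      exact Finset.min'_mem _ _
    refine ⟨c, hcmem, ?_⟩
    · intro i
      have hsing : ∀ e ∈ M.E, ℓ e = {c e} := by
        intro e he
        obtain ⟨a, ha⟩ := Finset.card_eq_one.1 (hone e he)
        have : c e = a := by simp [hc, ha]
        rw [this, ha]
      by_cases hiC : i ∈ C
      · set Z : Set α := {e ∈ M.E | c e = i} with hZ
        have hZE : Z ⊆ M.E := sep_subset _ _
        have hZfin : Z.Finite := hE.subset hZE
        have hmain := hR Z hZE
        have hterm : ∀ j ∈ C, j ≠ i → rk M {e ∈ Z | j ∈ ℓ e} = 0 := by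
          intro j _ hji
          have : {e ∈ Z | j ∈ ℓ e} = ∅ := by
            ext e
            simp only [mem_setOf_eq, mem_empty_iff_false, iff_false, not_and]
            rintro ⟨heE, hce⟩ hj
            rw [hsing e heE, Finset.mem_singleton] at hj
            exact hji (hj.trans hce)
          rw [this]
          have := rk_le_ncard (M := M) (X := (∅ : Set α)) finite_empty
          simpa using this
        rw [Finset.sum_eq_single_of_mem i hiC (fun j hj hji => hterm j hj hji)] at hmain
        have hZeq : {e ∈ Z | i ∈ ℓ e} = Z := by
          ext e
          simp only [mem_setOf_eq]
          constructor
          · rintro ⟨h1, _⟩; exact h1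
          · intro h1
            refine ⟨h1, ?_⟩
            rw [hsing e h1.1, Finset.mem_singleton, h1.2]
        rw [hZeq] at hmain
        exact indep_of_ncard_le_rk hZfin hmain
      · have : {e ∈ M.E | c e = i} = ∅ := by
          ext e
          simp only [mem_setOf_eq, mem_empty_iff_false, iff_false, not_and]
          rintro heE rfl
          exact hiC (hsub e heE (by rw [hsing e heE]; exact Finset.mem_singleton_self _))
        rw [this]
        exact M.empty_indep
  · -- inductive step
    push_neg at hone
    obtain ⟨e₀, he₀, hcard⟩ := hone
    have h2 : 2 ≤ (ℓ e₀).card := by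
      have := Finset.card_pos.2 (hne e₀ he₀)
      omega
    obtain ⟨x, hx, y, hy, hxy⟩ := Finset.one_lt_card.1 (by omega : 1 < (ℓ e₀).card)
    set ℓx : α → Finset ℕ := Function.update ℓ e₀ ((ℓ e₀).erase x) with hℓx
    set ℓy : α → Finset ℕ := Function.update ℓ e₀ ((ℓ e₀).erase y) with hℓy
    have hℓx_sub : ∀ e, ℓx e ⊆ ℓ e := by
      intro e
      by_cases he : e = e₀
      · subst he; rw [hℓx, Function.update_self]; exact Finset.erase_subset _ _
      · rw [hℓx, Function.update_of_ne he]
    have hℓy_sub : ∀ e, ℓy e ⊆ ℓ e := by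
      intro e
      by_cases he : e = e₀
      · subst he; rw [hℓy, Function.update_self]; exact Finset.erase_subset _ _
      · rw [hℓy, Function.update_of_ne he]
    -- the rank condition survives the deletion of x or of y from the list of e₀
    have hclaim :
        (∀ Y ⊆ M.E, Y.ncard ≤ ∑ i ∈ C, rk M {e ∈ Y | i ∈ ℓx e}) ∨
        (∀ Y ⊆ M.E, Y.ncard ≤ ∑ i ∈ C, rk M {e ∈ Y | i ∈ ℓy e}) := by
      by_contra hcon
      push_neg at hcon
      obtain ⟨⟨Y₁, hY₁E, hY₁⟩, ⟨Y₂, hY₂E, hY₂⟩⟩ := hcon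
      have hY₁fin : Y₁.Finite := hE.subset hY₁E
      have hY₂fin : Y₂.Finite := hE.subset hY₂E
      have he₀Y₁ : e₀ ∈ Y₁ := by
        by_contra he₀Y₁
        have heq : ∀ i, {e ∈ Y₁ | i ∈ ℓx e} = {e ∈ Y₁ | i ∈ ℓ e} := by
          intro i; ext e
          simp only [mem_setOf_eq, and_congr_right_iff]
          intro heY₁
          rw [hℓx, Function.update_of_ne (by rintro rfl; exact he₀Y₁ heY₁)]
        have := hR Y₁ hY₁E
        simp only [heq] at hY₁
        omega
      have he₀Y₂ : e₀ ∈ Y₂ := by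
        by_contra he₀Y₂
        have heq : ∀ i, {e ∈ Y₂ | i ∈ ℓy e} = {e ∈ Y₂ | i ∈ ℓ e} := by
          intro i; ext e
          simp only [mem_setOf_eq, and_congr_right_iff]
          intro heY₂
          rw [hℓy, Function.update_of_ne (by rintro rfl; exact he₀Y₂ heY₂)]
        have := hR Y₂ hY₂E
        simp only [heq] at hY₂
        omega
      -- per-color submodularity estimate
      have hper : ∀ i, rk M {e ∈ Y₁ ∪ Y₂ | i ∈ ℓ e} + rk M {e ∈ (Y₁ ∩ Y₂) \ {e₀} | i ∈ ℓ e}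
          ≤ rk M {e ∈ Y₁ | i ∈ ℓx e} + rk M {e ∈ Y₂ | i ∈ ℓy e} := by
        intro i
        set A : Set α := {e ∈ Y₁ | i ∈ ℓx e} with hA
        set B : Set α := {e ∈ Y₂ | i ∈ ℓy e} with hB
        have hAfin : A.Finite := hY₁fin.subset (sep_subset _ _)
        have hBfin : B.Finite := hY₂fin.subset (sep_subset _ _)
        have hU : {e ∈ Y₁ ∪ Y₂ | i ∈ ℓ e} ⊆ A ∪ B := by
          rintro e ⟨heY, hie⟩
          by_cases he : e = e₀
          · subst he
            by_cases hix : i = x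
            · right
              refine ⟨he₀Y₂, ?_⟩
              rw [hℓy, Function.update_self, Finset.mem_erase]
              exact ⟨(by rw [hix]; exact hxy : i ≠ y), hie⟩
            · left
              refine ⟨he₀Y₁, ?_⟩
              rw [hℓx, Function.update_self, Finset.mem_erase]
              exact ⟨hix, hie⟩
          · rcases heY with h1 | h2
            · left; exact ⟨h1, by rw [hℓx, Function.update_of_ne he]; exact hie⟩
            · right; exact ⟨h2, by rw [hℓy, Function.update_of_ne he]; exact hie⟩
        have hW : {e ∈ (Y₁ ∩ Y₂) \ {e₀} | i ∈ ℓ e} ⊆ A ∩ B := by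
          rintro e ⟨⟨⟨h1, h2⟩, hne₀⟩, hie⟩
          rw [mem_singleton_iff] at hne₀
          constructor
          · exact ⟨h1, by rw [hℓx, Function.update_of_ne hne₀]; exact hie⟩
          · exact ⟨h2, by rw [hℓy, Function.update_of_ne hne₀]; exact hie⟩
        calc rk M {e ∈ Y₁ ∪ Y₂ | i ∈ ℓ e} + rk M {e ∈ (Y₁ ∩ Y₂) \ {e₀} | i ∈ ℓ e}
            ≤ rk M (A ∪ B) + rk M (A ∩ B) :=
              add_le_add (rk_mono hU (hAfin.union hBfin))
                (rk_mono hW ((hAfin.union hBfin).subset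
                  (inter_subset_left.trans subset_union_left)))
          _ ≤ rk M A + rk M B := rk_submodular hAfin hBfin
      have hsum1 := hR (Y₁ ∪ Y₂) (union_subset hY₁E hY₂E)
      have hsum2 := hR ((Y₁ ∩ Y₂) \ {e₀})
        ((diff_subset.trans inter_subset_left).trans hY₁E)
      have hsumper : ∑ i ∈ C, rk M {e ∈ Y₁ ∪ Y₂ | i ∈ ℓ e}
            + ∑ i ∈ C, rk M {e ∈ (Y₁ ∩ Y₂) \ {e₀} | i ∈ ℓ e}
          ≤ ∑ i ∈ C, rk M {e ∈ Y₁ | i ∈ ℓx e} + ∑ i ∈ C, rk M {e ∈ Y₂ | i ∈ ℓy e} := by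
        rw [← Finset.sum_add_distrib, ← Finset.sum_add_distrib]
        exact Finset.sum_le_sum fun i _ => hper i
      have hcard1 : (Y₁ ∪ Y₂).ncard + (Y₁ ∩ Y₂).ncard = Y₁.ncard + Y₂.ncard :=
        ncard_union_add_ncard_inter Y₁ Y₂ hY₁fin hY₂fin
      have hcard2 : ((Y₁ ∩ Y₂) \ {e₀}).ncard + 1 = (Y₁ ∩ Y₂).ncard :=
        ncard_diff_singleton_add_one ⟨he₀Y₁, he₀Y₂⟩ (hY₁fin.subset inter_subset_left)
      omega
    -- recurse on the shrunken lists
    have he₀fin : e₀ ∈ hE.toFinset := hE.mem_toFinset.2 he₀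
    have hrec : ∀ (ℓ' : α → Finset ℕ) (z : ℕ), z ∈ ℓ e₀ →
        ℓ' = Function.update ℓ e₀ ((ℓ e₀).erase z) →
        (∀ Y ⊆ M.E, Y.ncard ≤ ∑ i ∈ C, rk M {e ∈ Y | i ∈ ℓ' e}) →
        ∃ c : α → ℕ, (∀ e ∈ M.E, c e ∈ ℓ e) ∧ ∀ i, M.Indep {e ∈ M.E | c e = i} := by
      intro ℓ' z hz hℓ' hR'
      have hsub' : ∀ e, ℓ' e ⊆ ℓ e := by
        intro e
        by_cases he : e = e₀
        · subst he; rw [hℓ', Function.update_self]; exact Finset.erase_subset _ _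
        · rw [hℓ', Function.update_of_ne he]
      have hzpos : 1 ≤ (ℓ e₀).card := Finset.card_pos.2 ⟨z, hz⟩
      have hlow : (ℓ e₀).card ≤ ∑ e ∈ hE.toFinset, (ℓ e).card :=
        Finset.single_le_sum (f := fun e => (ℓ e).card) (fun i _ => Nat.zero_le _) he₀fin
      have h1 : (ℓ' e₀).card + ∑ e ∈ hE.toFinset.erase e₀, (ℓ' e).card
          = ∑ e ∈ hE.toFinset, (ℓ' e).card :=
        Finset.add_sum_erase _ (fun e => (ℓ' e).card) he₀fin
      have h2 : (ℓ e₀).card + ∑ e ∈ hE.toFinset.erase e₀, (ℓ e).card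
          = ∑ e ∈ hE.toFinset, (ℓ e).card :=
        Finset.add_sum_erase _ (fun e => (ℓ e).card) he₀fin
      have h3 : ∑ e ∈ hE.toFinset.erase e₀, (ℓ' e).card
          = ∑ e ∈ hE.toFinset.erase e₀, (ℓ e).card := by
        refine Finset.sum_congr rfl fun e he => ?_
        rw [hℓ', Function.update_of_ne (Finset.ne_of_mem_erase he)]
      have h4 : (ℓ' e₀).card = (ℓ e₀).card - 1 := by
        rw [hℓ', Function.update_self, Finset.card_erase_of_mem hz]
      have hsum' : ∑ e ∈ hE.toFinset, (ℓ' e).card ≤ n - 1 := by omega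
      have hn1 : n - 1 < n := by omega
      obtain ⟨c, hc1, hc2⟩ := IH (n - 1) hn1 ℓ' hsum'
        (fun e he => (hsub' e).trans (hsub e he))
        (fun e he => by
          by_cases heq : e = e₀
          · subst heq
            rw [hℓ', Function.update_self]
            rw [← Finset.card_pos, Finset.card_erase_of_mem hz]
            omega
          · rw [hℓ', Function.update_of_ne heq]; exact hne e he)
        hR'
      exact ⟨c, fun e he => hsub' e (hc1 e he), hc2⟩
    rcases hclaim with h | h
    · exact hrec ℓx x hx rfl h
    · exact hrec ℓy y hy rfl h

end SeymourAux

open SeymourAux Set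

/-- **Seymour's theorem.** If the ground set of a matroid `M` can be partitioned into
`k` independent sets, then `M` has a proper coloring from every list assignment of
size `k`; i.e. the choice number of a loopless matroid equals its chromatic number. -/
theorem matroid_choosable_of_partition {α : Type*} (M : Matroid α) (hE : M.E.Finite)
    (k : ℕ) (I : Fin k → Set α) (hIndep : ∀ i, M.Indep (I i))
    (hdisj : Pairwise (Function.onFun Disjoint I)) (hunion : ⋃ i, I i = M.E)
    (L : α → Finset ℕ) (hL : ∀ e ∈ M.E, (L e).card = k) :
    ∃ c : α → ℕ, (∀ e ∈ M.E, c e ∈ L e) ∧ ∀ i : ℕ, M.Indep {e ∈ M.E | c e = i} := by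
  classical
  rcases Nat.eq_zero_or_pos k with hk | hk
  · -- k = 0 : the ground set is empty
    subst hk
    have hE0 : M.E = ∅ := by
      rw [← hunion]
      simp
    refine ⟨fun _ => 0, ?_, ?_⟩
    · intro e he; rw [hE0] at he; exact absurd he (notMem_empty e)
    · intro i
      have : {e ∈ M.E | (fun _ => 0) e = i} = ∅ := by
        rw [hE0]; simp
      rw [this]; exact M.empty_indep
  · set C : Finset ℕ := hE.toFinset.biUnion L with hC
    have hsub : ∀ e ∈ M.E, L e ⊆ C := fun e he =>
      Finset.subset_biUnion_of_mem L (hE.mem_toFinset.2 he)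
    -- every subset Z of the ground set satisfies |Z| ≤ k * r(Z)
    have hcover : ∀ Z ⊆ M.E, Z.ncard ≤ k * rk M Z := by
      intro Z hZE
      have hZfin : Z.Finite := hE.subset hZE
      have hZeq : Z = ⋃ j ∈ (Finset.univ : Finset (Fin k)), (Z ∩ I j) := by
        ext e
        simp only [mem_iUnion, Finset.mem_univ, exists_prop, true_and, mem_inter_iff]
        constructor
        · intro he
          have : e ∈ ⋃ j, I j := hunion ▸ hZE he
          obtain ⟨j, hj⟩ := mem_iUnion.1 this
          exact ⟨j, he, hj⟩
        · rintro ⟨j, hj, _⟩; exact hj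
      calc Z.ncard = (⋃ j ∈ (Finset.univ : Finset (Fin k)), (Z ∩ I j)).ncard := by rw [← hZeq]
        _ ≤ ∑ j ∈ (Finset.univ : Finset (Fin k)), (Z ∩ I j).ncard :=
            ncard_biUnion_le _ _ (fun j => hZfin.subset inter_subset_left)
        _ ≤ ∑ _j ∈ (Finset.univ : Finset (Fin k)), rk M Z :=
            Finset.sum_le_sum fun j _ =>
              ncard_le_rk ((hIndep j).subset inter_subset_right) inter_subset_left hZfin
        _ = k * rk M Z := by simp [mul_comm]
    -- the Rado condition holds
    have hR : ∀ Y ⊆ M.E, Y.ncard ≤ ∑ i ∈ C, rk M {e ∈ Y | i ∈ L e} := by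
      intro Y hYE
      have hYfin : Y.Finite := hE.subset hYE
      set Yf : Finset α := hYfin.toFinset with hYf
      -- double counting : ∑_{i ∈ C} |Y^i| = k * |Y|
      have hdouble : ∑ i ∈ C, ({e ∈ Y | i ∈ L e} : Set α).ncard = k * Y.ncard := by
        have hform : ∀ i, ({e ∈ Y | i ∈ L e} : Set α).ncard
            = (Yf.filter (fun e => i ∈ L e)).card := by
          intro i
          have : ({e ∈ Y | i ∈ L e} : Set α) = ↑(Yf.filter (fun e => i ∈ L e)) := by
            ext e
            simp [hYf, hYfin.mem_toFinset]
          rw [this, ncard_coe_finset]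
        simp only [hform, Finset.card_filter]
        rw [Finset.sum_comm]
        have hinner : ∀ e ∈ Yf, (∑ i ∈ C, if i ∈ L e then 1 else 0) = k := by
          intro e he
          have heE : e ∈ M.E := hYE (hYfin.mem_toFinset.1 he)
          rw [← Finset.card_filter]
          have : C.filter (fun i => i ∈ L e) = L e := by
            ext i
            simp only [Finset.mem_filter, and_iff_right_iff_imp]
            exact fun hi => hsub e heE hi
          rw [this, hL e heE]
        rw [Finset.sum_congr rfl hinner, Finset.sum_const, smul_eq_mul,
          ncard_eq_toFinset_card Y hYfin]
        exact mul_comm _ _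
      have hstep : ∀ i, ({e ∈ Y | i ∈ L e} : Set α).ncard ≤ k * rk M {e ∈ Y | i ∈ L e} :=
        fun i => hcover _ ((sep_subset _ _).trans hYE)
      have hbig : k * Y.ncard ≤ k * ∑ i ∈ C, rk M {e ∈ Y | i ∈ L e} := by
        rw [← hdouble, Finset.mul_sum]
        exact Finset.sum_le_sum fun i _ => hstep i
      exact Nat.le_of_mul_le_mul_left hbig hk
    obtain ⟨c, hc1, hc2⟩ := rado M hE C (∑ e ∈ hE.toFinset, (L e).card) L le_rfl hsub
      (fun e he => Finset.card_pos.1 (by rw [hL e he]; exact hk)) hR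
    exact ⟨c, hc1, hc2⟩
end

section
/- Let I₁, …, I_k be a partition of the finite ground set E of a matroid M into independent sets, and define ℓ : E → ℕ by ℓ(e) = i whenever e ∈ I_i. Then for every list assignment L on E with |L(e)| = ℓ(e) for all e ∈ E, there exists a proper coloring of M from the lists L. -/
open Finset

attribute [local instance] Classical.propDecidable
set_option linter.unusedSectionVars false
set_option maxHeartbeats 1000000

namespace MLC

variable {α : Type*} [DecidableEq α]

/-- rank of a finset: max size of an independent subset -/
noncomputable def mrk (M : Matroid α) (X : Finset α) : ℕ :=
  (X.powerset.filter fun (S : Finset α) => M.Indep (S : Set α)).sup Finset.card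

lemma le_mrk {M : Matroid α} {S X : Finset α} (hSX : S ⊆ X) (hS : M.Indep (S : Set α)) :
    S.card ≤ mrk M X :=
  Finset.le_sup (by simp [Finset.mem_filter, Finset.mem_powerset, hSX, hS])

lemma exists_mrk_basis (M : Matroid α) (X : Finset α) :
    ∃ S, S ⊆ X ∧ M.Indep ↑S ∧ S.card = mrk M X := by
  have hne : (X.powerset.filter fun (S : Finset α) => M.Indep (S : Set α)).Nonempty :=
    ⟨∅, by simp [M.empty_indep]⟩
  obtain ⟨S, hS, hfS⟩ := Finset.exists_mem_eq_sup _ hne Finset.card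
  simp only [Finset.mem_filter, Finset.mem_powerset] at hS
  exact ⟨S, hS.1, hS.2, hfS.symm⟩

lemma mrk_mono {M : Matroid α} {X Y : Finset α} (h : X ⊆ Y) : mrk M X ≤ mrk M Y := by
  obtain ⟨S, hSX, hS, hc⟩ := exists_mrk_basis M X
  rw [← hc]; exact le_mrk (hSX.trans h) hS

lemma mrk_le_card (M : Matroid α) (X : Finset α) : mrk M X ≤ X.card := by
  obtain ⟨S, hSX, _, hc⟩ := exists_mrk_basis M X
  rw [← hc]; exact Finset.card_le_card hSX

@[simp] lemma mrk_empty (M : Matroid α) : mrk M (∅ : Finset α) = 0 :=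
  Nat.le_antisymm (by simpa using mrk_le_card M ∅) (Nat.zero_le _)

lemma indep_of_card_le_mrk {M : Matroid α} {X : Finset α} (h : X.card ≤ mrk M X) :
    M.Indep ↑X := by
  obtain ⟨S, hSX, hS, hc⟩ := exists_mrk_basis M X
  have : S = X := Finset.eq_of_subset_of_card_le hSX (by omega)
  rwa [← this]

lemma exists_basis_superset (M : Matroid α) {S X : Finset α} (hSX : S ⊆ X)
    (hS : M.Indep ↑S) :
    ∃ B, S ⊆ B ∧ B ⊆ X ∧ M.Indep ↑B ∧ B.card = mrk M X := by
  obtain ⟨n, hn⟩ : ∃ n, n = mrk M X - S.card := ⟨_, rfl⟩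
  induction n generalizing S with
  | zero =>
    have h1 : S.card ≤ mrk M X := le_mrk hSX hS
    exact ⟨S, Finset.Subset.refl S, hSX, hS, by omega⟩
  | succ m ih =>
    obtain ⟨T, hTX, hT, hTc⟩ := exists_mrk_basis M X
    have h1 : S.card ≤ mrk M X := le_mrk hSX hS
    have hcard : (↑S : Set α).encard < (↑T : Set α).encard := by
      rw [Set.encard_coe_eq_coe_finsetCard, Set.encard_coe_eq_coe_finsetCard]
      exact_mod_cast (by omega : S.card < T.card)
    obtain ⟨e, he, hind⟩ := hS.augment hT hcard
    have heT : e ∈ T := by simpa using he.1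
    have heS : e ∉ S := by simpa using he.2
    have hsub : insert e S ⊆ X := Finset.insert_subset (hTX heT) hSX
    have hindep : M.Indep ↑(insert e S) := by rw [Finset.coe_insert]; exact hind
    obtain ⟨B, hSB, hrest⟩ := ih hsub hindep
      (by rw [Finset.card_insert_of_notMem heS]; omega)
    exact ⟨B, (Finset.subset_insert e S).trans hSB, hrest⟩

lemma mrk_submod (M : Matroid α) (X Y : Finset α) :
    mrk M (X ∪ Y) + mrk M (X ∩ Y) ≤ mrk M X + mrk M Y := by
  obtain ⟨S, hS1, hS2, hS3⟩ := exists_mrk_basis M (X ∩ Y)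
  obtain ⟨B, hSB, hBXY, hB, hBc⟩ :=
    exists_basis_superset M (hS1.trans (Finset.inter_subset_union)) hS2
  have e1 : (B ∩ X).card ≤ mrk M X :=
    le_mrk Finset.inter_subset_right (hB.subset (by exact_mod_cast Finset.inter_subset_left))
  have e2 : (B ∩ Y).card ≤ mrk M Y :=
    le_mrk Finset.inter_subset_right (hB.subset (by exact_mod_cast Finset.inter_subset_left))
  have key := Finset.card_union_add_card_inter (B ∩ X) (B ∩ Y)
  have hU : (B ∩ X) ∪ (B ∩ Y) = B := by
    rw [← Finset.inter_union_distrib_left]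
    exact Finset.inter_eq_left.mpr hBXY
  have hI : (B ∩ X) ∩ (B ∩ Y) = B ∩ (X ∩ Y) := by
    ext a; simp only [Finset.mem_inter]; tauto
  rw [hU, hI] at key
  have hS' : S.card ≤ (B ∩ (X ∩ Y)).card :=
    Finset.card_le_card (Finset.subset_inter hSB hS1)
  omega


/-- chain inequality for submodular rank -/
lemma mrk_chain (M : Matroid α) (V : ℕ → Finset α) (Γ : Finset ℕ) :
    mrk M (Γ.biUnion V) + ∑ γ ∈ Γ, mrk M (V γ ∩ (Γ.filter (· < γ)).biUnion V)
      ≤ ∑ γ ∈ Γ, mrk M (V γ) := by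
  induction Γ using Finset.induction_on_max with
  | empty => simp
  | insert a s ha ih =>
    have hanotin : a ∉ s := fun h => lt_irrefl a (ha a h)
    rw [Finset.biUnion_insert, Finset.sum_insert hanotin, Finset.sum_insert hanotin]
    have hfa : (insert a s).filter (· < a) = s := by
      rw [Finset.filter_insert, if_neg (lt_irrefl a)]
      exact Finset.filter_true_of_mem ha
    have hfs : ∀ γ ∈ s, (insert a s).filter (· < γ) = s.filter (· < γ) := by
      intro γ hγ
      rw [Finset.filter_insert, if_neg (by exact fun h => absurd (ha γ hγ) (not_lt_of_gt h))]
    have hsum : ∑ γ ∈ s, mrk M (V γ ∩ ((insert a s).filter (· < γ)).biUnion V)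
        = ∑ γ ∈ s, mrk M (V γ ∩ (s.filter (· < γ)).biUnion V) :=
      Finset.sum_congr rfl fun γ hγ => by rw [hfs γ hγ]
    rw [hfa, hsum]
    have hsm := mrk_submod M (V a) (s.biUnion V)
    omega
    -- goal: mrk (V a ∪ U) + (mrk (V a ∩ U) + Σ) ≤ mrk (V a) + Σ mrk (V γ)
  -- done

/-- Counting lemma: graded partition implies the Rado condition. -/
lemma counting (M : Matroid α) (k : ℕ) :
    ∀ (E : Finset α) (lvl : α → ℕ) (L : α → Finset ℕ) (Γ : Finset ℕ),
    (∀ e ∈ E, 1 ≤ lvl e ∧ lvl e ≤ k ∧ lvl e ≤ (L e).card) →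
    (∀ i, M.Indep ↑(E.filter fun e => lvl e = i)) →
    (∀ e ∈ E, L e ⊆ Γ) →
    E.card ≤ ∑ γ ∈ Γ, mrk M (E.filter fun e => γ ∈ L e) := by
  induction k with
  | zero =>
    intro E lvl L Γ h1 _ _
    have hE : E = ∅ := Finset.eq_empty_of_forall_notMem fun e he => by
      have := h1 e he; omega
    simp [hE]
  | succ k ih =>
    intro E lvl L Γ h1 h2 h3
    classical
    set E' := E.filter (fun e => 2 ≤ lvl e) with hE'def
    set m : α → ℕ := fun e => if h : (L e).Nonempty then (L e).min' h else 0 with hmdef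
    set L' : α → Finset ℕ := fun e => (L e).erase (m e) with hL'def
    have hLne : ∀ e ∈ E, (L e).Nonempty := fun e he =>
      Finset.card_pos.mp (by have := h1 e he; omega)
    have hmmem : ∀ e ∈ E, m e ∈ L e := fun e he => by
      rw [hmdef]; simp only [dif_pos (hLne e he)]; exact Finset.min'_mem _ _
    have hmle : ∀ e ∈ E, ∀ γ ∈ L e, m e ≤ γ := fun e he γ hγ => by
      rw [hmdef]; simp only [dif_pos (hLne e he)]; exact Finset.min'_le _ _ hγ
    have hmemE' : ∀ e ∈ E', e ∈ E ∧ 2 ≤ lvl e := fun e he => by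
      rw [hE'def] at he; exact Finset.mem_filter.mp he
    -- apply IH
    have hIH : E'.card ≤ ∑ γ ∈ Γ, mrk M (E'.filter fun e => γ ∈ L' e) := by
      apply ih E' (fun e => lvl e - 1) L' Γ
      · intro e he
        obtain ⟨heE, h2l⟩ := hmemE' e he
        have hc := (h1 e heE).2.2
        have hkk := (h1 e heE).2.1
        have hcard : (L' e).card = (L e).card - 1 := by
          rw [hL'def]; exact Finset.card_erase_of_mem (hmmem e heE)
        refine ⟨by omega, by omega, by omega⟩
      · intro i
        rcases i with _ | j
        · have : (E'.filter fun e => lvl e - 1 = 0) = ∅ :=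
            Finset.eq_empty_of_forall_notMem fun e he => by
              rw [Finset.mem_filter] at he
              have := (hmemE' e he.1).2; omega
          rw [this, Finset.coe_empty]; exact M.empty_indep
        · refine (h2 (j + 2)).subset ?_
          intro x hx
          simp only [Finset.coe_filter, Set.mem_setOf_eq] at hx ⊢
          obtain ⟨hxE', hxl⟩ := hx
          obtain ⟨hxE, hx2⟩ := hmemE' x hxE'
          exact ⟨hxE, by omega⟩
      · intro e he
        exact (Finset.erase_subset _ _).trans (h3 e (hmemE' e he).1)
    -- the chain inequality
    have hchain := mrk_chain M (fun γ => E.filter fun e => γ ∈ L e) Γ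
    -- bound 1 : level-1 elements
    have hb1 : (E.filter fun e => lvl e = 1).card
        ≤ mrk M (Γ.biUnion fun γ => E.filter fun e => γ ∈ L e) := by
      apply le_mrk _ (h2 1)
      intro e he
      rw [Finset.mem_filter] at he
      rw [Finset.mem_biUnion]
      exact ⟨m e, h3 e he.1 (hmmem e he.1), Finset.mem_filter.mpr ⟨he.1, hmmem e he.1⟩⟩
    -- bound 2
    have hb2 : ∑ γ ∈ Γ, mrk M (E'.filter fun e => γ ∈ L' e)
        ≤ ∑ γ ∈ Γ, mrk M ((E.filter fun e => γ ∈ L e)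
            ∩ (Γ.filter (· < γ)).biUnion (fun δ => E.filter fun e => δ ∈ L e)) := by
      apply Finset.sum_le_sum
      intro γ hγ
      apply mrk_mono
      intro e he
      rw [Finset.mem_filter] at he
      obtain ⟨heE', heL'⟩ := he
      obtain ⟨heE, _⟩ := hmemE' e heE'
      rw [hL'def] at heL'
      have hne : γ ≠ m e := (Finset.ne_of_mem_erase heL')
      have heL : γ ∈ L e := Finset.mem_of_mem_erase heL'
      have hlt : m e < γ := lt_of_le_of_ne (hmle e heE γ heL) (fun h => hne h.symm)
      rw [Finset.mem_inter]
      constructor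
      · exact Finset.mem_filter.mpr ⟨heE, heL⟩
      · rw [Finset.mem_biUnion]
        exact ⟨m e, Finset.mem_filter.mpr ⟨h3 e heE (hmmem e heE), hlt⟩,
          Finset.mem_filter.mpr ⟨heE, hmmem e heE⟩⟩
    -- split cardinality
    have hsplit : (E.filter fun e => lvl e = 1).card + E'.card = E.card := by
      rw [hE'def]
      have heq : E.filter (fun e => 2 ≤ lvl e) = E.filter (fun e => ¬ lvl e = 1) :=
        Finset.filter_congr fun e he => by have := (h1 e he).1; constructor <;> omega
      rw [heq, Finset.card_filter_add_card_filter_not]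
    omega


/-- Rado-type list coloring theorem. -/
lemma rado (M : Matroid α) (Γ₀ : Finset ℕ) :
    ∀ (n : ℕ) (E : Finset α) (L : α → Finset ℕ),
    (∑ e ∈ E, (L e).card) = n →
    (∀ e ∈ E, L e ⊆ Γ₀) →
    (∀ K, K ⊆ E → K.card ≤ ∑ γ ∈ Γ₀, mrk M (K.filter fun e => γ ∈ L e)) →
    ∃ c : α → ℕ, (∀ e ∈ E, c e ∈ L e) ∧
      ∀ γ, M.Indep ↑(E.filter fun e => c e = γ) := by
  intro n
  induction n using Nat.strong_induction_on with
  | _ n IH =>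
  intro E L hn hΓ hstar
  by_cases hsmall : ∀ e ∈ E, (L e).card ≤ 1
  · -- base case : all lists have ≤ 1 element; show all nonempty; forced coloring
    have hone : ∀ e ∈ E, (L e).Nonempty := by
      intro e he
      by_contra hne
      rw [Finset.not_nonempty_iff_eq_empty] at hne
      have h := hstar {e} (Finset.singleton_subset_iff.mpr he)
      have hz : ∀ γ ∈ Γ₀, mrk M (({e} : Finset α).filter fun e' => γ ∈ L e') = 0 := by
        intro γ _
        have : (({e} : Finset α).filter fun e' => γ ∈ L e') = ∅ := by
          rw [Finset.filter_singleton, if_neg (by simp [hne])]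
        rw [this, mrk_empty]
      rw [Finset.sum_congr rfl hz] at h
      simp at h
    set c : α → ℕ := fun e => if h : (L e).Nonempty then (L e).min' h else 0 with hcdef
    have hc : ∀ e ∈ E, c e ∈ L e := fun e he => by
      rw [hcdef]; simp only [dif_pos (hone e he)]; exact Finset.min'_mem _ _
    refine ⟨c, hc, ?_⟩
    intro γ
    -- the full color set A_γ is independent
    set A := E.filter (fun e => γ ∈ L e) with hAdef
    have hAindep : M.Indep ↑A := by
      by_cases hγΓ : γ ∈ Γ₀
      · apply indep_of_card_le_mrk
        have h := hstar A (Finset.filter_subset _ _)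
        have hsum : ∑ δ ∈ Γ₀, mrk M (A.filter fun e => δ ∈ L e)
            = mrk M (A.filter fun e => γ ∈ L e) := by
          apply Finset.sum_eq_single_of_mem γ hγΓ
          intro δ _ hδγ
          have : (A.filter fun e => δ ∈ L e) = ∅ := by
            apply Finset.eq_empty_of_forall_notMem
            intro e he
            simp only [hAdef, Finset.mem_filter] at he
            obtain ⟨⟨heE, hγL⟩, hδL⟩ := he
            have h1 := hsmall e heE
            have : δ = γ := by
              by_contra hne
              have : 2 ≤ (L e).card := Finset.one_lt_card.mpr ⟨δ, hδL, γ, hγL, hne⟩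
              omega
            exact hδγ this
          rw [this, mrk_empty]
        rw [hsum] at h
        exact h.trans (mrk_mono (Finset.filter_subset _ _))
      · have : A = ∅ := Finset.eq_empty_of_forall_notMem fun e he => by
          simp only [hAdef, Finset.mem_filter] at he
          exact hγΓ (hΓ e he.1 he.2)
        rw [this, Finset.coe_empty]; exact M.empty_indep
    refine hAindep.subset ?_
    intro x hx
    simp only [Finset.mem_coe, Finset.mem_filter, hAdef] at hx ⊢
    exact ⟨hx.1, by rw [← hx.2]; exact hc x hx.1⟩
  · -- inductive step
    push_neg at hsmall
    obtain ⟨e₀, he₀E, he₀c⟩ := hsmall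
    obtain ⟨x, hx, y, hy, hxy⟩ := Finset.one_lt_card.mp he₀c
    set L₁ : α → Finset ℕ := fun e => if e = e₀ then (L e₀).erase x else L e with hL₁def
    set L₂ : α → Finset ℕ := fun e => if e = e₀ then (L e₀).erase y else L e with hL₂def
    have hL₁sub : ∀ e, L₁ e ⊆ L e := by
      intro e; rw [hL₁def]
      by_cases h : e = e₀ <;> simp [h, Finset.erase_subset]
    have hL₂sub : ∀ e, L₂ e ⊆ L e := by
      intro e; rw [hL₂def]
      by_cases h : e = e₀ <;> simp [h, Finset.erase_subset]
    have hmeasure : ∀ (L' : α → Finset ℕ), (∀ e, e ≠ e₀ → L' e = L e) →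
        (L' e₀).card = (L e₀).card - 1 → (∑ e ∈ E, (L' e).card) = n - 1 := by
      intro L' hL'ne hL'c
      have h1 : ∑ e ∈ E.erase e₀, (L' e).card = ∑ e ∈ E.erase e₀, (L e).card :=
        Finset.sum_congr rfl fun e he => by rw [hL'ne e (Finset.ne_of_mem_erase he)]
      have h2 : ∑ e ∈ E.erase e₀, (L' e).card + (L' e₀).card = ∑ e ∈ E, (L' e).card :=
        Finset.sum_erase_add E (fun e => (L' e).card) he₀E
      have h3 : ∑ e ∈ E.erase e₀, (L e).card + (L e₀).card = ∑ e ∈ E, (L e).card :=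
        Finset.sum_erase_add E (fun e => (L e).card) he₀E
      omega
    have hm₁ : (∑ e ∈ E, (L₁ e).card) = n - 1 := by
      apply hmeasure
      · intro e he; rw [hL₁def]; simp [he]
      · rw [hL₁def]; simp only [if_pos rfl]; exact Finset.card_erase_of_mem hx
    have hm₂ : (∑ e ∈ E, (L₂ e).card) = n - 1 := by
      apply hmeasure
      · intro e he; rw [hL₂def]; simp [he]
      · rw [hL₂def]; simp only [if_pos rfl]; exact Finset.card_erase_of_mem hy
    have hnpos : 2 ≤ n := by
      have h3 : ∑ e ∈ E.erase e₀, (L e).card + (L e₀).card = ∑ e ∈ E, (L e).card :=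
        Finset.sum_erase_add E (fun e => (L e).card) he₀E
      omega
    have hΓ₁ : ∀ e ∈ E, L₁ e ⊆ Γ₀ := fun e he => (hL₁sub e).trans (hΓ e he)
    have hΓ₂ : ∀ e ∈ E, L₂ e ⊆ Γ₀ := fun e he => (hL₂sub e).trans (hΓ e he)
    by_cases h₁ : ∀ K, K ⊆ E → K.card ≤ ∑ γ ∈ Γ₀, mrk M (K.filter fun e => γ ∈ L₁ e)
    · obtain ⟨c, hc, hcl⟩ := IH (n-1) (by omega) E L₁ hm₁ hΓ₁ h₁
      exact ⟨c, fun e he => hL₁sub e (hc e he), hcl⟩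
    by_cases h₂ : ∀ K, K ⊆ E → K.card ≤ ∑ γ ∈ Γ₀, mrk M (K.filter fun e => γ ∈ L₂ e)
    · obtain ⟨c, hc, hcl⟩ := IH (n-1) (by omega) E L₂ hm₂ hΓ₂ h₂
      exact ⟨c, fun e he => hL₂sub e (hc e he), hcl⟩
    exfalso
    push_neg at h₁ h₂
    obtain ⟨K₁, hK₁E, hlt₁⟩ := h₁
    obtain ⟨K₂, hK₂E, hlt₂⟩ := h₂
    have he₀K : ∀ (L' : α → Finset ℕ) (K : Finset α), K ⊆ E → (∀ e, e ≠ e₀ → L' e = L e) →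
        (∑ γ ∈ Γ₀, mrk M (K.filter fun e => γ ∈ L' e)) < K.card → e₀ ∈ K := by
      intro L' K hKE hL'ne hlt
      by_contra h
      have : ∀ γ ∈ Γ₀, (K.filter fun e => γ ∈ L' e) = (K.filter fun e => γ ∈ L e) := by
        intro γ _
        apply Finset.filter_congr
        intro e he
        rw [hL'ne e (fun heq => h (heq ▸ he))]
      rw [Finset.sum_congr rfl fun γ hγ => by rw [this γ hγ]] at hlt
      exact absurd (hstar K hKE) (not_le.mpr hlt)
    have he₀K₁ : e₀ ∈ K₁ := he₀K L₁ K₁ hK₁E (fun e he => by rw [hL₁def]; simp [he]) hlt₁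
    have he₀K₂ : e₀ ∈ K₂ := he₀K L₂ K₂ hK₂E (fun e he => by rw [hL₂def]; simp [he]) hlt₂
    -- uncrossing
    set U : ℕ → Finset α := fun γ => K₁.filter (fun e => γ ∈ L₁ e) with hUdef
    set V : ℕ → Finset α := fun γ => K₂.filter (fun e => γ ∈ L₂ e) with hVdef
    have hsub1 : ∀ γ, ((K₁ ∪ K₂).filter fun e => γ ∈ L e) ⊆ U γ ∪ V γ := by
      intro γ e he
      rw [Finset.mem_filter, Finset.mem_union] at he
      obtain ⟨heK, heL⟩ := he
      rw [Finset.mem_union, hUdef, hVdef]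
      simp only [Finset.mem_filter]
      by_cases heq : e = e₀
      · subst heq
        by_cases hγx : γ = x
        · refine Or.inr ⟨he₀K₂, ?_⟩
          rw [hL₂def]; simp only [if_pos rfl]
          exact Finset.mem_erase.mpr ⟨by rw [hγx]; exact hxy, heL⟩
        · refine Or.inl ⟨he₀K₁, ?_⟩
          rw [hL₁def]; simp only [if_pos rfl]
          exact Finset.mem_erase.mpr ⟨hγx, heL⟩
      · rcases heK with h | h
        · exact Or.inl ⟨h, by rw [hL₁def]; simp [heq, heL]⟩
        · exact Or.inr ⟨h, by rw [hL₂def]; simp [heq, heL]⟩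
    have hsub2 : ∀ γ, (((K₁ ∩ K₂).erase e₀).filter fun e => γ ∈ L e) ⊆ U γ ∩ V γ := by
      intro γ e he
      rw [Finset.mem_filter, Finset.mem_erase, Finset.mem_inter] at he
      obtain ⟨⟨hne, h1, h2⟩, heL⟩ := he
      rw [Finset.mem_inter, hUdef, hVdef]
      constructor
      · exact Finset.mem_filter.mpr ⟨h1, by rw [hL₁def]; simp [hne, heL]⟩
      · exact Finset.mem_filter.mpr ⟨h2, by rw [hL₂def]; simp [hne, heL]⟩
    have hbig1 : (K₁ ∪ K₂).card ≤ ∑ γ ∈ Γ₀, mrk M (U γ ∪ V γ) := by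
      refine (hstar (K₁ ∪ K₂) (Finset.union_subset hK₁E hK₂E)).trans ?_
      exact Finset.sum_le_sum fun γ _ => mrk_mono (hsub1 γ)
    have hbig2 : ((K₁ ∩ K₂).erase e₀).card ≤ ∑ γ ∈ Γ₀, mrk M (U γ ∩ V γ) := by
      refine (hstar _ (((Finset.erase_subset _ _).trans Finset.inter_subset_left).trans
        hK₁E)).trans ?_
      exact Finset.sum_le_sum fun γ _ => mrk_mono (hsub2 γ)
    have hsm : ∑ γ ∈ Γ₀, mrk M (U γ ∪ V γ) + ∑ γ ∈ Γ₀, mrk M (U γ ∩ V γ)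
        ≤ ∑ γ ∈ Γ₀, mrk M (U γ) + ∑ γ ∈ Γ₀, mrk M (V γ) := by
      rw [← Finset.sum_add_distrib, ← Finset.sum_add_distrib]
      exact Finset.sum_le_sum fun γ _ => mrk_submod M (U γ) (V γ)
    have hU1 : ∑ γ ∈ Γ₀, mrk M (U γ) = ∑ γ ∈ Γ₀, mrk M (K₁.filter fun e => γ ∈ L₁ e) := rfl
    have hV1 : ∑ γ ∈ Γ₀, mrk M (V γ) = ∑ γ ∈ Γ₀, mrk M (K₂.filter fun e => γ ∈ L₂ e) := rfl
    have hcard1 := Finset.card_union_add_card_inter K₁ K₂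
    have hcard2 : ((K₁ ∩ K₂).erase e₀).card + 1 = (K₁ ∩ K₂).card :=
      Finset.card_erase_add_one (Finset.mem_inter.mpr ⟨he₀K₁, he₀K₂⟩)
    omega


end MLC

/-- **Corollary of Theorem 3.** If `I₁, …, I_k` is a partition of the ground set of a
matroid `M` into independent sets and `ℓ(e) = i` for `e ∈ I_i`, then `M` is properly
colorable from any lists of size `ℓ`. (Here `I` is indexed by `Fin k`, so `I_i` for
`i : Fin k` is the `(i+1)`-st part and `ℓ(e) = i + 1` on it.) -/
theorem matroid_list_colorable_of_graded_partition {α : Type*} (M : Matroid α)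
    (hE : M.E.Finite) (k : ℕ) (I : Fin k → Set α) (hIndep : ∀ i, M.Indep (I i))
    (hdisj : Pairwise (Function.onFun Disjoint I)) (hunion : ⋃ i, I i = M.E)
    (ℓ : α → ℕ) (hℓ : ∀ i : Fin k, ∀ e ∈ I i, ℓ e = (i : ℕ) + 1)
    (L : α → Finset ℕ) (hL : ∀ e ∈ M.E, (L e).card = ℓ e) :
    ∃ c : α → ℕ, (∀ e ∈ M.E, c e ∈ L e) ∧ ∀ i : ℕ, M.Indep {e ∈ M.E | c e = i} := by
  classical
  set E : Finset α := hE.toFinset with hEdef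
  have hmemE : ∀ e, e ∈ E ↔ e ∈ M.E := fun e => hE.mem_toFinset
  have hmem : ∀ e ∈ E, ∃ i : Fin k, e ∈ I i := by
    intro e he
    have h : e ∈ M.E := (hmemE e).mp he
    rw [← hunion] at h
    exact Set.mem_iUnion.mp h
  have h1 : ∀ e ∈ E, 1 ≤ ℓ e ∧ ℓ e ≤ k ∧ ℓ e ≤ (L e).card := by
    intro e he
    obtain ⟨i, hi⟩ := hmem e he
    have hle := hℓ i e hi
    have hcard := hL e ((hmemE e).mp he)
    have hik := i.isLt
    exact ⟨by omega, by omega, by omega⟩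
  have h2 : ∀ j, M.Indep ↑(E.filter fun e => ℓ e = j) := by
    intro j
    rcases j with _ | j'
    · have : (E.filter fun e => ℓ e = 0) = ∅ :=
        Finset.eq_empty_of_forall_notMem fun e he => by
          rw [Finset.mem_filter] at he
          have := (h1 e he.1).1; omega
      rw [this, Finset.coe_empty]; exact M.empty_indep
    · by_cases hjk : j' < k
      · refine (hIndep ⟨j', hjk⟩).subset ?_
        intro x hx
        simp only [Finset.coe_filter, Set.mem_setOf_eq] at hx
        obtain ⟨hxE, hxl⟩ := hx
        obtain ⟨i, hi⟩ := hmem x hxE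
        have hli := hℓ i x hi
        have hieq : i = ⟨j', hjk⟩ := Fin.ext (show (i : ℕ) = j' by omega)
        rwa [← hieq]
      · have : (E.filter fun e => ℓ e = j' + 1) = ∅ :=
          Finset.eq_empty_of_forall_notMem fun e he => by
            rw [Finset.mem_filter] at he
            have := (h1 e he.1).2.1; omega
        rw [this, Finset.coe_empty]; exact M.empty_indep
  set Γ₀ : Finset ℕ := E.biUnion L with hΓ₀def
  have h3 : ∀ e ∈ E, L e ⊆ Γ₀ := fun e he => by
    rw [hΓ₀def]; exact Finset.subset_biUnion_of_mem L he
  have hstar : ∀ K, K ⊆ E → K.card ≤ ∑ γ ∈ Γ₀, MLC.mrk M (K.filter fun e => γ ∈ L e) := by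
    intro K hKE
    apply MLC.counting M k K ℓ L Γ₀
    · exact fun e he => h1 e (hKE he)
    · intro i
      refine (h2 i).subset ?_
      exact_mod_cast Finset.filter_subset_filter _ hKE
    · exact fun e he => h3 e (hKE he)
  obtain ⟨c, hc, hcl⟩ := MLC.rado M Γ₀ (∑ e ∈ E, (L e).card) E L rfl h3 hstar
  refine ⟨c, ?_, ?_⟩
  · intro e he
    exact hc e ((hmemE e).mpr he)
  · intro i
    have hset : {e ∈ M.E | c e = i} = ↑(E.filter fun e => c e = i) := by
      ext x
      simp only [Set.mem_setOf_eq, Finset.coe_filter, hmemE]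
    rw [hset]
    exact hcl i
end

section
/- (Multiple basis exchange) Let B₁ and B₂ be bases of a matroid M on a finite ground set. Then for every subset A₁ ⊆ B₁ there exists a subset A₂ ⊆ B₂ such that both (B₁ \ A₁) ∪ A₂ and (B₂ \ A₂) ∪ A₁ are bases of M. -/
open Set
namespace GreeneAux
variable {α : Type*}

noncomputable def mrk (M : Matroid α) (X : Set α) : ℕ := (M.exists_isBasis' X).choose.ncard

lemma mrk_eq {M : Matroid α} {I X : Set α} (hI : M.IsBasis' I X) : mrk M X = I.ncard := by
  have h := (M.exists_isBasis' X).choose_spec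
  have := h.encard_eq_encard hI
  simp [mrk, Set.ncard, this]

lemma indep_ncard_le_mrk {M : Matroid α} (hE : M.E.Finite) {K X : Set α}
    (hK : M.Indep K) (hKX : K ⊆ X) : K.ncard ≤ mrk M X := by
  obtain ⟨J, hJ, hKJ⟩ := hK.subset_isBasis'_of_subset hKX
  rw [mrk_eq hJ]
  exact Set.ncard_le_ncard hKJ (hE.subset hJ.indep.subset_ground)

lemma mrk_mono {M : Matroid α} (hE : M.E.Finite) {X Y : Set α} (hXY : X ⊆ Y) :
    mrk M X ≤ mrk M Y := by
  obtain ⟨I, hI⟩ := M.exists_isBasis' X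
  rw [mrk_eq hI]
  exact indep_ncard_le_mrk hE hI.indep (hI.subset.trans hXY)

lemma mrk_insert_le {M : Matroid α} (hE : M.E.Finite) (X : Set α) (e : α) :
    mrk M (insert e X) ≤ mrk M X + 1 := by
  obtain ⟨I, hI⟩ := M.exists_isBasis' X
  obtain ⟨J, hJ, hIJ⟩ := hI.indep.subset_isBasis'_of_subset (hI.subset.trans (subset_insert e X))
  have hJsub : J ⊆ insert e I := by
    intro z hz
    by_contra hzi
    simp only [mem_insert_iff, not_or] at hzi
    have hzX : z ∈ X := by
      rcases hJ.subset hz with h | h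
      · exact absurd h hzi.1
      · exact h
    exact hI.insert_not_indep ⟨hzX, hzi.2⟩ (hJ.indep.subset (insert_subset hz hIJ))
  rw [mrk_eq hI, mrk_eq hJ]
  calc J.ncard ≤ (insert e I).ncard :=
        Set.ncard_le_ncard hJsub ((hE.subset hI.indep.subset_ground).insert e)
    _ ≤ I.ncard + 1 := Set.ncard_insert_le e I

lemma mrk_submod {M : Matroid α} (hE : M.E.Finite) (X Y : Set α) :
    mrk M (X ∪ Y) + mrk M (X ∩ Y) ≤ mrk M X + mrk M Y := by
  obtain ⟨I, hI⟩ := M.exists_isBasis' (X ∩ Y)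
  obtain ⟨J₁, hJ₁, hIJ₁⟩ := hI.indep.subset_isBasis'_of_subset (hI.subset.trans inter_subset_left)
  obtain ⟨J, hJ, hJ₁J⟩ := hJ₁.indep.subset_isBasis'_of_subset (hJ₁.subset.trans subset_union_left)
  have hJX : J ∩ X = J₁ := by
    apply Subset.antisymm
    · intro z hz
      by_contra hzJ₁
      exact hJ₁.insert_not_indep ⟨hz.2, hzJ₁⟩
        (hJ.indep.subset (insert_subset hz.1 hJ₁J))
    · exact subset_inter hJ₁J hJ₁.subset
  have hJfin : J.Finite := hE.subset hJ.indep.subset_ground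
  have hsplit : J.ncard = J₁.ncard + (J \ X).ncard := by
    rw [← hJX]
    rw [Set.ncard_inter_add_ncard_diff_eq_ncard J X hJfin]
  have hdisj : Disjoint (J \ X) I := by
    rw [Set.disjoint_left]
    intro z hz hzI
    exact hz.2 (hI.subset hzI).1
  have hind : M.Indep ((J \ X) ∪ I) :=
    hJ.indep.subset (union_subset diff_subset (hIJ₁.trans hJ₁J))
  have hsubY : (J \ X) ∪ I ⊆ Y := by
    apply union_subset
    · intro z hz
      rcases hJ.subset hz.1 with h | h
      · exact absurd h hz.2
      · exact h
    · exact hI.subset.trans inter_subset_right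
  have hcard2 : (J \ X).ncard + I.ncard = ((J \ X) ∪ I).ncard := by
    rw [Set.ncard_union_eq hdisj (hJfin.subset diff_subset) (hE.subset hI.indep.subset_ground)]
  have hle : ((J \ X) ∪ I).ncard ≤ mrk M Y := indep_ncard_le_mrk hE hind hsubY
  rw [mrk_eq hJ, mrk_eq hI, mrk_eq hJ₁]
  omega

lemma mrk_indep {M : Matroid α} {X : Set α} (hX : M.Indep X) : mrk M X = X.ncard :=
  mrk_eq hX.isBasis_self.isBasis'

lemma part_step (M : Matroid α) (hE : M.E.Finite) (n : ℕ)
    (ih : ∀ S' C₁' C₂' : Set α, S'.ncard < n → S'.Finite →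
      (∀ Y ⊆ S', mrk M (S' ∪ C₁') + mrk M (S' ∪ C₂') ≤
        mrk M (Y ∪ C₁') + mrk M (Y ∪ C₂') + (S' \ Y).ncard) →
      ∃ X ⊆ S', mrk M (X ∪ C₁') = mrk M (S' ∪ C₁') ∧
        mrk M ((S' \ X) ∪ C₂') = mrk M (S' ∪ C₂'))
    (S C₁ C₂ : Set α) (hn : S.ncard = n) (hfin : S.Finite) {e : α} (he : e ∈ S)
    (hcond : ∀ Y ⊆ S, mrk M (S ∪ C₁) + mrk M (S ∪ C₂) ≤
      mrk M (Y ∪ C₁) + mrk M (Y ∪ C₂) + (S \ Y).ncard)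
    (happ : mrk M ((S \ {e}) ∪ C₂) = mrk M (S ∪ C₂)) :
    ∃ X ⊆ S, mrk M (X ∪ C₁) = mrk M (S ∪ C₁) ∧
      mrk M ((S \ X) ∪ C₂) = mrk M (S ∪ C₂) := by
  set S' := S \ {e} with hS'
  have hS'fin : S'.Finite := hfin.subset diff_subset
  have hS'lt : S'.ncard < n := by
    rw [← hn]
    exact Set.ncard_diff_singleton_lt_of_mem he hfin
  have hsetA : S' ∪ insert e C₁ = S ∪ C₁ := by
    ext z
    simp only [hS', mem_union, mem_diff, mem_insert_iff, mem_singleton_iff]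
    constructor
    · rintro (⟨h, -⟩ | (rfl | h))
      · exact Or.inl h
      · exact Or.inl he
      · exact Or.inr h
    · rintro (h | h)
      · by_cases hz : z = e
        · exact Or.inr (Or.inl hz)
        · exact Or.inl ⟨h, hz⟩
      · exact Or.inr (Or.inr h)
  have hsetA2 : S' ∪ insert e C₂ = S ∪ C₂ := by
    ext z
    simp only [hS', mem_union, mem_diff, mem_insert_iff, mem_singleton_iff]
    constructor
    · rintro (⟨h, -⟩ | (rfl | h))
      · exact Or.inl h
      · exact Or.inl he
      · exact Or.inr h
    · rintro (h | h)
      · by_cases hz : z = e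
        · exact Or.inr (Or.inl hz)
        · exact Or.inl ⟨h, hz⟩
      · exact Or.inr (Or.inr h)
  have hcard_diff : ∀ Y ⊆ S', (S \ Y).ncard = (S' \ Y).ncard + 1 := by
    intro Y hY
    have h1 : S \ Y = insert e (S' \ Y) := by
      ext z
      simp only [hS', mem_diff, mem_insert_iff, mem_singleton_iff]
      constructor
      · rintro ⟨hzS, hzY⟩
        by_cases hz : z = e
        · exact Or.inl hz
        · exact Or.inr ⟨⟨hzS, hz⟩, hzY⟩
      · rintro (rfl | ⟨⟨h1, -⟩, h2⟩)
        · exact ⟨he, fun h => (hY h).2 rfl⟩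
        · exact ⟨h1, h2⟩
    rw [h1, Set.ncard_insert_of_notMem (fun h => h.1.2 rfl) (hS'fin.subset diff_subset)]
  by_cases hA : ∀ Y ⊆ S', mrk M (S ∪ C₁) + mrk M (S ∪ C₂) ≤
      mrk M (Y ∪ insert e C₁) + mrk M (Y ∪ C₂) + (S' \ Y).ncard
  · -- attempt A succeeds
    obtain ⟨X', hX'S, h1, h2⟩ := ih S' (insert e C₁) C₂ hS'lt hS'fin (by
      intro Y hY
      rw [hsetA, happ]
      exact hA Y hY)
    refine ⟨insert e X', insert_subset he (hX'S.trans diff_subset), ?_, ?_⟩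
    · have : insert e X' ∪ C₁ = X' ∪ insert e C₁ := by
        ext z; simp only [mem_union, mem_insert_iff]; tauto
      rw [this, h1, hsetA]
    · have : S \ insert e X' = S' \ X' := by
        ext z
        simp only [hS', mem_diff, mem_insert_iff, mem_singleton_iff]
        tauto
      rw [this, h2, happ]
  · push_neg at hA
    obtain ⟨Y₁, hY₁S, hY₁⟩ := hA
    -- hY₁ : mrk (Y₁ ∪ insert e C₁) + mrk (Y₁ ∪ C₂) + (S'\Y₁).ncard < ν₁ + ν₂
    have hcondY₁ := hcond Y₁ (hY₁S.trans diff_subset)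
    rw [hcard_diff Y₁ hY₁S] at hcondY₁
    -- R7 submod instance
    have hR7 : mrk M (S ∪ C₁) + mrk M (Y₁ ∪ C₁) ≤
        mrk M (S' ∪ C₁) + mrk M (Y₁ ∪ insert e C₁) := by
      have hu : (S' ∪ C₁) ∪ (Y₁ ∪ insert e C₁) = S ∪ C₁ := by
        rw [← hsetA]
        ext z
        simp only [mem_union, mem_insert_iff]
        have := @hY₁S z
        tauto
      have hi : Y₁ ∪ C₁ ⊆ (S' ∪ C₁) ∩ (Y₁ ∪ insert e C₁) := by
        apply subset_inter
        · exact union_subset_union_left _ hY₁S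
        · exact union_subset_union_right _ (subset_insert e C₁)
      calc mrk M (S ∪ C₁) + mrk M (Y₁ ∪ C₁)
          ≤ mrk M ((S' ∪ C₁) ∪ (Y₁ ∪ insert e C₁)) +
            mrk M ((S' ∪ C₁) ∩ (Y₁ ∪ insert e C₁)) := by
            rw [hu]; exact Nat.add_le_add_left (mrk_mono hE hi) _
        _ ≤ _ := mrk_submod hE _ _
    by_cases ha₁ : mrk M (S' ∪ C₁) = mrk M (S ∪ C₁)
    · -- both applicable; attempt B
      by_cases hB : ∀ Y ⊆ S', mrk M (S ∪ C₁) + mrk M (S ∪ C₂) ≤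
          mrk M (Y ∪ C₁) + mrk M (Y ∪ insert e C₂) + (S' \ Y).ncard
      · obtain ⟨X', hX'S, h1, h2⟩ := ih S' C₁ (insert e C₂) hS'lt hS'fin (by
          intro Y hY
          rw [hsetA2, ha₁]
          exact hB Y hY)
        refine ⟨X', hX'S.trans diff_subset, ?_, ?_⟩
        · rw [h1, ha₁]
        · have heX' : e ∉ X' := fun h => (hX'S h).2 rfl
          have : (S \ X') ∪ C₂ = (S' \ X') ∪ insert e C₂ := by
            ext z
            by_cases hze : z = e
            · subst hze; simp [he, heX']
            · simp only [hS', mem_diff, mem_union, mem_insert_iff, mem_singleton_iff, hze]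
              tauto
          rw [this, h2, hsetA2]
      · push_neg at hB
        obtain ⟨Y₂, hY₂S, hY₂⟩ := hB
        -- uncrossing contradiction
        exfalso
        have hcondP := hcond (insert e (Y₁ ∪ Y₂)) (insert_subset he
          (union_subset (hY₁S.trans diff_subset) (hY₂S.trans diff_subset)))
        have hcondQ := hcond (Y₁ ∩ Y₂) ((inter_subset_left).trans (hY₁S.trans diff_subset))
        have hsub₁ : mrk M (insert e (Y₁ ∪ Y₂) ∪ C₁) + mrk M ((Y₁ ∩ Y₂) ∪ C₁) ≤
            mrk M (Y₁ ∪ insert e C₁) + mrk M (Y₂ ∪ C₁) := by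
          have hu : (Y₁ ∪ insert e C₁) ∪ (Y₂ ∪ C₁) = insert e (Y₁ ∪ Y₂) ∪ C₁ := by
            ext z; simp only [mem_union, mem_insert_iff]; tauto
          have hi : (Y₁ ∩ Y₂) ∪ C₁ ⊆ (Y₁ ∪ insert e C₁) ∩ (Y₂ ∪ C₁) := by
            apply subset_inter
            · exact union_subset_union (inter_subset_left) (subset_insert e C₁)
            · exact union_subset_union_left _ (inter_subset_right)
          calc mrk M (insert e (Y₁ ∪ Y₂) ∪ C₁) + mrk M ((Y₁ ∩ Y₂) ∪ C₁)
              ≤ mrk M ((Y₁ ∪ insert e C₁) ∪ (Y₂ ∪ C₁)) +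
                mrk M ((Y₁ ∪ insert e C₁) ∩ (Y₂ ∪ C₁)) := by
                rw [hu]; exact Nat.add_le_add_left (mrk_mono hE hi) _
            _ ≤ _ := mrk_submod hE _ _
        have hsub₂ : mrk M (insert e (Y₁ ∪ Y₂) ∪ C₂) + mrk M ((Y₁ ∩ Y₂) ∪ C₂) ≤
            mrk M (Y₁ ∪ C₂) + mrk M (Y₂ ∪ insert e C₂) := by
          have hu : (Y₁ ∪ C₂) ∪ (Y₂ ∪ insert e C₂) = insert e (Y₁ ∪ Y₂) ∪ C₂ := by
            ext z; simp only [mem_union, mem_insert_iff]; tauto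
          have hi : (Y₁ ∩ Y₂) ∪ C₂ ⊆ (Y₁ ∪ C₂) ∩ (Y₂ ∪ insert e C₂) := by
            apply subset_inter
            · exact union_subset_union_left _ (inter_subset_left)
            · exact union_subset_union (inter_subset_right) (subset_insert e C₂)
          calc mrk M (insert e (Y₁ ∪ Y₂) ∪ C₂) + mrk M ((Y₁ ∩ Y₂) ∪ C₂)
              ≤ mrk M ((Y₁ ∪ C₂) ∪ (Y₂ ∪ insert e C₂)) +
                mrk M ((Y₁ ∪ C₂) ∩ (Y₂ ∪ insert e C₂)) := by
                rw [hu]; exact Nat.add_le_add_left (mrk_mono hE hi) _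
            _ ≤ _ := mrk_submod hE _ _
        -- cardinality identity
        have hc1 : (S' \ Y₁).ncard + (S' \ Y₂).ncard =
            (S \ insert e (Y₁ ∪ Y₂)).ncard + (S' \ (Y₁ ∩ Y₂)).ncard := by
          have hu : (S' \ Y₁) ∪ (S' \ Y₂) = S' \ (Y₁ ∩ Y₂) := by
            ext z; simp only [mem_union, mem_diff, mem_inter_iff]; tauto
          have hiset : (S' \ Y₁) ∩ (S' \ Y₂) = S \ insert e (Y₁ ∪ Y₂) := by
            ext z
            simp only [hS', mem_inter_iff, mem_diff, mem_insert_iff, mem_union,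
              mem_singleton_iff]
            tauto
          rw [← hu, ← hiset,
            ← Set.ncard_inter_add_ncard_union _ _ (hS'fin.subset diff_subset)
              (hS'fin.subset diff_subset)]
        have hc2 : (S \ (Y₁ ∩ Y₂)).ncard = (S' \ (Y₁ ∩ Y₂)).ncard + 1 :=
          hcard_diff _ ((inter_subset_left).trans hY₁S)
        omega
    · -- ha₁ : side-1 not applicable; contradiction
      exfalso
      have hle : mrk M (S' ∪ C₁) ≤ mrk M (S ∪ C₁) := mrk_mono hE (union_subset_union_left _ diff_subset)
      omega


lemma part (M : Matroid α) (hE : M.E.Finite) :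
    ∀ (n : ℕ) (S C₁ C₂ : Set α), S.ncard = n → S.Finite →
    (∀ Y ⊆ S, mrk M (S ∪ C₁) + mrk M (S ∪ C₂) ≤
      mrk M (Y ∪ C₁) + mrk M (Y ∪ C₂) + (S \ Y).ncard) →
    ∃ X ⊆ S, mrk M (X ∪ C₁) = mrk M (S ∪ C₁) ∧
      mrk M ((S \ X) ∪ C₂) = mrk M (S ∪ C₂) := by
  intro n
  induction n using Nat.strong_induction_on with
  | _ n IH =>
  intro S C₁ C₂ hn hfin hcond
  have ih' : ∀ S' C₁' C₂' : Set α, S'.ncard < n → S'.Finite →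
      (∀ Y ⊆ S', mrk M (S' ∪ C₁') + mrk M (S' ∪ C₂') ≤
        mrk M (Y ∪ C₁') + mrk M (Y ∪ C₂') + (S' \ Y).ncard) →
      ∃ X ⊆ S', mrk M (X ∪ C₁') = mrk M (S' ∪ C₁') ∧
        mrk M ((S' \ X) ∪ C₂') = mrk M (S' ∪ C₂') := by
    intro S' C₁' C₂' hlt hf hc
    exact IH S'.ncard (hn ▸ hlt) S' C₁' C₂' rfl hf hc
  rcases S.eq_empty_or_nonempty with rfl | ⟨e, he⟩
  · exact ⟨∅, Subset.rfl, rfl, by simp⟩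
  by_cases happ2 : mrk M ((S \ {e}) ∪ C₂) = mrk M (S ∪ C₂)
  · exact part_step M hE n ih' S C₁ C₂ hn hfin he hcond happ2
  · have hc' : ∀ Y ⊆ S, mrk M (S ∪ C₂) + mrk M (S ∪ C₁) ≤
        mrk M (Y ∪ C₂) + mrk M (Y ∪ C₁) + (S \ Y).ncard := by
      intro Y hY
      have := hcond Y hY
      omega
    have hse : S \ (S \ {e}) = {e} :=
      Set.diff_diff_cancel_left (singleton_subset_iff.mpr he)
    have happ1 : mrk M ((S \ {e}) ∪ C₁) = mrk M (S ∪ C₁) := by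
      have hi1 : insert e ((S \ {e}) ∪ C₁) = S ∪ C₁ := by
        ext z
        by_cases hze : z = e
        · subst hze; simp [he]
        · simp [hze]
      have hi2 : insert e ((S \ {e}) ∪ C₂) = S ∪ C₂ := by
        ext z
        by_cases hze : z = e
        · subst hze; simp [he]
        · simp [hze]
      have h1 : mrk M (S ∪ C₁) ≤ mrk M ((S \ {e}) ∪ C₁) + 1 := by
        rw [← hi1]; exact mrk_insert_le hE _ e
      have h2 : mrk M ((S \ {e}) ∪ C₁) ≤ mrk M (S ∪ C₁) :=
        mrk_mono hE (union_subset_union_left _ diff_subset)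
      have h3 : mrk M (S ∪ C₂) ≤ mrk M ((S \ {e}) ∪ C₂) + 1 := by
        rw [← hi2]; exact mrk_insert_le hE _ e
      have h4 : mrk M ((S \ {e}) ∪ C₂) ≤ mrk M (S ∪ C₂) :=
        mrk_mono hE (union_subset_union_left _ diff_subset)
      have h5 := hcond (S \ {e}) diff_subset
      rw [hse, Set.ncard_singleton] at h5
      omega
    obtain ⟨X, hXS, h1, h2⟩ := part_step M hE n ih' S C₂ C₁ hn hfin he hc' happ1
    refine ⟨S \ X, diff_subset, h2, ?_⟩
    rw [Set.diff_diff_cancel_left hXS]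
    exact h1

end GreeneAux

open GreeneAux Set in
/-- **Multiple basis exchange.** If `B₁` and `B₂` are bases of a matroid `M` on a
finite ground set, then for every `A₁ ⊆ B₁` there is `A₂ ⊆ B₂` such that both
`(B₁ \ A₁) ∪ A₂` and `(B₂ \ A₂) ∪ A₁` are bases of `M`. -/
theorem multiple_basis_exchange {α : Type*} (M : Matroid α) (hE : M.E.Finite)
    (B₁ B₂ : Set α) (hB₁ : M.IsBase B₁) (hB₂ : M.IsBase B₂) (A₁ : Set α) (hA₁ : A₁ ⊆ B₁) :
    ∃ A₂ ⊆ B₂, M.IsBase ((B₁ \ A₁) ∪ A₂) ∧ M.IsBase ((B₂ \ A₂) ∪ A₁) := by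
  set r := mrk M M.E with hr
  have hB₁E := hB₁.subset_ground
  have hB₂E := hB₂.subset_ground
  have hA₁E : A₁ ⊆ M.E := hA₁.trans hB₁E
  have hB₂fin : B₂.Finite := hE.subset hB₂E
  have hB₁fin : B₁.Finite := hE.subset hB₁E
  -- every base has ncard r
  have hBr : ∀ B, M.IsBase B → B.ncard = r := by
    intro B hB
    obtain ⟨J, hJ⟩ := M.exists_isBasis' M.E
    have hJbase : M.IsBase J := Matroid.isBasis_ground_iff.mp (hJ.isBasis Subset.rfl)
    have hcard := hB.encard_eq_encard_of_isBase hJbase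
    have : mrk M M.E = J.ncard := mrk_eq hJ
    rw [hr, this, Set.ncard, Set.ncard, hcard]
  -- supersets of bases have rank r
  have hscl : ∀ (B T : Set α), M.IsBase B → B ⊆ T → T ⊆ M.E → mrk M T = r := by
    intro B T hB hBT hTE
    refine le_antisymm (mrk_mono hE hTE) ?_
    have h1 : mrk M B = B.ncard := mrk_indep hB.indep
    have h2 := mrk_mono hE hBT
    rw [h1, hBr B hB] at h2
    exact h2
  -- a set of rank r contains a base
  have hspan : ∀ T, T ⊆ M.E → mrk M T = r → ∃ W, M.IsBase W ∧ W ⊆ T := by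
    intro T hTE hT
    obtain ⟨J, hJ⟩ := M.exists_isBasis' T
    obtain ⟨B, hB, hJB⟩ := hJ.indep.exists_isBase_superset
    have hJr : J.ncard = r := by rw [← mrk_eq hJ, hT]
    have hJeqB : J = B := by
      refine Set.eq_of_subset_of_ncard_le hJB ?_ (hE.subset hB.subset_ground)
      rw [hBr B hB, hJr]
    exact ⟨B, hB, hJeqB ▸ hJ.subset⟩
  -- the partition condition
  have hcond : ∀ Y ⊆ B₂, mrk M (B₂ ∪ (B₁ \ A₁)) + mrk M (B₂ ∪ A₁) ≤
      mrk M (Y ∪ (B₁ \ A₁)) + mrk M (Y ∪ A₁) + (B₂ \ Y).ncard := by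
    intro Y hY
    have hYE : Y ⊆ M.E := hY.trans hB₂E
    have hL1 : mrk M (B₂ ∪ (B₁ \ A₁)) = r :=
      hscl B₂ _ hB₂ subset_union_left (union_subset hB₂E (diff_subset.trans hB₁E))
    have hL2 : mrk M (B₂ ∪ A₁) = r :=
      hscl B₂ _ hB₂ subset_union_left (union_subset hB₂E hA₁E)
    have hu : (Y ∪ (B₁ \ A₁)) ∪ (Y ∪ A₁) = Y ∪ B₁ := by
      ext z
      have := @hA₁ z
      simp only [mem_union, mem_diff]
      tauto
    have hsub := mrk_submod hE (Y ∪ (B₁ \ A₁)) (Y ∪ A₁)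
    rw [hu] at hsub
    have hmonoi : mrk M Y ≤ mrk M ((Y ∪ (B₁ \ A₁)) ∩ (Y ∪ A₁)) :=
      mrk_mono hE (subset_inter subset_union_left subset_union_left)
    have hYB₁ : mrk M (Y ∪ B₁) = r :=
      hscl B₁ _ hB₁ subset_union_right (union_subset hYE hB₁E)
    have hYr : mrk M Y = Y.ncard := mrk_indep (hB₂.indep.subset hY)
    have hYcard : (B₂ \ Y).ncard + Y.ncard = B₂.ncard :=
      Set.ncard_diff_add_ncard_of_subset hY hB₂fin
    have hB₂r : B₂.ncard = r := hBr B₂ hB₂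
    omega
  obtain ⟨X, hXB₂, hX1, hX2⟩ := part M hE B₂.ncard B₂ (B₁ \ A₁) A₁ rfl hB₂fin hcond
  rw [hscl B₂ _ hB₂ subset_union_left (union_subset hB₂E (diff_subset.trans hB₁E))] at hX1
  rw [hscl B₂ _ hB₂ subset_union_left (union_subset hB₂E hA₁E)] at hX2
  -- define A₂
  set A₂ := X ∪ (A₁ ∩ B₂) with hA₂def
  have hA₂B₂ : A₂ ⊆ B₂ := union_subset hXB₂ inter_subset_right
  have hS₂eq : (B₂ \ A₂) ∪ A₁ = (B₂ \ X) ∪ A₁ := by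
    ext z
    simp only [hA₂def, mem_union, mem_diff, mem_inter_iff]
    tauto
  have hdisj : Disjoint (B₂ \ A₂) A₁ := by
    rw [Set.disjoint_left]
    intro z hz hzA₁
    exact hz.2 (Or.inr ⟨hzA₁, hz.1⟩)
  have hS₁E : (B₁ \ A₁) ∪ A₂ ⊆ M.E := union_subset (diff_subset.trans hB₁E) (hA₂B₂.trans hB₂E)
  have hS₂E : (B₂ \ A₂) ∪ A₁ ⊆ M.E := union_subset (diff_subset.trans hB₂E) hA₁E
  -- ranks
  have hmr1 : mrk M ((B₁ \ A₁) ∪ A₂) = r := by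
    refine le_antisymm (mrk_mono hE hS₁E) ?_
    have : X ∪ (B₁ \ A₁) ⊆ (B₁ \ A₁) ∪ A₂ := by
      apply union_subset
      · exact (subset_union_left.trans subset_union_right : X ⊆ (B₁ \ A₁) ∪ A₂)
      · exact subset_union_left
    rw [← hX1]
    exact mrk_mono hE this
  have hmr2 : mrk M ((B₂ \ A₂) ∪ A₁) = r := by rw [hS₂eq]; exact hX2
  obtain ⟨W₁, hW₁, hW₁sub⟩ := hspan _ hS₁E hmr1
  obtain ⟨W₂, hW₂, hW₂sub⟩ := hspan _ hS₂E hmr2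
  -- counting
  have c1 : (B₂ \ A₂).ncard + A₂.ncard = B₂.ncard :=
    Set.ncard_diff_add_ncard_of_subset hA₂B₂ hB₂fin
  have c2 : (B₁ \ A₁).ncard + A₁.ncard = B₁.ncard :=
    Set.ncard_diff_add_ncard_of_subset hA₁ hB₁fin
  have c3 : ((B₂ \ A₂) ∪ A₁).ncard = (B₂ \ A₂).ncard + A₁.ncard :=
    Set.ncard_union_eq hdisj (hB₂fin.subset diff_subset) (hE.subset hA₁E)
  have c4 : r ≤ ((B₂ \ A₂) ∪ A₁).ncard := by
    rw [← hBr W₂ hW₂]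
    exact Set.ncard_le_ncard hW₂sub (hE.subset hS₂E)
  have c5 : ((B₁ \ A₁) ∪ A₂).ncard ≤ (B₁ \ A₁).ncard + A₂.ncard := Set.ncard_union_le _ _
  have c6 : r ≤ ((B₁ \ A₁) ∪ A₂).ncard := by
    rw [← hBr W₁ hW₁]
    exact Set.ncard_le_ncard hW₁sub (hE.subset hS₁E)
  have hB₁r : B₁.ncard = r := hBr B₁ hB₁
  have hB₂r : B₂.ncard = r := hBr B₂ hB₂
  -- conclude S₁ is a base
  have hS₁card : ((B₁ \ A₁) ∪ A₂).ncard ≤ W₁.ncard := by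
    rw [hBr W₁ hW₁]
    omega
  have hS₁eqW : W₁ = (B₁ \ A₁) ∪ A₂ :=
    Set.eq_of_subset_of_ncard_le hW₁sub hS₁card (hE.subset hS₁E)
  have hbase1 : M.IsBase ((B₁ \ A₁) ∪ A₂) := hS₁eqW ▸ hW₁
  -- now |A₂| = |A₁| and S₂ is a base
  have hS₂card : ((B₂ \ A₂) ∪ A₁).ncard ≤ W₂.ncard := by
    have hS₁n : ((B₁ \ A₁) ∪ A₂).ncard = r := hBr _ hbase1
    rw [hBr W₂ hW₂]
    omega
  have hS₂eqW : W₂ = (B₂ \ A₂) ∪ A₁ :=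
    Set.eq_of_subset_of_ncard_le hW₂sub hS₂card (hE.subset hS₂E)
  exact ⟨A₂, hA₂B₂, hbase1, hS₂eqW ▸ hW₂⟩
end

section
/- Let A and B be bases of a matroid M on a finite ground set. Then for every partition B = B₁ ⊔ B₂ ⊔ ⋯ ⊔ B_k of B into k pairwise disjoint (possibly empty) parts, there exists a partition A = A₁ ⊔ A₂ ⊔ ⋯ ⊔ A_k of A into k pairwise disjoint parts such that (B \ B_i) ∪ A_i is a basis of M for every i ∈ {1, …, k}. -/
namespace BPE

open Set Matroid

variable {α : Type*} {M : Matroid α} {X Y I T : Set α} {u : α}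

/-- rank of a set in a matroid, as a natural number -/
noncomputable def rk (M : Matroid α) (X : Set α) : ℕ := (M.exists_isBasis' X).choose.ncard

lemma basis_ncard_rk (h : M.IsBasis I X) : I.ncard = rk M X := by
  have h2 := (M.exists_isBasis' X).choose_spec
  rw [rk, Set.ncard_def, Set.ncard_def, h.isBasis'.encard_eq_encard h2]

lemma rk_indep (hI : M.Indep I) : rk M I = I.ncard :=
  (basis_ncard_rk (hI.isBasis_self)).symm

lemma indep_ncard_le_rk (hE : M.E.Finite) (hI : M.Indep I) (hIX : I ⊆ X) (hX : X ⊆ M.E) :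
    I.ncard ≤ rk M X := by
  obtain ⟨J, hJ, hIJ⟩ := hI.subset_isBasis_of_subset hIX hX
  rw [← basis_ncard_rk hJ]
  exact Set.ncard_le_ncard hIJ (hE.subset hJ.indep.subset_ground)

lemma rk_mono (hE : M.E.Finite) (hXY : X ⊆ Y) (hY : Y ⊆ M.E) : rk M X ≤ rk M Y := by
  obtain ⟨I, hI⟩ := M.exists_isBasis X (hXY.trans hY)
  rw [← basis_ncard_rk hI]
  exact indep_ncard_le_rk hE hI.indep (hI.subset.trans hXY) hY

lemma rk_union_eq_of_subset_closure (hY : Y ⊆ M.E) (hX : X ⊆ M.closure Y) :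
    rk M (Y ∪ X) = rk M Y := by
  obtain ⟨I, hI⟩ := M.exists_isBasis Y hY
  have hIc : M.IsBasis I (M.closure Y) := hI.isBasis_closure_right
  have h1 : M.IsBasis I (Y ∪ X) :=
    hIc.isBasis_subset (hI.subset.trans subset_union_left)
      (union_subset (M.subset_closure Y hY) hX)
  rw [← basis_ncard_rk h1, basis_ncard_rk hI]

lemma rk_submod (hE : M.E.Finite) (hX : X ⊆ M.E) (hY : Y ⊆ M.E) :
    rk M (X ∪ Y) + rk M (X ∩ Y) ≤ rk M X + rk M Y := by
  obtain ⟨I, hI⟩ := M.exists_isBasis (X ∩ Y) ((inter_subset_left).trans hX)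
  obtain ⟨J, hJ, hIJ⟩ := hI.indep.subset_isBasis_of_subset
    (hI.subset.trans ((inter_subset_left).trans subset_union_left))
    (union_subset hX hY)
  have hJfin : J.Finite := hE.subset hJ.indep.subset_ground
  have h1 : (J ∩ X).ncard ≤ rk M X :=
    indep_ncard_le_rk hE (hJ.indep.inter_right X) inter_subset_right hX
  have h2 : (J ∩ Y).ncard ≤ rk M Y :=
    indep_ncard_le_rk hE (hJ.indep.inter_right Y) inter_subset_right hY
  have key : (J ∩ X).ncard + (J ∩ Y).ncard = (J ∩ (X ∪ Y)).ncard + (J ∩ (X ∩ Y)).ncard := by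
    rw [show J ∩ (X ∪ Y) = (J ∩ X) ∪ (J ∩ Y) by rw [inter_union_distrib_left],
        show J ∩ (X ∩ Y) = (J ∩ X) ∩ (J ∩ Y) by rw [← inter_inter_distrib_left]]
    rw [Set.ncard_union_add_ncard_inter _ _ (hJfin.inter_of_left X) (hJfin.inter_of_left Y)]
  have h3 : J ∩ (X ∪ Y) = J := inter_eq_self_of_subset_left hJ.subset
  have h4 : rk M (X ∩ Y) ≤ (J ∩ (X ∩ Y)).ncard := by
    rw [← basis_ncard_rk hI]
    exact Set.ncard_le_ncard (subset_inter hIJ hI.subset) (hJfin.inter_of_left _)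
  calc rk M (X ∪ Y) + rk M (X ∩ Y) ≤ (J ∩ (X ∪ Y)).ncard + (J ∩ (X ∩ Y)).ncard := by
        rw [h3, basis_ncard_rk hJ]; omega
    _ = (J ∩ X).ncard + (J ∩ Y).ncard := key.symm
    _ ≤ rk M X + rk M Y := by omega

/-- The exchange-set closure lemma: if `T` is independent and `insert u T` is dependent,
then `u` is in the closure of the set of elements of `T` that can be exchanged for `u`. -/
lemma mem_closure_exch (hE : M.E.Finite) (hT : M.Indep T) (hu : u ∈ M.E) (huT : u ∉ T)
    (hdep : ¬ M.Indep (insert u T)) :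
    u ∈ M.closure {y | y ∈ T ∧ M.Indep (insert u (T \ {y}))} := by
  set D := {y | y ∈ T ∧ M.Indep (insert u (T \ {y}))} with hD
  have hDT : D ⊆ T := fun y hy => hy.1
  have hDind : M.Indep D := hT.subset hDT
  have hTE : T ⊆ M.E := hT.subset_ground
  have hiTE : insert u T ⊆ M.E := insert_subset hu hTE
  by_cases hid : M.Indep (insert u D)
  · exfalso
    obtain ⟨Z, hZ, hDZ⟩ := hid.subset_isBasis_of_subset (insert_subset_insert hDT) hiTE
    -- T is a basis of insert u T
    have hTb : M.IsBasis T (insert u T) := by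
      obtain ⟨T', hT', hTT'⟩ := hT.subset_isBasis_of_subset (subset_insert u T) hiTE
      have : T' = T := by
        by_cases huT' : u ∈ T'
        · exfalso
          exact hdep (hT'.indep.subset (insert_subset huT' hTT'))
        · exact (subset_antisymm (fun x hx => ((hT'.subset hx).resolve_left
            (fun h => huT' (h ▸ hx))) ) hTT')
      exact this ▸ hT'
    have hcard : Z.encard = T.encard := hZ.encard_eq_encard hTb
    have huZ : u ∈ Z := hDZ (mem_insert u D)
    have hZsub : Z ⊆ insert u T := hZ.subset
    have hTfin : T.Finite := hE.subset hTE
    have hZfin : Z.Finite := hE.subset hZ.indep.subset_ground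
    -- (insert u T) \ Z has exactly one element
    have hone : ((insert u T) \ Z).encard = 1 := by
      have := Set.encard_diff_add_encard_of_subset hZsub
      rw [Set.encard_insert_of_notMem huT, hcard] at this
      have hTne : T.encard ≠ ⊤ := hTfin.encard_lt_top.ne
      -- this : (insert u T \ Z).encard + T.encard = T.encard + 1
      have h2 : (insert u T \ Z).encard + T.encard = 1 + T.encard := by rw [this, add_comm]
      exact WithTop.add_right_cancel hTne h2
    obtain ⟨y, hy⟩ := Set.encard_eq_one.mp hone
    have hyT : y ∈ T := by
      have : y ∈ insert u T \ Z := hy ▸ rfl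
      rcases this.1 with h | h
      · exact absurd (h ▸ huZ) this.2
      · exact h
    have hyZ : y ∉ Z := (show y ∈ insert u T \ Z from hy ▸ rfl).2
    have hyD : y ∉ D := fun h => hyZ (hDZ (mem_insert_of_mem _ h))
    have hZeq : Z = insert u (T \ {y}) := by
      apply subset_antisymm
      · intro x hx
        have hx' : x ∈ insert u T := hZsub hx
        rcases hx' with h | h
        · exact h ▸ mem_insert _ _
        · refine mem_insert_of_mem _ ⟨h, ?_⟩
          intro hxy
          exact hyZ ((mem_singleton_iff.mp hxy) ▸ hx)
      · intro x hx
        rcases hx with h | h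
        · exact h ▸ huZ
        · by_contra hxZ
          have : x ∈ insert u T \ Z := ⟨mem_insert_of_mem _ h.1, hxZ⟩
          rw [hy] at this
          exact h.2 this
    exact hyD ⟨hyT, hZeq ▸ hZ.indep⟩
  · have hdep' : M.Dep (insert u D) := ⟨hid, insert_subset hu (hDT.trans hTE)⟩
    have := hDind.insert_dep_iff.mp hdep'
    exact this.1


variable {α : Type*}

/-- chains of arcs along a list -/
def Arcs (r : α → α → Prop) : α → List α → Prop
  | _, [] => True
  | x, (v :: l) => r x v ∧ Arcs r v l

/-- final element of a path -/
def fin (x : α) : List α → α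
  | [] => x
  | (v :: l) => fin v l

@[simp] lemma arcs_nil {r : α → α → Prop} (x : α) : Arcs r x [] := trivial

@[simp] lemma arcs_cons {r : α → α → Prop} (x v : α) (l : List α) :
    Arcs r x (v :: l) ↔ r x v ∧ Arcs r v l := Iff.rfl

@[simp] lemma fin_nil (x : α) : fin x ([] : List α) = x := rfl

@[simp] lemma fin_cons (x v : α) (l : List α) : fin x (v :: l) = fin v l := rfl

lemma fin_concat : ∀ (l : List α) (x w : α), fin x (l ++ [w]) = w
  | [], x, w => rfl
  | v :: l, x, w => by simp [fin_concat l v w]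

lemma arcs_concat {r : α → α → Prop} :
    ∀ (l : List α) (x w : α), Arcs r x (l ++ [w]) ↔ Arcs r x l ∧ r (fin x l) w
  | [], x, w => by simp
  | v :: l, x, w => by
      simp only [List.cons_append, arcs_cons, fin_cons, arcs_concat l v w]
      tauto

lemma arcs_append_mid {r : α → α → Prop} :
    ∀ (s : List α) (x y : α) (t : List α), Arcs r x (s ++ y :: t) → Arcs r y t
  | [], x, y, t, h => h.2
  | a :: s, x, y, t, h => arcs_append_mid s a y t h.2

lemma fin_append_mid : ∀ (s : List α) (x y : α) (t : List α), fin x (s ++ y :: t) = fin y t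
  | [], x, y, t => rfl
  | a :: s, x, y, t => fin_append_mid s a y t

lemma fin_mem : ∀ (l : List α) (x : α), fin x l = x ∨ fin x l ∈ l
  | [], x => Or.inl rfl
  | v :: l, x => by
      rcases fin_mem l v with h | h
      · exact Or.inr (by rw [fin_cons, h]; exact List.mem_cons_self)
      · exact Or.inr (List.mem_cons_of_mem v h)

lemma arcs_targets {r : α → α → Prop} :
    ∀ (l : List α) (x : α), Arcs r x l → ∀ y ∈ l, ∃ z, r z y
  | [], x, _, y, hy => absurd hy (List.not_mem_nil)
  | v :: l, x, h, y, hy => by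
      rcases List.mem_cons.mp hy with rfl | hy
      · exact ⟨x, h.1⟩
      · exact arcs_targets l v h.2 y hy

/-- any arc-chain can be replaced by one with no duplicates and the same endpoints -/
lemma dedup {r : α → α → Prop} :
    ∀ (n : ℕ) (x : α) (l : List α), l.length ≤ n → Arcs r x l →
    ∃ l', (x :: l').Nodup ∧ Arcs r x l' ∧ fin x l' = fin x l ∧
      l'.length ≤ l.length ∧ ∀ y ∈ l', y ∈ l := by
  intro n
  induction n with
  | zero =>
    intro x l hl _
    have : l = [] := List.length_eq_zero_iff.mp (Nat.le_zero.mp hl)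
    subst this
    exact ⟨[], by simp, trivial, rfl, le_refl _, by simp⟩
  | succ n ih =>
    intro x l hl harcs
    by_cases hxl : x ∈ l
    · obtain ⟨s, t, rfl⟩ := List.append_of_mem hxl
      have ht : Arcs r x t := arcs_append_mid s x x t harcs
      have htlen : t.length ≤ n := by
        have := hl
        simp only [List.length_append, List.length_cons] at this
        omega
      obtain ⟨l', h1, h2, h3, h4, h5⟩ := ih x t htlen ht
      refine ⟨l', h1, h2, ?_, ?_, ?_⟩
      · rw [h3, fin_append_mid]
      · simp only [List.length_append, List.length_cons]; omega
      · intro y hy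
        have := h5 y hy
        simp only [List.mem_append, List.mem_cons]
        tauto
    · cases l with
      | nil => exact ⟨[], by simp, trivial, rfl, le_refl _, by simp⟩
      | cons v rest =>
        obtain ⟨hxv, hrest⟩ := harcs
        have hrl : rest.length ≤ n := by
          simp only [List.length_cons] at hl; omega
        obtain ⟨l', h1, h2, h3, h4, h5⟩ := ih v rest hrl hrest
        refine ⟨v :: l', ?_, ⟨hxv, h2⟩, by simpa using h3, by simpa using h4, ?_⟩
        · rw [List.nodup_cons]
          refine ⟨?_, h1⟩
          intro hx
          rcases List.mem_cons.mp hx with rfl | hx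
          · exact hxl (List.mem_cons_self)
          · exact hxl (List.mem_cons_of_mem v (h5 x hx))
        · intro y hy
          rcases List.mem_cons.mp hy with rfl | hy
          · exact List.mem_cons_self
          · exact List.mem_cons_of_mem v (h5 y hy)


variable {α : Type*}

/-- the "completed" set of part `i` -/
def TT (B : Set α) {k : ℕ} (Bp : Fin k → Set α) (F : Fin k → Set α) (i : Fin k) : Set α :=
  (B \ Bp i) ∪ F i

/-- `v` can be inserted into part `i` -/
def Ins (M : Matroid α) (B : Set α) {k : ℕ} (Bp F : Fin k → Set α) (v : α) (i : Fin k) : Prop :=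
  v ∉ TT B Bp F i ∧ M.Indep (insert v (TT B Bp F i))

/-- exchange arc from `x` to `v` -/
def Arc (M : Matroid α) (B : Set α) {k : ℕ} (Bp F : Fin k → Set α) (x v : α) : Prop :=
  ∃ i, v ∈ F i ∧ x ∉ TT B Bp F i ∧ ¬ M.Indep (insert x (TT B Bp F i)) ∧
    M.Indep (insert x (TT B Bp F i \ {v}))

/-- the invariant for partial families -/
def INV (M : Matroid α) (A B : Set α) {k : ℕ} (Bp F : Fin k → Set α) : Prop :=
  (∀ i, F i ⊆ A) ∧ (∀ i j : Fin k, i ≠ j → Disjoint (F i) (F j)) ∧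
    (∀ i, Disjoint (F i) (B \ Bp i)) ∧ ∀ i, M.Indep (TT B Bp F i)

lemma dep_mono {M : Matroid α} {s t : Set α} (hst : s ⊆ t) (h : ¬ M.Indep s) : ¬ M.Indep t :=
  fun ht => h (ht.subset hst)

section Family

variable {M : Matroid α} {A B : Set α} {k : ℕ} {Bp F : Fin k → Set α}

lemma TT_subset_ground (hinv : INV M A B Bp F) (i : Fin k) : TT B Bp F i ⊆ M.E :=
  (hinv.2.2.2 i).subset_ground

/-- inserting an element directly into a part -/
lemma ins_step (hinv : INV M A B Bp F) {u : α} {i : Fin k} (huA : u ∈ A)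
    (huF : u ∉ ⋃ j, F j) (hins : Ins M B Bp F u i) :
    INV M A B Bp (Function.update F i (insert u (F i))) ∧
      (⋃ j, Function.update F i (insert u (F i)) j) = insert u (⋃ j, F j) := by
  obtain ⟨h1, h2, h3, h4⟩ := hinv
  have hTT : ∀ j, TT B Bp (Function.update F i (insert u (F i))) j =
      if j = i then insert u (TT B Bp F j) else TT B Bp F j := by
    intro j
    by_cases hj : j = i
    · subst hj; simp [TT, Function.update_self, Set.union_insert]
    · simp [TT, Function.update_of_ne hj, hj]
  have huFj : ∀ j, u ∉ F j := by
    intro j hu; exact huF (Set.mem_iUnion.mpr ⟨j, hu⟩)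
  refine ⟨⟨?_, ?_, ?_, ?_⟩, ?_⟩
  · intro j
    by_cases hj : j = i
    · subst hj; simp only [Function.update_self]
      exact Set.insert_subset huA (h1 _)
    · simpa [Function.update_of_ne hj] using h1 j
  · intro j j' hjj'
    have key : ∀ j'', Function.update F i (insert u (F i)) j'' ⊆ insert u (F j'') := by
      intro j''
      by_cases hj : j'' = i
      · subst hj; simp
      · simp [Function.update_of_ne hj, Set.subset_insert]
    have hdisj : Disjoint (insert u (F j)) (insert u (F j')) ∨ True := Or.inr trivial
    -- u is in at most one of the two updated sets (only part i gets u)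
    by_cases hj : j = i
    · subst hj
      simp only [Function.update_self, Function.update_of_ne (Ne.symm hjj')]
      rw [Set.disjoint_left]
      rintro a (rfl | ha)
      · exact huFj j'
      · exact Set.disjoint_left.mp (h2 _ _ hjj') ha
    · by_cases hj' : j' = i
      · subst hj'
        simp only [Function.update_self, Function.update_of_ne hj]
        rw [Set.disjoint_right]
        rintro a (rfl | ha)
        · exact huFj j
        · exact Set.disjoint_right.mp (h2 _ _ hjj') ha
      · simpa [Function.update_of_ne hj, Function.update_of_ne hj'] using h2 _ _ hjj'
  · intro j
    by_cases hj : j = i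
    · subst hj
      simp only [Function.update_self]
      rw [Set.disjoint_left]
      rintro a (rfl | ha)
      · exact fun hu => hins.1 (Set.mem_union_left _ hu)
      · exact Set.disjoint_left.mp (h3 _) ha
    · simpa [Function.update_of_ne hj] using h3 j
  · intro j
    rw [hTT j]
    by_cases hj : j = i
    · subst hj; simpa using hins.2
    · simpa [hj] using h4 j
  · ext x
    simp only [Set.mem_iUnion, Set.mem_insert_iff]
    constructor
    · rintro ⟨j, hj⟩
      by_cases hji : j = i
      · subst hji
        simp only [Function.update_self, Set.mem_insert_iff] at hj
        rcases hj with rfl | hj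
        · exact Or.inl rfl
        · exact Or.inr ⟨j, hj⟩
      · rw [Function.update_of_ne hji] at hj
        exact Or.inr ⟨j, hj⟩
    · rintro (rfl | ⟨j, hj⟩)
      · exact ⟨i, by simp⟩
      · by_cases hji : j = i
        · subst hji
          exact ⟨j, by simp [hj]⟩
        · exact ⟨j, by simpa [Function.update_of_ne hji] using hj⟩

end Family

section Family2
variable {M : Matroid α} {A B : Set α} {k : ℕ} {Bp F : Fin k → Set α}

lemma surg (hinv : INV M A B Bp F) {w : α} {i₀ i₁ : Fin k} (hw : w ∈ F i₀)
    (hins : Ins M B Bp F w i₁) {F' : Fin k → Set α}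
    (hF' : F' = Function.update (Function.update F i₀ (F i₀ \ {w})) i₁ (insert w (F i₁))) :
    i₁ ≠ i₀ ∧ INV M A B Bp F' ∧ (⋃ j, F' j) = (⋃ j, F j) ∧
      TT B Bp F' i₁ = insert w (TT B Bp F i₁) ∧ TT B Bp F' i₀ = TT B Bp F i₀ \ {w} ∧
      (∀ j, j ≠ i₁ → j ≠ i₀ → F' j = F j) ∧
      F' i₁ = insert w (F i₁) ∧ F' i₀ = F i₀ \ {w} := by
  obtain ⟨h1, h2, h3, h4⟩ := hinv
  have hne : i₁ ≠ i₀ := by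
    rintro rfl
    exact hins.1 (Set.mem_union_right _ hw)
  have hFis : F' i₁ = insert w (F i₁) := by rw [hF', Function.update_self]
  have hFid : F' i₀ = F i₀ \ {w} := by
    rw [hF', Function.update_of_ne (Ne.symm hne), Function.update_self]
  have hFo : ∀ j, j ≠ i₁ → j ≠ i₀ → F' j = F j := by
    intro j hj1 hj0
    rw [hF', Function.update_of_ne hj1, Function.update_of_ne hj0]
  have hwB0 : w ∉ B \ Bp i₀ := Set.disjoint_left.mp (h3 i₀) hw
  have hwA : w ∈ A := h1 i₀ hw
  have hTis : TT B Bp F' i₁ = insert w (TT B Bp F i₁) := by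
    rw [TT, TT, hFis, Set.union_insert]
  have hTid : TT B Bp F' i₀ = TT B Bp F i₀ \ {w} := by
    rw [TT, TT, hFid, Set.union_diff_distrib, Set.diff_singleton_eq_self hwB0]
  have hTo : ∀ j, j ≠ i₁ → j ≠ i₀ → TT B Bp F' j = TT B Bp F j := by
    intro j hj1 hj0; rw [TT, TT, hFo j hj1 hj0]
  have hwFj : ∀ j, j ≠ i₀ → w ∉ F j := by
    intro j hj hwj
    exact Set.disjoint_left.mp (h2 j i₀ hj) hwj hw
  have hsub : ∀ j, j ≠ i₁ → F' j ⊆ F j := by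
    intro j hj1
    by_cases hj0 : j = i₀
    · subst hj0; rw [hFid]; exact Set.diff_subset
    · rw [hFo j hj1 hj0]
  refine ⟨hne, ⟨?_, ?_, ?_, ?_⟩, ?_, hTis, hTid, hFo, hFis, hFid⟩
  · intro j
    by_cases hj1 : j = i₁
    · subst hj1; rw [hFis]; exact Set.insert_subset hwA (h1 _)
    · exact (hsub j hj1).trans (h1 j)
  · intro j j' hjj'
    by_cases hj1 : j = i₁
    · subst hj1
      rw [hFis, Set.disjoint_left]
      rintro a (rfl | ha)
      · intro haj'
        rcases eq_or_ne j' i₀ with rfl | hj'0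
        · rw [hFid] at haj'; exact haj'.2 rfl
        · exact hwFj j' hj'0 (hsub j' (Ne.symm hjj') haj')
      · intro haj'
        exact Set.disjoint_left.mp (h2 _ _ hjj') ha (hsub j' (Ne.symm hjj') haj')
    · by_cases hj'1 : j' = i₁
      · subst hj'1
        rw [hFis, Set.disjoint_right]
        rintro a (rfl | ha)
        · intro haj
          rcases eq_or_ne j i₀ with rfl | hj0
          · rw [hFid] at haj; exact haj.2 rfl
          · exact hwFj j hj0 (hsub j hj1 haj)
        · intro haj
          exact Set.disjoint_right.mp (h2 _ _ hjj') ha (hsub j hj1 haj)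
      · exact (h2 _ _ hjj').mono (hsub j hj1) (hsub j' hj'1)
  · intro j
    by_cases hj1 : j = i₁
    · subst hj1
      rw [hFis, Set.disjoint_left]
      rintro a (rfl | ha)
      · exact fun hu => hins.1 (Set.mem_union_left _ hu)
      · exact Set.disjoint_left.mp (h3 _) ha
    · exact (h3 j).mono_left (hsub j hj1)
  · intro j
    by_cases hj1 : j = i₁
    · subst hj1; rw [hTis]; exact hins.2
    · by_cases hj0 : j = i₀
      · subst hj0; rw [hTid]; exact (h4 _).subset Set.diff_subset
      · rw [hTo j hj1 hj0]; exact h4 j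
  · ext x
    simp only [Set.mem_iUnion]
    constructor
    · rintro ⟨j, hj⟩
      by_cases hj1 : j = i₁
      · subst hj1
        rw [hFis] at hj
        rcases hj with rfl | hj
        · exact ⟨i₀, hw⟩
        · exact ⟨_, hj⟩
      · exact ⟨j, hsub j hj1 hj⟩
    · rintro ⟨j, hj⟩
      by_cases hj0 : j = i₀
      · subst hj0
        rcases eq_or_ne x w with rfl | hxw
        · exact ⟨i₁, by rw [hFis]; exact Set.mem_insert _ _⟩
        · exact ⟨j, by rw [hFid]; exact ⟨hj, hxw⟩⟩
      · by_cases hj1 : j = i₁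
        · subst hj1
          exact ⟨j, by rw [hFis]; exact Set.mem_insert_of_mem _ hj⟩
        · exact ⟨j, by rw [hFo j hj1 hj0]; exact hj⟩


lemma transfer (hE : M.E.Finite) (hinv : INV M A B Bp F) {w : α} {i₀ i₁ : Fin k}
    (hw : w ∈ F i₀) (hins : Ins M B Bp F w i₁) {F' : Fin k → Set α}
    (hF' : F' = Function.update (Function.update F i₀ (F i₀ \ {w})) i₁ (insert w (F i₁))) :
    ∀ (r : List α) (x : α), w ∉ x :: r → Arcs (Arc M B Bp F) x r →
      Ins M B Bp F' (fin x r) i₀ →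
      ∃ r' s, r = r' ++ s ∧ Arcs (Arc M B Bp F') x r' ∧ (∃ i, Ins M B Bp F' (fin x r') i) := by
  obtain ⟨hne, hinv', hun, hTis, hTid, hFo, hFis, hFid⟩ := surg hinv hw hins hF'
  intro r
  induction r with
  | nil =>
    intro x _ _ hend
    exact ⟨[], [], rfl, trivial, ⟨i₀, hend⟩⟩
  | cons v rest ih =>
    intro x hwx harcs hend
    obtain ⟨harc, hrest⟩ := harcs
    have hwv : w ∉ v :: rest := fun h => hwx (List.mem_cons_of_mem x h)
    have hwnex : w ≠ x := fun h => hwx (h ▸ List.mem_cons_self)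
    rw [fin_cons] at hend
    obtain ⟨i, hvFi, hxT, hxdep, hxind⟩ := harc
    by_cases hi1 : i = i₁
    · subst hi1
      -- the part that grew by w
      set T := TT B Bp F i with hT
      have hvT : v ∈ T := Set.mem_union_right _ hvFi
      have hxv : x ≠ v := fun h => hxT (h ▸ hvT)
      have hwT : w ∉ T := hins.1
      have hvw : v ≠ w := fun h => hwT (h ▸ hvT)
      have hTfin : T.Finite := hE.subset (hinv.2.2.2 i).subset_ground
      have hJcard : (insert x (T \ {v})).encard = T.encard := by
        rw [Set.encard_insert_of_notMem (fun h => hxT h.1),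
          Set.encard_diff_singleton_add_one hvT]
      have hKcard : (insert w T).encard = T.encard + 1 :=
        Set.encard_insert_of_notMem hwT
      have hlt : (insert x (T \ {v})).encard < (insert w T).encard := by
        rw [hJcard, hKcard]
        exact (ENat.lt_add_one_iff hTfin.encard_lt_top.ne).mpr (le_refl _)
      obtain ⟨z, hzKJ, hzind⟩ := hxind.augment hins.2 hlt
      have hzw : z = w := by
        rcases hzKJ.1 with rfl | hzT
        · rfl
        · exfalso
          rcases eq_or_ne z v with rfl | hzv
          · apply hxdep
            have : insert z (insert x (T \ {z})) = insert x T := by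
              rw [Set.insert_comm, Set.insert_diff_singleton,
                Set.insert_eq_of_mem hzT]
            rwa [this] at hzind
          · exact hzKJ.2 (Set.mem_insert_of_mem _ ⟨hzT, hzv⟩)
      subst hzw
      have harc' : Arc M B Bp F' x v := by
        refine ⟨i, ?_, ?_, ?_, ?_⟩
        · rw [hFis]; exact Set.mem_insert_of_mem _ hvFi
        · rw [hTis]
          rintro (rfl | h)
          · exact hwnex rfl
          · exact hxT h
        · rw [hTis]
          exact dep_mono (Set.insert_subset_insert (Set.subset_insert _ _)) hxdep
        · rw [hTis, ← Set.insert_diff_singleton_comm hvw.symm]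
          rw [Set.insert_comm] at hzind
          exact hzind
      obtain ⟨r', s, hsplit, harcs', hins'⟩ := ih v hwv hrest hend
      exact ⟨v :: r', s, by rw [List.cons_append, hsplit], ⟨harc', harcs'⟩, hins'⟩
    · by_cases hi0 : i = i₀
      · subst hi0
        set T := TT B Bp F i with hT
        have hvw : v ≠ w := fun h => hwv (h ▸ List.mem_cons_self)
        by_cases hxin : M.Indep (insert x (T \ {w}))
        · refine ⟨[], v :: rest, rfl, trivial, ⟨i, ?_, ?_⟩⟩
          · rw [hTid]; exact fun h => hxT h.1
          · rw [hTid]; exact hxin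
        · have harc' : Arc M B Bp F' x v := by
            refine ⟨i, ?_, ?_, ?_, ?_⟩
            · rw [hFid]; exact ⟨hvFi, hvw⟩
            · rw [hTid]; exact fun h => hxT h.1
            · rw [hTid]; exact hxin
            · rw [hTid]
              exact hxind.subset (Set.insert_subset_insert
                (Set.diff_subset_diff_left Set.diff_subset))
          obtain ⟨r', s, hsplit, harcs', hins'⟩ := ih v hwv hrest hend
          exact ⟨v :: r', s, by rw [List.cons_append, hsplit], ⟨harc', harcs'⟩, hins'⟩
      · have hTeq : TT B Bp F' i = TT B Bp F i := by rw [TT, TT, hFo i hi1 hi0]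
        have harc' : Arc M B Bp F' x v := by
          refine ⟨i, ?_, ?_, ?_, ?_⟩
          · rw [hFo i hi1 hi0]; exact hvFi
          · rw [hTeq]; exact hxT
          · rw [hTeq]; exact hxdep
          · rw [hTeq]; exact hxind
        obtain ⟨r', s, hsplit, harcs', hins'⟩ := ih v hwv hrest hend
        exact ⟨v :: r', s, by rw [List.cons_append, hsplit], ⟨harc', harcs'⟩, hins'⟩

lemma aug (hE : M.E.Finite) :
    ∀ (n : ℕ) (F : Fin k → Set α) (u : α) (l : List α),
      INV M A B Bp F → u ∈ A → u ∉ ⋃ j, F j → (u :: l).Nodup →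
      Arcs (Arc M B Bp F) u l → (∃ i, Ins M B Bp F (fin u l) i) → l.length ≤ n →
      ∃ F', INV M A B Bp F' ∧ (⋃ j, F' j) = insert u (⋃ j, F j) := by
  intro n
  induction n with
  | zero =>
    intro F u l hinv huA huF _ _ hins hlen
    have : l = [] := List.length_eq_zero_iff.mp (Nat.le_zero.mp hlen)
    subst this
    obtain ⟨i, hi⟩ := hins
    obtain ⟨h1, h2⟩ := ins_step hinv huA huF hi
    exact ⟨_, h1, h2⟩
  | succ n ih =>
    intro F u l hinv huA huF hnodup harcs hins hlen
    rcases List.eq_nil_or_concat l with rfl | ⟨l₁, w, rfl⟩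
    · obtain ⟨i, hi⟩ := hins
      obtain ⟨h1, h2⟩ := ins_step hinv huA huF hi
      exact ⟨_, h1, h2⟩
    · rw [List.concat_eq_append] at *
      rw [arcs_concat] at harcs
      obtain ⟨harcs₁, hlastarc⟩ := harcs
      rw [fin_concat] at hins
      obtain ⟨i₁, hinsw⟩ := hins
      obtain ⟨i₀, hwF, hprevT, hprevdep, hprevind⟩ := hlastarc
      set F' := Function.update (Function.update F i₀ (F i₀ \ {w})) i₁ (insert w (F i₁))
        with hF'
      obtain ⟨hne, hinv', hun, hTis, hTid, hFo, hFis, hFid⟩ := surg hinv hwF hinsw hF'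
      have hprevIns : Ins M B Bp F' (fin u l₁) i₀ := by
        refine ⟨?_, ?_⟩
        · rw [hTid]; exact fun h => hprevT h.1
        · rw [hTid]; exact hprevind
      have hnodup' : ((u :: l₁) ++ [w]).Nodup := by
        rwa [← List.cons_append] at hnodup
      have hwnotin : w ∉ u :: l₁ := by
        intro hwin
        exact (List.nodup_append.mp hnodup').2.2 w hwin w (List.mem_singleton_self w) rfl
      obtain ⟨r', s, hsplit, harcs', hins'⟩ :=
        transfer hE hinv hwF hinsw hF' l₁ u hwnotin harcs₁ hprevIns
      have hnodup'' : (u :: r').Nodup := by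
        have hpre : (u :: r').Sublist (u :: l₁) := by
          have heq : (u :: l₁) = (u :: r') ++ s := by rw [hsplit, List.cons_append]
          rw [heq]
          exact List.sublist_append_left _ _
        exact List.Nodup.sublist hpre (List.nodup_append.mp hnodup').1
      have hlen' : r'.length ≤ n := by
        have h1 : l₁.length ≤ n := by
          simp only [List.length_append, List.length_cons] at hlen; omega
        have h2 : r'.length ≤ l₁.length := by
          rw [hsplit]; simp
        omega
      have huF' : u ∉ ⋃ j, F' j := by rwa [hun]
      obtain ⟨F'', hinv'', hun''⟩ := ih F' u r' hinv' huA huF' hnodup'' harcs' hins' hlen'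
      exact ⟨F'', hinv'', by rw [hun'', hun]⟩

end Family2

section Endgame
variable {M : Matroid α} {A B : Set α} {k : ℕ} {Bp : Fin k → Set α}

lemma ncard_iUnion_eq {f : Fin k → Set α}
    (hdisj : ∀ i j : Fin k, i ≠ j → Disjoint (f i) (f j)) (hfin : ∀ i, (f i).Finite) :
    (⋃ i, f i).ncard = ∑ i, (f i).ncard := by
  have claim : ∀ S : Finset (Fin k), (⋃ i ∈ S, f i).ncard = ∑ i ∈ S, (f i).ncard := by
    intro S
    induction S using Finset.cons_induction with
    | empty => simp
    | cons a S ha ih =>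
      rw [Finset.cons_eq_insert, Finset.set_biUnion_insert, Finset.sum_insert ha, ← ih]
      refine Set.ncard_union_eq ?_ (hfin a) (Set.Finite.biUnion S.finite_toSet (fun i _ => hfin i))
      rw [Set.disjoint_iUnion_right]
      intro i
      rw [Set.disjoint_iUnion_right]
      intro hi
      exact hdisj a i (fun h => ha (h ▸ hi))
  have := claim Finset.univ
  simpa using this

lemma indep_ncard_le_base (hE : M.E.Finite) (hB : M.IsBase B) {I : Set α} (hI : M.Indep I) :
    I.ncard ≤ B.ncard := by
  obtain ⟨B5, hB5, hsub⟩ := hI.exists_isBase_superset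
  calc I.ncard ≤ B5.ncard := Set.ncard_le_ncard hsub (hE.subset hB5.subset_ground)
    _ = B.ncard := hB5.ncard_eq_ncard_of_isBase hB

lemma base_of_indep_ncard (hE : M.E.Finite) (hB : M.IsBase B) {I : Set α} (hI : M.Indep I)
    (hcard : B.ncard ≤ I.ncard) : M.IsBase I := by
  obtain ⟨B5, hB5, hsub⟩ := hI.exists_isBase_superset
  have h5 : B5.ncard ≤ I.ncard := le_trans (le_of_eq (hB5.ncard_eq_ncard_of_isBase hB)) hcard
  have : I = B5 := Set.eq_of_subset_of_ncard_le hsub h5 (hE.subset hB5.subset_ground)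
  exact this ▸ hB5

lemma chain_ineq (hE : M.E.Finite) (hB : M.IsBase B)
    (hdisj : ∀ i j : Fin k, i ≠ j → Disjoint (Bp i) (Bp j)) (hBun : ⋃ i, Bp i = B)
    {Z : Set α} (hZ : M.Indep Z) (hk : 0 < k) :
    k * B.ncard + Z.ncard ≤ (∑ i : Fin k, rk M ((B \ Bp i) ∪ Z)) + B.ncard := by
  have hBE : B ⊆ M.E := hB.subset_ground
  have hZE : Z ⊆ M.E := hZ.subset_ground
  have claim : ∀ S : Finset (Fin k), S.Nonempty →
      S.card * B.ncard + rk M ((B \ ⋃ i ∈ S, Bp i) ∪ Z) ≤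
        (∑ i ∈ S, rk M ((B \ Bp i) ∪ Z)) + B.ncard := by
    intro S
    induction S using Finset.cons_induction with
    | empty => intro h; exact absurd h (by simp)
    | cons a S ha ih =>
      intro _
      rcases S.eq_empty_or_nonempty with rfl | hS
      · simp only [Finset.cons_empty, Finset.card_singleton, one_mul, Finset.sum_singleton]
        have : ⋃ i ∈ ({a} : Finset (Fin k)), Bp i = Bp a := by simp
        rw [this]
        omega
      have ih := ih hS
      have hdisjU : Disjoint (⋃ i ∈ S, Bp i) (Bp a) := by
        rw [Set.disjoint_iUnion_left]
        intro i
        rw [Set.disjoint_iUnion_left]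
        intro hi
        exact hdisj i a (fun h => ha (h ▸ hi))
      have hsub1 : (B \ ⋃ i ∈ S, Bp i) ∪ Z ⊆ M.E := by
        exact Set.union_subset (Set.diff_subset.trans hBE) hZE
      have hsub2 : (B \ Bp a) ∪ Z ⊆ M.E :=
        Set.union_subset (Set.diff_subset.trans hBE) hZE
      have hunion : ((B \ ⋃ i ∈ S, Bp i) ∪ Z) ∪ ((B \ Bp a) ∪ Z) = B ∪ Z := by
        rw [Set.union_union_union_comm, Set.union_self, ← Set.diff_inter,
          Set.inter_comm, Set.disjoint_iff_inter_eq_empty.mp hdisjU.symm, Set.diff_empty]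
      have hinter : ((B \ ⋃ i ∈ S, Bp i) ∪ Z) ∩ ((B \ Bp a) ∪ Z) =
          (B \ ⋃ i ∈ Finset.cons a S ha, Bp i) ∪ Z := by
        rw [← Set.inter_union_distrib_right, Set.diff_inter_diff, Finset.cons_eq_insert,
          Finset.set_biUnion_insert, Set.union_comm (Bp a)]
      have hsubmod := rk_submod (M := M) hE hsub1 hsub2
      rw [hunion, hinter] at hsubmod
      have hBZ : B.ncard ≤ rk M (B ∪ Z) := by
        rw [← rk_indep hB.indep]
        exact rk_mono hE Set.subset_union_left (Set.union_subset hBE hZE)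
      have := ih
      rw [Finset.sum_cons, Finset.card_cons]
      rw [Nat.succ_mul]
      omega
  have := claim Finset.univ ⟨⟨0, hk⟩, Finset.mem_univ _⟩
  have huniv : ⋃ i ∈ Finset.univ, Bp i = B := by
    rw [← hBun]; simp
  rw [huniv, Set.diff_self, Set.empty_union, Finset.card_univ, Fintype.card_fin,
    rk_indep hZ] at this
  simpa using this

lemma sum_diff_card (hB : M.IsBase B)
    (hdisj : ∀ i j : Fin k, i ≠ j → Disjoint (Bp i) (Bp j)) (hBun : ⋃ i, Bp i = B)
    (hE : M.E.Finite) :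
    (∑ i : Fin k, (B \ Bp i).ncard) + B.ncard = ∑ _i : Fin k, B.ncard := by
  have hBpB : ∀ i, Bp i ⊆ B := fun i => hBun ▸ Set.subset_iUnion Bp i
  have hBfin : B.Finite := hE.subset hB.subset_ground
  have hsum1 : ∑ i, (Bp i).ncard = B.ncard := by
    rw [← ncard_iUnion_eq hdisj (fun i => hBfin.subset (hBpB i)), hBun]
  have hsplit : ∀ i : Fin k, (B \ Bp i).ncard + (Bp i).ncard = B.ncard := by
    intro i
    rw [← Set.ncard_union_eq disjoint_sdiff_left (hBfin.subset Set.diff_subset)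
      (hBfin.subset (hBpB i)), Set.diff_union_of_subset (hBpB i)]
  have hall : ∑ i : Fin k, ((B \ Bp i).ncard + (Bp i).ncard) = ∑ _i : Fin k, B.ncard :=
    Finset.sum_congr rfl (fun i _ => hsplit i)
  rw [Finset.sum_add_distrib, hsum1] at hall
  exact hall

lemma cover (hE : M.E.Finite) (hA : M.IsBase A) (hB : M.IsBase B)
    (hdisj : ∀ i j : Fin k, i ≠ j → Disjoint (Bp i) (Bp j)) (hBun : ⋃ i, Bp i = B)
    (hk : 0 < k) :
    ∀ (n : ℕ) (F : Fin k → Set α), INV M A B Bp F → (A \ ⋃ j, F j).ncard ≤ n →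
      ∃ F', INV M A B Bp F' ∧ (⋃ j, F' j) = A := by
  intro n
  induction n with
  | zero =>
    intro F hinv hle
    have hfin : (A \ ⋃ j, F j).Finite := hE.subset (Set.diff_subset.trans hA.subset_ground)
    have hempty : A \ ⋃ j, F j = ∅ := (Set.ncard_eq_zero hfin).mp (Nat.le_zero.mp hle)
    refine ⟨F, hinv, subset_antisymm (Set.iUnion_subset hinv.1) ?_⟩
    intro x hx
    by_contra hxF
    exact (Set.eq_empty_iff_forall_notMem.mp hempty x) ⟨hx, hxF⟩
  | succ n ih =>
    intro F hinv hle
    by_cases hempty : A \ ⋃ j, F j = ∅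
    · refine ⟨F, hinv, subset_antisymm (Set.iUnion_subset hinv.1) ?_⟩
      intro x hx
      by_contra hxF
      exact (Set.eq_empty_iff_forall_notMem.mp hempty x) ⟨hx, hxF⟩
    · obtain ⟨u, huA, huF⟩ : ∃ u, u ∈ A ∧ u ∉ ⋃ j, F j := by
        obtain ⟨u, hu⟩ := Set.nonempty_iff_ne_empty.mpr hempty
        exact ⟨u, hu.1, hu.2⟩
      set Reach : Set α := {v | ∃ l, Arcs (Arc M B Bp F) u l ∧ fin u l = v} with hReachdef
      have huR : u ∈ Reach := ⟨[], trivial, rfl⟩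
      have hclosed : ∀ v ∈ Reach, ∀ y, Arc M B Bp F v y → y ∈ Reach := by
        rintro v ⟨l, hl, hfin⟩ y harc
        exact ⟨l ++ [y], (arcs_concat l u y).mpr ⟨hl, hfin ▸ harc⟩, fin_concat l u y⟩
      have hRA : Reach ⊆ A := by
        rintro v ⟨l, hl, hfin⟩
        rcases fin_mem l u with h | h
        · rw [← hfin, h]; exact huA
        · obtain ⟨z, hz⟩ := arcs_targets l u hl _ h
          obtain ⟨i, hyF, -⟩ := hz
          rw [← hfin]
          exact hinv.1 i hyF
      by_cases hstuck : ∃ v ∈ Reach, ∃ i, Ins M B Bp F v i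
      · obtain ⟨v, ⟨l, harcs, hfinl⟩, i, hins⟩ := hstuck
        obtain ⟨l', hnodup, harcs', hfin', hlen', -⟩ := dedup l.length u l (le_refl _) harcs
        have hins' : ∃ i, Ins M B Bp F (fin u l') i := ⟨i, by rw [hfin', hfinl]; exact hins⟩
        obtain ⟨F', hinv', hun'⟩ :=
          aug hE l'.length F u l' hinv huA huF hnodup harcs' hins' (le_refl _)
        have hufin : (A \ ⋃ j, F j).Finite := hE.subset (Set.diff_subset.trans hA.subset_ground)
        have hmeas : (A \ ⋃ j, F' j).ncard ≤ n := by
          rw [hun']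
          have h1 : A \ insert u (⋃ j, F j) = (A \ ⋃ j, F j) \ {u} := by
            ext x
            simp only [Set.mem_diff, Set.mem_insert_iff, Set.mem_singleton_iff]
            tauto
          rw [h1]
          have h2 : ((A \ ⋃ j, F j) \ {u}).ncard < (A \ ⋃ j, F j).ncard := by
            apply Set.ncard_lt_ncard _ hufin
            exact (Set.ssubset_iff_of_subset Set.diff_subset).mpr
              ⟨u, ⟨huA, huF⟩, fun h => h.2 rfl⟩
          omega
        exact ih F' hinv' hmeas
      · exfalso
        push_neg at hstuck
        obtain ⟨h1, h2, h3, h4⟩ := hinv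
        have hRE : Reach ⊆ M.E := hRA.trans hA.subset_ground
        have hRfin : Reach.Finite := hE.subset hRE
        have hRindep : M.Indep Reach := hA.indep.subset hRA
        have hBfin : B.Finite := hE.subset hB.subset_ground
        have hWE : ∀ i, (B \ Bp i) ∪ (F i ∩ Reach) ⊆ M.E := fun i =>
          Set.union_subset (Set.diff_subset.trans hB.subset_ground)
            (Set.inter_subset_left.trans ((h1 i).trans hA.subset_ground))
        have hclW : ∀ v ∈ Reach, ∀ i, v ∈ M.closure ((B \ Bp i) ∪ (F i ∩ Reach)) := by
          intro v hv i
          by_cases hvT : v ∈ TT B Bp F i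
          · rcases hvT with hvB | hvF
            · exact M.mem_closure_of_mem (Or.inl hvB) (hWE i)
            · exact M.mem_closure_of_mem (Or.inr ⟨hvF, hv⟩) (hWE i)
          · have hdep : ¬ M.Indep (insert v (TT B Bp F i)) :=
              fun hind => hstuck v hv i ⟨hvT, hind⟩
            have hex := mem_closure_exch hE (h4 i) (hRE hv) hvT hdep
            refine Set.mem_of_mem_of_subset hex (M.closure_subset_closure ?_)
            rintro y ⟨hyT, hyind⟩
            rcases hyT with hyB | hyF
            · exact Or.inl hyB
            · exact Or.inr ⟨hyF, hclosed v hv y ⟨i, hyF, hvT, hdep, hyind⟩⟩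
        have hrkW : ∀ i, rk M ((B \ Bp i) ∪ Reach) ≤ (B \ Bp i).ncard + (F i ∩ Reach).ncard := by
          intro i
          have hWind : M.Indep ((B \ Bp i) ∪ (F i ∩ Reach)) :=
            (h4 i).subset (Set.union_subset_union_right _ Set.inter_subset_left)
          calc rk M ((B \ Bp i) ∪ Reach)
              ≤ rk M (((B \ Bp i) ∪ (F i ∩ Reach)) ∪ Reach) := by
                apply rk_mono hE _ (Set.union_subset (hWE i) hRE)
                exact Set.union_subset_union_left Reach Set.subset_union_left
            _ = rk M ((B \ Bp i) ∪ (F i ∩ Reach)) :=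
                rk_union_eq_of_subset_closure (hWE i) (fun v hv => hclW v hv i)
            _ = ((B \ Bp i) ∪ (F i ∩ Reach)).ncard := rk_indep hWind
            _ = (B \ Bp i).ncard + (F i ∩ Reach).ncard :=
                Set.ncard_union_eq ((h3 i).symm.mono_right Set.inter_subset_left)
                  (hBfin.subset Set.diff_subset) (hRfin.subset Set.inter_subset_right)
        have hsum3 : ∑ i, (F i ∩ Reach).ncard = ((⋃ j, F j) ∩ Reach).ncard := by
          rw [Set.iUnion_inter]
          exact (ncard_iUnion_eq
            (fun i j hij => ((h2 i j hij).mono Set.inter_subset_left Set.inter_subset_left))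
            (fun i => hRfin.subset Set.inter_subset_right)).symm
        have hlt : ((⋃ j, F j) ∩ Reach).ncard < Reach.ncard := by
          apply Set.ncard_lt_ncard _ hRfin
          exact (Set.ssubset_iff_of_subset Set.inter_subset_right).mpr
            ⟨u, huR, fun h => huF h.1⟩
        have hchain := chain_ineq hE hB hdisj hBun hRindep hk
        have hsumrk : ∑ i, rk M ((B \ Bp i) ∪ Reach) ≤
            (∑ i, (B \ Bp i).ncard) + ∑ i, (F i ∩ Reach).ncard := by
          rw [← Finset.sum_add_distrib]
          exact Finset.sum_le_sum (fun i _ => hrkW i)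
        have hsum2 := sum_diff_card hB hdisj hBun hE
        have hconst : ∑ _i : Fin k, B.ncard = k * B.ncard := by
          simp [Finset.sum_const, Finset.card_univ, mul_comm]
        rw [hsum3] at hsumrk
        rw [hconst] at hsum2
        omega

end Endgame
end BPE

/-- If `A` and `B` are bases of a matroid `M` on a finite ground set, then for every
partition `B = B₁ ⊔ ⋯ ⊔ B_k` there is a partition `A = A₁ ⊔ ⋯ ⊔ A_k` such that
`(B \ B_i) ∪ A_i` is a basis for every `i`. -/
theorem basis_partition_exchange {α : Type*} (M : Matroid α) (hE : M.E.Finite)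
    (A B : Set α) (hA : M.IsBase A) (hB : M.IsBase B) (k : ℕ) (Bp : Fin k → Set α)
    (hBdisj : Pairwise (Function.onFun Disjoint Bp)) (hBun : ⋃ i, Bp i = B) :
    ∃ Ap : Fin k → Set α, Pairwise (Function.onFun Disjoint Ap) ∧ (⋃ i, Ap i = A) ∧
      ∀ i, M.IsBase ((B \ Bp i) ∪ Ap i) := by
  classical
  by_cases hk : k = 0
  · subst hk
    have hBempty : B = ∅ := by rw [← hBun]; exact Set.iUnion_of_empty _
    have hAcard : A.ncard = 0 := by
      rw [hA.ncard_eq_ncard_of_isBase hB, hBempty, Set.ncard_empty]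
    have hAempty : A = ∅ := (Set.ncard_eq_zero (hE.subset hA.subset_ground)).mp hAcard
    refine ⟨fun _ => ∅, ?_, ?_, ?_⟩
    · intro i j _; exact i.elim0
    · rw [hAempty]; exact Set.iUnion_of_empty _
    · intro i; exact i.elim0
  · have hk' : 0 < k := Nat.pos_of_ne_zero hk
    have hdisj : ∀ i j : Fin k, i ≠ j → Disjoint (Bp i) (Bp j) := fun i j h => hBdisj h
    have hinv0 : BPE.INV M A B Bp (fun _ => ∅) := by
      refine ⟨fun i => Set.empty_subset A, fun i j _ => by simp, fun i => by simp, fun i => ?_⟩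
      have : BPE.TT B Bp (fun _ => ∅) i = B \ Bp i := by simp [BPE.TT]
      rw [this]
      exact hB.indep.subset Set.diff_subset
    obtain ⟨F, hinv, hunion⟩ := BPE.cover hE hA hB hdisj hBun hk'
      ((A \ ⋃ j, (fun _ => (∅ : Set α)) j).ncard) (fun _ => ∅) hinv0 (le_refl _)
    obtain ⟨h1, h2, h3, h4⟩ := hinv
    have hBfin : B.Finite := hE.subset hB.subset_ground
    have hffin : ∀ i, (F i).Finite := fun i => hE.subset ((h1 i).trans hA.subset_ground)
    have hTcard : ∀ i, (BPE.TT B Bp F i).ncard = (B \ Bp i).ncard + (F i).ncard := by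
      intro i
      exact Set.ncard_union_eq (h3 i).symm (hBfin.subset Set.diff_subset) (hffin i)
    have hsumF : ∑ i, (F i).ncard = B.ncard := by
      rw [← BPE.ncard_iUnion_eq h2 hffin, hunion, hA.ncard_eq_ncard_of_isBase hB]
    have hsum2 := BPE.sum_diff_card hB hdisj hBun hE
    have hsumT : ∑ i, (BPE.TT B Bp F i).ncard = ∑ _i : Fin k, B.ncard := by
      have e1 : ∑ i, (BPE.TT B Bp F i).ncard =
          (∑ i, (B \ Bp i).ncard) + ∑ i, (F i).ncard := by
        rw [← Finset.sum_add_distrib]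
        exact Finset.sum_congr rfl (fun i _ => hTcard i)
      rw [e1, hsumF]
      exact hsum2
    have hperle : ∀ i, (BPE.TT B Bp F i).ncard ≤ B.ncard :=
      fun i => BPE.indep_ncard_le_base hE hB (h4 i)
    have hall : ∀ i, (BPE.TT B Bp F i).ncard = B.ncard := by
      intro i
      by_contra hne
      have hlt : (BPE.TT B Bp F i).ncard < B.ncard := lt_of_le_of_ne (hperle i) hne
      have := Finset.sum_lt_sum (fun j (_ : j ∈ Finset.univ) => hperle j)
        ⟨i, Finset.mem_univ i, hlt⟩
      rw [hsumT] at this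
      exact lt_irrefl _ this
    refine ⟨F, fun i j hij => h2 i j hij, hunion, fun i => ?_⟩
    exact BPE.base_of_indep_ncard hE hB (h4 i) (le_of_eq (hall i).symm)
end
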